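/- arXiv:2109.06008 — 7 statements merged into one kernel-verified Lean document; each statement's English description precedes it below -/
import Mathlib

section
/- Let N₀ ≥ 4 be an integer, set δ := 2/(N₀−1) and δ̄ := (N₀−3)/(N₀−1)². Let (η_k)_{k≥1} be a sequence of reals such that η₁ ≥ N₀−1 and, for every k ≥ 1, η_{k+1} = η_k + (1/(k+1))·χ_k·(G_{k+1} − η_k), where χ_k = 1 if η_k > δ and χ_k = 0 otherwise, and where (G_{k+1}) are reals with |G_{k+1}| ≤ 1 for all k. Then η_k ≥ δ̄ for every k ≥ 1. -/
/-- Lower bound on the frozen stochastic-approximation recursion for the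
normalized population size `η_k`: with `δ = 2/(N₀-1)` and `δ̄ = (N₀-3)/(N₀-1)²`,
if `η₁ ≥ N₀ - 1` and `η_{k+1} = η_k + (1/(k+1)) · 1_{η_k > δ} · (G_{k+1} - η_k)` with
`|G_{k+1}| ≤ 1`, then `η_k ≥ δ̄` for all `k ≥ 1`. -/
theorem stmt_0 (N₀ : ℕ) (hN : 4 ≤ N₀) (η G : ℕ → ℝ)
    (hη1 : (N₀ : ℝ) - 1 ≤ η 1)
    (hG : ∀ k : ℕ, |G (k + 1)| ≤ 1)
    (hrec : ∀ k : ℕ, 1 ≤ k →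
      η (k + 1) = η k + (1 / ((k : ℝ) + 1)) *
        (if 2 / ((N₀ : ℝ) - 1) < η k then (1 : ℝ) else 0) * (G (k + 1) - η k)) :
    ∀ k : ℕ, 1 ≤ k → ((N₀ : ℝ) - 3) / ((N₀ : ℝ) - 1) ^ 2 ≤ η k := by
  set n : ℝ := (N₀ : ℝ) with hn
  have hn4 : (4 : ℝ) ≤ n := by rw [hn]; exact_mod_cast hN
  have hpos : (0 : ℝ) < (n - 1) ^ 2 := by nlinarith
  have hdbar_nonneg : (0 : ℝ) ≤ (n - 3) / (n - 1) ^ 2 := by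
    apply div_nonneg <;> nlinarith
  suffices h : ∀ k : ℕ, 1 ≤ k → ((n - 3) / (n - 1) ^ 2 ≤ η k ∧ n - k ≤ k * η k) by
    intro k hk; exact (h k hk).1
  intro k hk
  induction k, hk using Nat.le_induction with
  | base =>
    constructor
    · have : (n - 3) / (n - 1) ^ 2 ≤ n - 1 := by
        rw [div_le_iff₀ hpos]; nlinarith
      push_cast; linarith
    · push_cast; linarith
  | succ k hk ih =>
    obtain ⟨ihd, ihs⟩ := ih
    have hkR : (1 : ℝ) ≤ (k : ℝ) := by exact_mod_cast hk
    have hc : (0 : ℝ) < (k : ℝ) + 1 := by linarith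
    have hrk := hrec k hk
    have hGk := abs_le.mp (hG k)
    by_cases hif : 2 / (n - 1) < η k
    · rw [if_pos hif] at hrk
      have key : ((k : ℝ) + 1) * η (k + 1) = (k : ℝ) * η k + G (k + 1) := by
        field_simp at hrk ⊢
        linarith [hrk]
      have hsum : n - (k : ℝ) - 1 ≤ (k : ℝ) * η k + G (k + 1) := by linarith
      constructor
      · by_cases hcase : (k : ℝ) ≤ n - 3
        · -- early phase: use k * η k ≥ n - k
          rw [div_le_iff₀ hpos]
          have h1 : (n - 3) / (n - 1) ^ 2 * ((k : ℝ) + 1) ≤ n - (k : ℝ) - 1 := by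
            rw [div_mul_eq_mul_div, div_le_iff₀ hpos]
            nlinarith
          have h2 : (n - 3) / (n - 1) ^ 2 * ((k : ℝ) + 1) ≤ ((k : ℝ) + 1) * η (k + 1) := by
            rw [key]; linarith
          have h3 : (n - 3) / (n - 1) ^ 2 ≤ η (k + 1) := by
            have := (mul_le_mul_iff_of_pos_right hc).mp (by linarith [h2] : (n - 3) / (n - 1) ^ 2 * ((k : ℝ) + 1) ≤ η (k + 1) * ((k : ℝ) + 1))
            exact this
          rw [← div_le_iff₀ hpos] at *
          linarith [h3]
        · -- late phase: use η k > δ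
          push_neg at hcase
          have hkn : n - 2 ≤ (k : ℝ) := by
            have h1 : N₀ < k + 3 := by
              have : (N₀ : ℝ) < (k : ℝ) + 3 := by linarith
              exact_mod_cast this
            have : N₀ ≤ k + 2 := by omega
            have := (Nat.cast_le (α := ℝ)).mpr this
            push_cast at this; linarith
          have hδ : 2 / (n - 1) ≤ η k := le_of_lt hif
          have hn1 : (0 : ℝ) < n - 1 := by linarith
          have h1 : (n - 3) / (n - 1) ^ 2 * ((k : ℝ) + 1) ≤ (k : ℝ) * (2 / (n - 1)) - 1 := by
            rw [div_mul_eq_mul_div, div_le_iff₀ hpos]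
            have : (k : ℝ) * (2 / (n - 1)) = 2 * k / (n - 1) := by ring
            rw [this, ← sub_nonneg]
            have expand : (2 * (k : ℝ) / (n - 1) - 1) * (n - 1) ^ 2 - (n - 3) * ((k : ℝ) + 1)
                = ((k : ℝ) - (n - 2)) * (n + 1) := by
              field_simp; ring
            rw [expand]
            nlinarith
          have h2 : (k : ℝ) * (2 / (n - 1)) - 1 ≤ ((k : ℝ) + 1) * η (k + 1) := by
            rw [key]
            have : (k : ℝ) * (2 / (n - 1)) ≤ (k : ℝ) * η k :=
              mul_le_mul_of_nonneg_left hδ (by linarith)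
            linarith
          have h3 : (n - 3) / (n - 1) ^ 2 * ((k : ℝ) + 1) ≤ η (k + 1) * ((k : ℝ) + 1) := by
            linarith [h1, h2]
          exact (mul_le_mul_iff_of_pos_right hc).mp h3
      · push_cast
        rw [key]; linarith
    · rw [if_neg hif] at hrk
      have heq : η (k + 1) = η k := by
        rw [hrk]; ring
      push_neg at hif
      constructor
      · rw [heq]; exact ihd
      · push_cast
        rw [heq]
        have : (0 : ℝ) ≤ η k := le_trans hdbar_nonneg ihd
        nlinarith
end

section
/- Fix reals λ, r, b, ν > 0, d ≥ 0 with b > d, δ > 0, and β̂ ≥ 0, and let q(θ,ψ) := min{β̂ψ, 1} (follow-the-crowd response). Set ρ := λ/(r+b) and μ := b/ν, and assume ρ > 1 and β̂ < μρ. Let θ̂ := 1 − 1/ρ, ψ̂ := 0, and η̂ := (b−d)/ϱ(θ̂,ψ̂). If η̂ > δ, then the point P := (θ̂, ψ̂, η̂) is a Lyapunov-stable equilibrium of g. -/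
/-- `ϱ(θ,ψ) = b + d + λθφ + νφ + rθ` with `φ = 1 − θ − ψ` (case `d_e = 0`). -/
noncomputable def varrho (lam r b ν d θ ψ : ℝ) : ℝ :=
  b + d + lam * θ * (1 - θ - ψ) + ν * (1 - θ - ψ) + r * θ

/-- The vector field `g = (g^θ, g^ψ, g^η)` of the limit ODE for the epidemic model with
vaccination-response function `q`, on coordinates `(θ, ψ, η)`. -/
noncomputable def epiVF (lam r b ν d : ℝ) (q : ℝ → ℝ → ℝ) (x : ℝ × ℝ × ℝ) : ℝ × ℝ × ℝ :=
  (x.1 / (x.2.2 * varrho lam r b ν d x.1 x.2.1) * ((1 - x.1 - x.2.1) * lam - r - b),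
   1 / (x.2.2 * varrho lam r b ν d x.1 x.2.1) *
     (q x.1 x.2.1 * (1 - x.1 - x.2.1) * ν - b * x.2.1),
   (b - d) / varrho lam r b ν d x.1 x.2.1 - x.2.2)

/-- The domain `D = {(θ,ψ,η) : θ ≥ 0, ψ ≥ 0, θ+ψ ≤ 1, η > δ}`. -/
def domD (δ : ℝ) : Set (ℝ × ℝ × ℝ) :=
  {x | 0 ≤ x.1 ∧ 0 ≤ x.2.1 ∧ x.1 + x.2.1 ≤ 1 ∧ δ < x.2.2}

/-- `P ∈ D` is a Lyapunov-stable equilibrium of `g`: `g(P) = 0` and there are `r₀ > 0` and a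
continuously differentiable `V` with `V(P) = 0`, `V(x) > 0` and `⟨∇V(x), g(x)⟩ < 0` for all
`x ∈ D ∩ B(P,r₀)`, `x ≠ P`. -/
def IsLyapunovStableEquilibrium (g : ℝ × ℝ × ℝ → ℝ × ℝ × ℝ) (D : Set (ℝ × ℝ × ℝ))
    (P : ℝ × ℝ × ℝ) : Prop :=
  P ∈ D ∧ g P = 0 ∧
    ∃ r₀ > (0 : ℝ), ∃ V : ℝ × ℝ × ℝ → ℝ, ContDiff ℝ 1 V ∧ V P = 0 ∧
      ∀ x ∈ D ∩ Metric.ball P r₀, x ≠ P → 0 < V x ∧ fderiv ℝ V x (g x) < 0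

theorem fderivV_aux (θh ηh K ε : ℝ) (x h : ℝ × ℝ × ℝ) :
    fderiv ℝ (fun x : ℝ × ℝ × ℝ => (x.1 - θh)^2 + K * x.2.1^2 + ε * (x.2.2 - ηh)^2) x h
      = 2*(x.1 - θh)*h.1 + K*(2*x.2.1)*h.2.1 + ε*(2*(x.2.2 - ηh))*h.2.2 := by
  have h1 : HasFDerivAt (fun x : ℝ × ℝ × ℝ => (x.1 - θh)^2)
      ((2*(x.1 - θh)) • (ContinuousLinearMap.fst ℝ ℝ (ℝ × ℝ))) x := by
    have hd : HasDerivAt (fun t : ℝ => (t - θh)^2) (2*(x.1 - θh)) x.1 := by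
      simpa using ((hasDerivAt_id x.1).sub_const θh).fun_pow 2
    exact hd.comp_hasFDerivAt x (hasFDerivAt_fst (𝕜 := ℝ) (p := x))
  have h2 : HasFDerivAt (fun x : ℝ × ℝ × ℝ => K * x.2.1^2)
      ((K*(2*x.2.1)) • ((ContinuousLinearMap.fst ℝ ℝ ℝ).comp
        (ContinuousLinearMap.snd ℝ ℝ (ℝ × ℝ)))) x := by
    have hd : HasDerivAt (fun t : ℝ => K * t^2) (K*(2*x.2.1)) x.2.1 := by
      simpa [mul_comm] using ((hasDerivAt_pow 2 x.2.1).const_mul K)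
    have hf : HasFDerivAt (fun x : ℝ × ℝ × ℝ => x.2.1)
        ((ContinuousLinearMap.fst ℝ ℝ ℝ).comp (ContinuousLinearMap.snd ℝ ℝ (ℝ × ℝ))) x :=
      (hasFDerivAt_fst (𝕜 := ℝ) (p := x.2)).comp x (hasFDerivAt_snd (𝕜 := ℝ) (p := x))
    have := hd.comp_hasFDerivAt x hf; exact this
  have h3 : HasFDerivAt (fun x : ℝ × ℝ × ℝ => ε * (x.2.2 - ηh)^2)
      ((ε*(2*(x.2.2 - ηh))) • ((ContinuousLinearMap.snd ℝ ℝ ℝ).comp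
        (ContinuousLinearMap.snd ℝ ℝ (ℝ × ℝ)))) x := by
    have hd : HasDerivAt (fun t : ℝ => ε * (t - ηh)^2) (ε*(2*(x.2.2 - ηh))) x.2.2 := by
      simpa using (((hasDerivAt_id x.2.2).sub_const ηh).pow 2).const_mul ε
    have hf : HasFDerivAt (fun x : ℝ × ℝ × ℝ => x.2.2)
        ((ContinuousLinearMap.snd ℝ ℝ ℝ).comp (ContinuousLinearMap.snd ℝ ℝ (ℝ × ℝ))) x :=
      (hasFDerivAt_snd (𝕜 := ℝ) (p := x.2)).comp x (hasFDerivAt_snd (𝕜 := ℝ) (p := x))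
    have := hd.comp_hasFDerivAt x hf; exact this
  rw [((h1.fun_add h2).fun_add h3).fderiv]
  simp [ContinuousLinearMap.smul_apply, mul_comm]

/-- Bound for the θ-term of the quadratic Lyapunov derivative. -/
theorem T1bound (lam A₁ A₂ C s u v : ℝ) (hlam : 0 < lam) (hA1 : 0 < A₁) (hs1 : A₁ ≤ s)
    (hs2 : s ≤ A₂) (hv : 0 ≤ v) (hC : A₂^2 ≤ A₁*C) :
    2*u*(s*(-(lam*(u+v)))) ≤ -(lam*A₁)*u^2 + lam*C*v^2 := by
  have hC0 : 0 ≤ C := by nlinarith [sq_nonneg A₂]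
  rcases le_or_gt 0 (u*v) with huv | huv
  · nlinarith [mul_nonneg hlam.le (mul_nonneg (sub_nonneg.2 hs1) (sq_nonneg u)),
      mul_nonneg hlam.le (mul_nonneg (sub_nonneg.2 hs1) huv),
      mul_nonneg hlam.le (mul_nonneg hC0 (sq_nonneg v)),
      mul_nonneg hlam.le (mul_nonneg hA1.le huv),
      mul_nonneg hlam.le (mul_nonneg hA1.le (sq_nonneg u))]
  · have h1 : A₂*(u*v) ≤ s*(u*v) :=
      mul_le_mul_of_nonpos_right hs2 huv.le
    have key : -(2*A₂*(u*v)) ≤ A₁*u^2 + C*v^2 := by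
      nlinarith [sq_nonneg (A₁*u + A₂*v), sq_nonneg v, mul_nonneg hC0 (sq_nonneg v)]
    have h2 : lam*(s*(u*v)) ≥ lam*(A₂*(u*v)) := mul_le_mul_of_nonneg_left h1 hlam.le
    nlinarith [mul_le_mul_of_nonneg_left key hlam.le,
      mul_nonneg hlam.le (mul_nonneg (sub_nonneg.2 hs1) (sq_nonneg u)),
      mul_nonneg hlam.le (mul_nonneg hA1.le (sq_nonneg u))]

/-- Lower bound for `varrho` on the simplex. -/
theorem varrho_ge (lam r b ν d θ ψ : ℝ) (hlam : 0 < lam) (hr : 0 < r) (hν : 0 < ν)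
    (hd : 0 ≤ d) (h1 : 0 ≤ θ) (h2 : 0 ≤ ψ) (h3 : θ + ψ ≤ 1) :
    b ≤ varrho lam r b ν d θ ψ := by
  have hφ : 0 ≤ 1 - θ - ψ := by linarith
  unfold varrho
  nlinarith [mul_nonneg (mul_nonneg hlam.le h1) hφ, mul_nonneg hν.le hφ,
    mul_nonneg hr.le h1]

/-- Upper bound for `varrho` on the simplex. -/
theorem varrho_le (lam r b ν d θ ψ : ℝ) (hlam : 0 < lam) (hr : 0 < r) (hν : 0 < ν)
    (hd : 0 ≤ d) (h1 : 0 ≤ θ) (h2 : 0 ≤ ψ) (h3 : θ + ψ ≤ 1) :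
    varrho lam r b ν d θ ψ ≤ b + d + lam + ν + r := by
  have hφ : 0 ≤ 1 - θ - ψ := by linarith
  have hθφ : θ * (1 - θ - ψ) ≤ 1 := by nlinarith
  unfold varrho
  nlinarith [mul_le_mul_of_nonneg_left hθφ hlam.le, mul_nonneg hν.le h2,
    mul_nonneg hr.le (by linarith : (0:ℝ) ≤ 1 - θ)]

theorem c0pos (lam r b ν βh ρ θh : ℝ) (hb : 0 < b) (hν : 0 < ν) (hρ0 : 0 < ρ)
    (hβlt : βh < b / ν * ρ) (h2 : (1 - θh) * ρ = 1) : 0 < b - βh * ν * (1 - θh) := by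
  have h1 : βh * ν < b * ρ := by
    have h0 := mul_lt_mul_of_pos_right hβlt hν
    calc βh * ν < b / ν * ρ * ν := h0
      _ = b * ρ := by field_simp
  have h3 : βh * ν * ((1 - θh) * ρ) = βh * ν := by rw [h2, mul_one]
  nlinarith [h1, h3, hρ0, mul_pos hb hρ0]

theorem sBound1 (θ θh η R Mη Mϱ : ℝ) (hθh : θh / 2 ≤ θ) (hθh0 : 0 < θh)
    (hD0 : 0 < η * R) (hDle : η * R ≤ Mη * Mϱ) (hMη : 0 < Mη) (hMϱ : 0 < Mϱ) :
    θh / (2 * Mη * Mϱ) ≤ θ / (η * R) := by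
  rw [div_le_div_iff₀ (by positivity) hD0]
  nlinarith [mul_le_mul_of_nonneg_left hDle hθh0.le,
    mul_le_mul_of_nonneg_right (by linarith : θh ≤ 2 * θ) (mul_pos hMη hMϱ).le]

theorem sBound2 (θ η R δ b : ℝ) (hθ1 : θ ≤ 1) (hθ0 : 0 ≤ θ) (hδ : 0 < δ) (hb : 0 < b)
    (hD0 : 0 < η * R) (hDge : δ * b ≤ η * R) : θ / (η * R) ≤ 1 / (δ * b) := by
  rw [div_le_div_iff₀ hD0 (by positivity)]
  nlinarith [mul_le_mul_of_nonneg_right hDge hθ0, mul_pos hδ hb]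

theorem minEq (βh ψ : ℝ) (hβ : 0 ≤ βh) (hψ : 0 ≤ ψ) (h : ψ * (βh + 1) < 1) :
    min (βh * ψ) 1 = βh * ψ :=
  min_eq_left (by nlinarith)

/-- Estimate for the ψ-coefficient near the equilibrium. -/
theorem cEst (b βh ν θ ψ θh c₀ e : ℝ) (hβ : 0 ≤ βh) (hν : 0 < ν)
    (hdef : c₀ = b - βh * ν * (1 - θh)) (hu : -e ≤ θ - θh) (hv : 0 ≤ ψ) (he0 : 0 ≤ e)
    (he : e * (4 * βh * ν + 1) ≤ c₀) :
    βh * (1 - θ - ψ) * ν - b ≤ -(c₀ / 2) := by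
  have h1 : βh * ν * (1 - θ - ψ) ≤ βh * ν * (1 - θh) + βh * ν * e := by
    nlinarith [mul_nonneg (mul_nonneg hβ hν.le) hv,
      mul_le_mul_of_nonneg_left (by linarith : (1:ℝ) - θ - ψ ≤ (1 - θh) + e)
        (mul_nonneg hβ hν.le)]
  nlinarith [mul_nonneg (mul_nonneg hβ hν.le) he0]

/-- Bound for the ψ-term of the Lyapunov derivative. -/
theorem T2bound (K c₀ D DM c v : ℝ) (hK : 0 < K) (hc0 : 0 < c₀) (hD : 0 < D)
    (hDM : D ≤ DM) (hc : c ≤ -(c₀ / 2)) (hv : 0 ≤ v) :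
    2 * (K * v) * (1 / D * (c * v)) ≤ -(K * c₀ / DM) * v ^ 2 := by
  have hDM0 : 0 < DM := lt_of_lt_of_le hD hDM
  have e1 : 2 * (K * v) * (1 / D * (c * v)) = (2 * K * c * v ^ 2) / D := by
    field_simp
  have e2 : -(K * c₀ / DM) * v ^ 2 = (-(K * c₀) * v ^ 2) / DM := by ring
  rw [e1, e2, div_le_div_iff₀ hD hDM0]
  have h1 : 2 * K * c * v ^ 2 ≤ -(K * c₀) * v ^ 2 := by
    nlinarith [mul_nonneg hK.le (sq_nonneg v), mul_nonneg hK.le (mul_nonneg hc0.le (sq_nonneg v))]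
  have h2 : -(K * c₀) * v ^ 2 ≤ 0 := by nlinarith [mul_nonneg hK.le (mul_nonneg hc0.le (sq_nonneg v))]
  have h3 := mul_le_mul_of_nonneg_right h1 hDM0.le
  have h4 := mul_le_mul_of_nonpos_left hDM h2
  nlinarith [h3, h4]

/-- Lipschitz-type bound for the difference of `varrho` values. -/
theorem deltaR (lam r b ν d θ ψ θh au : ℝ) (hlam : 0 < lam) (hν : 0 < ν) (hr : 0 < r)
    (hφ0 : 0 ≤ 1 - θ - ψ) (hθ0 : 0 ≤ θ) (hθh0 : 0 ≤ θh) (hθh1 : θh ≤ 1) (hv : 0 ≤ ψ)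
    (hau1 : θ - θh ≤ au) (hau2 : -au ≤ θ - θh) :
    (varrho lam r b ν d θh 0 - varrho lam r b ν d θ ψ) ^ 2
      ≤ (2 * lam + ν + r) ^ 2 * (au + ψ) ^ 2 := by
  have hau0 : 0 ≤ au := by linarith
  set u : ℝ := θ - θh with hu
  set φ : ℝ := 1 - θ - ψ with hφ
  have ha : varrho lam r b ν d θh 0 - varrho lam r b ν d θ ψ
      = -(lam * (u * φ)) + lam * θh * (u + ψ) + ν * (u + ψ) - r * u := by
    unfold varrho; rw [hu, hφ]; ring
  have h1 : -(lam * (u * φ)) ≤ lam * au := by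
    nlinarith [mul_nonneg hlam.le (mul_nonneg (by linarith : (0:ℝ) ≤ u + au) hφ0),
      mul_nonneg hlam.le (mul_nonneg hau0 (by linarith : (0:ℝ) ≤ 1 - φ))]
  have h1' : -(lam * au) ≤ -(lam * (u * φ)) := by
    nlinarith [mul_nonneg hlam.le (mul_nonneg (by linarith : (0:ℝ) ≤ au - u) hφ0),
      mul_nonneg hlam.le (mul_nonneg hau0 (by linarith : (0:ℝ) ≤ 1 - φ))]
  have h2 : lam * θh * (u + ψ) ≤ lam * (au + ψ) := by
    nlinarith [mul_nonneg hlam.le (mul_nonneg hθh0 (by linarith : (0:ℝ) ≤ au - u)),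
      mul_nonneg hlam.le (mul_nonneg (by linarith : (0:ℝ) ≤ 1 - θh)
        (by linarith : (0:ℝ) ≤ au + ψ))]
  have h2' : -(lam * (au + ψ)) ≤ lam * θh * (u + ψ) := by
    nlinarith [mul_nonneg hlam.le (mul_nonneg hθh0 (by linarith : (0:ℝ) ≤ (u + ψ) + (au + ψ))),
      mul_nonneg hlam.le (mul_nonneg (by linarith : (0:ℝ) ≤ 1 - θh)
        (by linarith : (0:ℝ) ≤ au + ψ))]
  have h3 : ν * (u + ψ) ≤ ν * (au + ψ) := by nlinarith [mul_nonneg hν.le (by linarith : (0:ℝ) ≤ au - u)]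
  have h3' : -(ν * (au + ψ)) ≤ ν * (u + ψ) := by
    nlinarith [mul_nonneg hν.le (by linarith : (0:ℝ) ≤ au + u), mul_nonneg hν.le hv]
  have h4 : -(r * u) ≤ r * au := by nlinarith [mul_nonneg hr.le (by linarith : (0:ℝ) ≤ au + u)]
  have h4' : -(r * au) ≤ -(r * u) := by nlinarith [mul_nonneg hr.le (by linarith : (0:ℝ) ≤ au - u)]
  have hup : varrho lam r b ν d θh 0 - varrho lam r b ν d θ ψ
      ≤ (2 * lam + ν + r) * (au + ψ) := by
    rw [ha]
    nlinarith [mul_nonneg hlam.le hv, mul_nonneg hr.le hv]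
  have hlo : -((2 * lam + ν + r) * (au + ψ)) ≤ varrho lam r b ν d θh 0 - varrho lam r b ν d θ ψ := by
    rw [ha]
    nlinarith [mul_nonneg hlam.le hv, mul_nonneg hr.le hv]
  have := sq_le_sq' hlo hup
  calc (varrho lam r b ν d θh 0 - varrho lam r b ν d θ ψ) ^ 2
      ≤ ((2 * lam + ν + r) * (au + ψ)) ^ 2 := this
    _ = (2 * lam + ν + r) ^ 2 * (au + ψ) ^ 2 := by ring

/-- Bound for the η-term of the Lyapunov derivative. -/
theorem T3bound (b d R Rh w ε M₃ S : ℝ) (hb : 0 < b) (hbd : 0 ≤ b - d) (hR : b ≤ R)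
    (hRh : b ≤ Rh) (hM3 : M₃ = (b - d) / b ^ 2) (hε : 0 < ε)
    (hS : (Rh - R) ^ 2 ≤ S) :
    2 * (ε * w) * ((b - d) * (Rh - R) / (R * Rh) - w) ≤ -(ε * w ^ 2) + ε * M₃ ^ 2 * S := by
  have hR0 : 0 < R := lt_of_lt_of_le hb hR
  have hRh0 : 0 < Rh := lt_of_lt_of_le hb hRh
  set X : ℝ := (b - d) * (Rh - R) / (R * Rh) with hX
  have hX2 : X ^ 2 ≤ M₃ ^ 2 * (Rh - R) ^ 2 := by
    rw [hX, hM3, div_pow, div_pow, mul_pow]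
    have e : (b - d) ^ 2 / (b ^ 2) ^ 2 * (Rh - R) ^ 2
        = ((b - d) ^ 2 * (Rh - R) ^ 2) / (b ^ 2) ^ 2 := by ring
    rw [e, div_le_div_iff₀ (by positivity) (by positivity)]
    have hb2 : b ^ 2 ≤ R * Rh := by nlinarith
    have h4 : (b ^ 2) ^ 2 ≤ (R * Rh) ^ 2 := by nlinarith [sq_nonneg b, mul_pos hR0 hRh0]
    nlinarith [mul_le_mul_of_nonneg_left h4
      (mul_nonneg (sq_nonneg (b - d)) (sq_nonneg (Rh - R)))]
  have hkey : 2 * (ε * w) * (X - w) ≤ -(ε * w ^ 2) + ε * X ^ 2 := by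
    nlinarith [mul_nonneg hε.le (sq_nonneg (w - X))]
  have hM30 : 0 ≤ M₃ ^ 2 := sq_nonneg M₃
  have h2 : ε * X ^ 2 ≤ ε * M₃ ^ 2 * S := by
    have := le_trans hX2 (mul_le_mul_of_nonneg_left hS hM30)
    nlinarith [mul_le_mul_of_nonneg_left this hε.le]
  linarith [hkey, h2]

theorem Vpos (K ε a c e : ℝ) (hK : 0 < K) (hε : 0 < ε) (h : a ≠ 0 ∨ c ≠ 0 ∨ e ≠ 0) :
    0 < a ^ 2 + K * c ^ 2 + ε * e ^ 2 := by
  rcases h with h | h | h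
  · have h1 : 0 < a ^ 2 := by positivity
    nlinarith [mul_nonneg hK.le (sq_nonneg c), mul_nonneg hε.le (sq_nonneg e)]
  · have h1 : 0 < c ^ 2 := by positivity
    nlinarith [sq_nonneg a, mul_nonneg hε.le (sq_nonneg e), mul_pos hK h1]
  · have h1 : 0 < e ^ 2 := by positivity
    nlinarith [sq_nonneg a, mul_nonneg hK.le (sq_nonneg c), mul_pos hε h1]

/-- Final combination of the three term bounds. -/
theorem finalComb (lam A₁ C K c₀ DM ε L M₃ u v w au T1 T2 T3 : ℝ)
    (h1 : T1 ≤ -(lam * A₁) * u ^ 2 + lam * C * v ^ 2)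
    (h2 : T2 ≤ -(K * c₀ / DM) * v ^ 2)
    (h3 : T3 ≤ -(ε * w ^ 2) + ε * M₃ ^ 2 * (L ^ 2 * (au + v) ^ 2))
    (hKc : K * c₀ / DM = lam * C + lam * A₁)
    (hε2 : ε * (4 * L ^ 2 * M₃ ^ 2) ≤ lam * A₁)
    (hε0 : 0 < ε) (hlamA : 0 < lam * A₁)
    (hau : au ^ 2 = u ^ 2) (hv : 0 ≤ v)
    (hne : u ≠ 0 ∨ v ≠ 0 ∨ w ≠ 0) :
    T1 + T2 + T3 < 0 := by
  rw [hKc] at h2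
  have hP0 : (0:ℝ) ≤ ε * L ^ 2 * M₃ ^ 2 := by positivity
  have h4 : ε * M₃ ^ 2 * (L ^ 2 * (au + v) ^ 2)
      ≤ (lam * A₁ / 2) * u ^ 2 + (lam * A₁ / 2) * v ^ 2 := by
    have hsq : (au + v) ^ 2 ≤ 2 * au ^ 2 + 2 * v ^ 2 := by nlinarith [sq_nonneg (au - v)]
    have e1 : ε * M₃ ^ 2 * (L ^ 2 * (au + v) ^ 2) = (ε * L ^ 2 * M₃ ^ 2) * (au + v) ^ 2 := by
      ring
    rw [e1, hau] at *
    nlinarith [mul_le_mul_of_nonneg_left hsq hP0,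
      mul_le_mul_of_nonneg_right hε2 (sq_nonneg u),
      mul_le_mul_of_nonneg_right hε2 (sq_nonneg v), hau]
  have h5 : T1 + T2 + T3 ≤ -(lam * A₁ / 2) * u ^ 2 - (lam * A₁ / 2) * v ^ 2 - ε * w ^ 2 := by
    linarith [h1, h2, h3, h4]
  rcases hne with h | h | h
  · have h6 : 0 < u ^ 2 := by positivity
    nlinarith [mul_nonneg (by linarith : (0:ℝ) ≤ lam * A₁ / 2) (sq_nonneg v),
      mul_nonneg hε0.le (sq_nonneg w), mul_pos (by linarith : (0:ℝ) < lam * A₁ / 2) h6]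
  · have h6 : 0 < v ^ 2 := by positivity
    nlinarith [mul_nonneg (by linarith : (0:ℝ) ≤ lam * A₁ / 2) (sq_nonneg u),
      mul_nonneg hε0.le (sq_nonneg w), mul_pos (by linarith : (0:ℝ) < lam * A₁ / 2) h6]
  · have h6 : 0 < w ^ 2 := by positivity
    nlinarith [mul_nonneg (by linarith : (0:ℝ) ≤ lam * A₁ / 2) (sq_nonneg u),
      mul_nonneg (by linarith : (0:ℝ) ≤ lam * A₁ / 2) (sq_nonneg v), mul_pos hε0 h6]

/-- Follow-the-crowd response `q = min{β̂ψ, 1}`, endemic disease `ρ > 1`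
with `β̂ < μρ`: the NVDF point `(1 − 1/ρ, 0, η̂)` is a Lyapunov-stable equilibrium of `g`. -/
theorem stmt_5 (lam r b ν d δ βh ρ μ θh ψh ηh : ℝ)
    (hlam : 0 < lam) (hr : 0 < r) (hb : 0 < b) (hν : 0 < ν)
    (hd : 0 ≤ d) (hbd : d < b) (hδ : 0 < δ) (hβ : 0 ≤ βh)
    (hρdef : ρ = lam / (r + b)) (hμdef : μ = b / ν)
    (hρ : 1 < ρ) (hβlt : βh < μ * ρ)
    (hθ : θh = 1 - 1 / ρ) (hψ : ψh = 0)
    (hηdef : ηh = (b - d) / varrho lam r b ν d θh ψh) (hη : δ < ηh) :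
    IsLyapunovStableEquilibrium
      (epiVF lam r b ν d (fun _ ψ => min (βh * ψ) 1)) (domD δ) (θh, ψh, ηh) := by
  subst hψ
  have hrb : 0 < r + b := by linarith
  have hρ0 : (0:ℝ) < ρ := lt_trans one_pos hρ
  have hθ0 : 0 < θh := by
    rw [hθ]
    have : 1 / ρ < 1 := by rw [div_lt_one hρ0]; exact hρ
    linarith
  have hθ1 : θh < 1 := by
    rw [hθ]; have : 0 < 1 / ρ := by positivity
    linarith
  have hpl : (1 - θh) * lam = r + b := by rw [hθ, hρdef]; field_simp; ring
  set Rh : ℝ := varrho lam r b ν d θh 0 with hRhdef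
  have hRhb : b ≤ Rh := by
    rw [hRhdef]
    exact varrho_ge lam r b ν d θh 0 hlam hr hν hd hθ0.le le_rfl (by linarith)
  have hRh0 : 0 < Rh := lt_of_lt_of_le hb hRhb
  set Mϱ : ℝ := b + d + lam + ν + r with hMϱdef
  have hMϱ0 : 0 < Mϱ := by positivity
  have hRhM : Rh ≤ Mϱ := by
    rw [hRhdef, hMϱdef]
    exact varrho_le lam r b ν d θh 0 hlam hr hν hd hθ0.le le_rfl (by linarith)
  set Mη : ℝ := ηh + 1 with hMηdef
  have hMη0 : 0 < Mη := by rw [hMηdef]; linarith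
  set A₁ : ℝ := θh / (2 * Mη * Mϱ) with hA1def
  have hA1 : 0 < A₁ := by positivity
  set A₂ : ℝ := 1 / (δ * b) with hA2def
  have hA2 : 0 < A₂ := by positivity
  set L : ℝ := 2 * lam + ν + r with hLdef
  have hL0 : 0 < L := by positivity
  have hbd' : (0:ℝ) < b - d := by linarith
  set M₃ : ℝ := (b - d) / b ^ 2 with hM3def
  have hM30 : 0 < M₃ := by positivity
  set ε : ℝ := lam * A₁ / (4 * L ^ 2 * M₃ ^ 2 + 1) with hεdef
  have hε0 : 0 < ε := by positivity
  have hβlt' : βh < b / ν * ρ := by rw [hμdef] at hβlt; exact hβlt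
  have h1θ : (1 - θh) * ρ = 1 := by rw [hθ]; field_simp; ring
  set c₀ : ℝ := b - βh * ν * (1 - θh) with hc0def
  have hc00 : 0 < c₀ := by rw [hc0def]; exact c0pos lam r b ν βh ρ θh hb hν hρ0 hβlt' h1θ
  set K : ℝ := Mη * Mϱ * (lam * A₂ ^ 2 / A₁ + lam * A₁) / c₀ with hKdef
  have hK0 : 0 < K := by positivity
  set r₀ : ℝ := min (min (θh / 2) 1) (min (1 / (βh + 1)) (c₀ / (4 * βh * ν + 1))) with hr0def
  have hr00 : 0 < r₀ :=
    lt_min (lt_min (by positivity) one_pos) (lt_min (by positivity) (by positivity))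
  have hr0θ : r₀ ≤ θh / 2 := le_trans (min_le_left _ _) (min_le_left _ _)
  have hr01 : r₀ ≤ 1 := le_trans (min_le_left _ _) (min_le_right _ _)
  have hr0β : r₀ ≤ 1 / (βh + 1) := le_trans (min_le_right _ _) (min_le_left _ _)
  have hr0c : r₀ ≤ c₀ / (4 * βh * ν + 1) := le_trans (min_le_right _ _) (min_le_right _ _)
  refine ⟨⟨hθ0.le, le_refl 0, by simpa using hθ1.le, hη⟩, ?_, r₀, hr00,
    (fun x : ℝ × ℝ × ℝ => (x.1 - θh) ^ 2 + K * x.2.1 ^ 2 + ε * (x.2.2 - ηh) ^ 2),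
    by fun_prop, by simp, ?_⟩
  · -- equilibrium
    have h1 : (1 - θh - 0) * lam - r - b = 0 := by linear_combination hpl
    simp only [epiVF, Prod.mk_eq_zero]
    refine ⟨by rw [h1]; ring, by norm_num, by rw [← hRhdef, ← hηdef, sub_self]⟩
  · rintro ⟨θ, ψ, η⟩ ⟨⟨hx1, hx2, hx3, hx4⟩, hball⟩ hne
    simp only [Metric.mem_ball, Prod.dist_eq, Real.dist_eq, max_lt_iff] at hball
    obtain ⟨hbu, hbv, hbw⟩ := hball
    rw [sub_zero] at hbv
    have hbv' : ψ < r₀ := lt_of_abs_lt hbv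
    have hbu1 : θ - θh < r₀ := (abs_lt.1 hbu).2
    have hbu2 : -r₀ < θ - θh := (abs_lt.1 hbu).1
    have hbw1 : η - ηh < r₀ := (abs_lt.1 hbw).2
    have hθhalf : θh / 2 ≤ θ := by
      have := lt_of_lt_of_le hbu2 (le_refl _)
      have h2 : -(θh / 2) ≤ -r₀ := by linarith
      linarith
    have hθpos : 0 < θ := lt_of_lt_of_le (by linarith) hθhalf
    have hφ0 : 0 ≤ 1 - θ - ψ := by linarith
    have hηpos : 0 < η := lt_trans hδ hx4
    have hηle : η ≤ Mη := by rw [hMηdef]; linarith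
    have hne' : θ - θh ≠ 0 ∨ ψ ≠ 0 ∨ η - ηh ≠ 0 := by
      by_contra hcon
      push_neg at hcon
      obtain ⟨h1, h2, h3⟩ := hcon
      rw [sub_eq_zero] at h1 h3
      exact hne (by simp [h1, h2, h3])
    have hRb : b ≤ varrho lam r b ν d θ ψ :=
      varrho_ge lam r b ν d θ ψ hlam hr hν hd hx1 hx2 hx3
    have hR0 : 0 < varrho lam r b ν d θ ψ := lt_of_lt_of_le hb hRb
    have hRM : varrho lam r b ν d θ ψ ≤ Mϱ := by
      rw [hMϱdef]; exact varrho_le lam r b ν d θ ψ hlam hr hν hd hx1 hx2 hx3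
    have hD0 : 0 < η * varrho lam r b ν d θ ψ := mul_pos hηpos hR0
    have hDle : η * varrho lam r b ν d θ ψ ≤ Mη * Mϱ :=
      mul_le_mul hηle hRM hR0.le hMη0.le
    have hDge : δ * b ≤ η * varrho lam r b ν d θ ψ :=
      mul_le_mul hx4.le hRb hb.le hηpos.le
    have hψβ : ψ * (βh + 1) < 1 := by
      have h0 := mul_lt_mul_of_pos_right (lt_of_lt_of_le hbv' hr0β)
        (show (0:ℝ) < βh + 1 by positivity)
      rwa [div_mul_cancel₀ 1 (by positivity : (βh + 1) ≠ 0)] at h0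
    have hmin : min (βh * ψ) 1 = βh * ψ := minEq βh ψ hβ hx2 hψβ
    rw [fderivV_aux]
    constructor
    · exact Vpos K ε (θ - θh) ψ (η - ηh) hK0 hε0 hne'
    · simp only [epiVF, hmin]
      have e1 : (1 - θ - ψ) * lam - r - b = -(lam * (θ - θh + ψ)) := by
        linear_combination hpl
      have eq3 : (b - d) / varrho lam r b ν d θ ψ - η
          = (b - d) * (Rh - varrho lam r b ν d θ ψ) / (varrho lam r b ν d θ ψ * Rh)
            - (η - ηh) := by
        rw [hηdef]
        field_simp
        ring
      rw [e1, eq3]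
      -- the three bounds
      have hC : A₂ ^ 2 ≤ A₁ * (A₂ ^ 2 / A₁) := le_of_eq (by field_simp)
      have hs1 : A₁ ≤ θ / (η * varrho lam r b ν d θ ψ) := by
        rw [hA1def]
        exact sBound1 θ θh η _ Mη Mϱ hθhalf hθ0 hD0 hDle hMη0 hMϱ0
      have hs2 : θ / (η * varrho lam r b ν d θ ψ) ≤ A₂ := by
        rw [hA2def]
        exact sBound2 θ η _ δ b (by linarith) hx1 hδ hb hD0 hDge
      have hB1 := T1bound lam A₁ A₂ (A₂ ^ 2 / A₁) (θ / (η * varrho lam r b ν d θ ψ))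
        (θ - θh) ψ hlam hA1 hs1 hs2 hx2 hC
      have he : r₀ * (4 * βh * ν + 1) ≤ c₀ := (le_div_iff₀ (by positivity)).1 hr0c
      have hcc : βh * (1 - θ - ψ) * ν - b ≤ -(c₀ / 2) :=
        cEst b βh ν θ ψ θh c₀ r₀ hβ hν hc0def hbu2.le hx2 hr00.le he
      have hB2 := T2bound K c₀ (η * varrho lam r b ν d θ ψ) (Mη * Mϱ)
        (βh * (1 - θ - ψ) * ν - b) ψ hK0 hc00 hD0 hDle hcc hx2
      have hS : (Rh - varrho lam r b ν d θ ψ) ^ 2 ≤ L ^ 2 * (|θ - θh| + ψ) ^ 2 := by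
        rw [hRhdef, hLdef]
        exact deltaR lam r b ν d θ ψ θh (|θ - θh|) hlam hν hr hφ0 hx1 hθ0.le hθ1.le hx2
          (le_abs_self _) (neg_abs_le _)
      have hB3 := T3bound b d (varrho lam r b ν d θ ψ) Rh (η - ηh) ε M₃
        (L ^ 2 * (|θ - θh| + ψ) ^ 2) hb (by linarith) hRb hRhb hM3def hε0 hS
      have hKc : K * c₀ / (Mη * Mϱ) = lam * (A₂ ^ 2 / A₁) + lam * A₁ := by
        rw [hKdef]
        field_simp
      have he2 : ε * (4 * L ^ 2 * M₃ ^ 2 + 1) = lam * A₁ := by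
        rw [hεdef]; field_simp
      have hε2 : ε * (4 * L ^ 2 * M₃ ^ 2) ≤ lam * A₁ := by linarith [hε0.le, he2]
      have hfin := finalComb lam A₁ (A₂ ^ 2 / A₁) K c₀ (Mη * Mϱ) ε L M₃
        (θ - θh) ψ (η - ηh) (|θ - θh|) _ _ _ hB1 hB2 hB3 hKc hε2 hε0
        (mul_pos hlam hA1) (sq_abs _) hx2 hne'
      linarith [hfin]
end

section
/- Fix reals λ, r, b, ν > 0, d ≥ 0 with b > d, δ > 0, and β̂ > 0, and let q(θ,ψ) := min{β̂ψ, 1} (follow-the-crowd response). Set ρ := λ/(r+b) and μ := b/ν, and assume ρ > 1 and μρ < β̂ < μ + 1. Let θ̂ := 0, ψ̂ := 1 − μ/β̂, and η̂ := (b−d)/ϱ(θ̂,ψ̂). If η̂ > δ, then the point P := (θ̂, ψ̂, η̂) is a Lyapunov-stable equilibrium of g. -/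
private lemma fderiv_V_apply (A Cc p q : ℝ) (x y : ℝ × ℝ × ℝ) :
    fderiv ℝ (fun z : ℝ × ℝ × ℝ => A * z.1 + (z.2.1 - p) * (z.2.1 - p)
      + Cc * ((z.2.2 - q) * (z.2.2 - q))) x y
      = A * y.1 + 2*(x.2.1 - p)*y.2.1 + Cc * (2*(x.2.2 - q)*y.2.2) := by
  have h2 : HasFDerivAt (fun z : ℝ × ℝ × ℝ => z.2.1 - p)
      ((ContinuousLinearMap.fst ℝ ℝ ℝ).comp (ContinuousLinearMap.snd ℝ ℝ (ℝ × ℝ))) x :=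
    (hasFDerivAt_snd.fst).sub_const p
  have h3 : HasFDerivAt (fun z : ℝ × ℝ × ℝ => z.2.2 - q)
      ((ContinuousLinearMap.snd ℝ ℝ ℝ).comp (ContinuousLinearMap.snd ℝ ℝ (ℝ × ℝ))) x :=
    (hasFDerivAt_snd.snd).sub_const q
  have h := ((hasFDerivAt_fst.const_mul A).add (h2.mul h2)).add ((h3.mul h3).const_mul Cc)
  rw [HasFDerivAt.fderiv (f := fun z : ℝ × ℝ × ℝ => A * z.1 + (z.2.1 - p) * (z.2.1 - p)
    + Cc * ((z.2.2 - q) * (z.2.2 - q))) h]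
  simp
  ring

private lemma contDiff_V (A Cc p q : ℝ) :
    ContDiff ℝ 1 (fun z : ℝ × ℝ × ℝ => A * z.1 + (z.2.1 - p) * (z.2.1 - p)
      + Cc * ((z.2.2 - q) * (z.2.2 - q))) := by
  fun_prop

private lemma div_le_div_nonpos {X s S : ℝ} (hX : X ≤ 0) (hs : 0 < s) (h : s ≤ S) :
    X / s ≤ X / S := by
  rw [div_le_div_iff₀ hs (hs.trans_le h)]; nlinarith

private lemma div_le_div_nonneg' {X s m : ℝ} (hX : 0 ≤ X) (hm : 0 < m) (h : m ≤ s) :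
    X / s ≤ X / m := by
  rw [div_le_div_iff₀ (hm.trans_le h) hm]; nlinarith

set_option maxHeartbeats 4000000 in
/-- Follow-the-crowd response `q = min{β̂ψ, 1}`, endemic disease `ρ > 1`
with `μρ < β̂ < μ + 1`: the disease-free vaccinated point `(0, 1 − μ/β̂, η̂)` is a
Lyapunov-stable equilibrium of `g`. -/
theorem stmt_6 (lam r b ν d δ βh ρ μ θh ψh ηh : ℝ)
    (hlam : 0 < lam) (hr : 0 < r) (hb : 0 < b) (hν : 0 < ν)
    (hd : 0 ≤ d) (hbd : d < b) (hδ : 0 < δ) (hβ : 0 < βh)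
    (hρdef : ρ = lam / (r + b)) (hμdef : μ = b / ν)
    (hρ : 1 < ρ) (hβgt : μ * ρ < βh) (hβlt : βh < μ + 1)
    (hθ : θh = 0) (hψ : ψh = 1 - μ / βh)
    (hηdef : ηh = (b - d) / varrho lam r b ν d θh ψh) (hη : δ < ηh) :
    IsLyapunovStableEquilibrium
      (epiVF lam r b ν d (fun _ ψ => min (βh * ψ) 1)) (domD δ) (θh, ψh, ηh) := by
  subst hθ
  have hrb : 0 < r + b := by linarith
  have hν0 : ν ≠ 0 := hν.ne'
  have hβ0 : βh ≠ 0 := hβ.ne'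
  have hbd' : 0 < b - d := by linarith
  have hμpos : 0 < μ := by rw [hμdef]; positivity
  have hμν : μ * ν = b := by rw [hμdef]; field_simp
  have hμβ : μ < βh := by nlinarith
  have hβψ : βh * ψh = βh - μ := by rw [hψ]; field_simp
  have hψh0 : 0 < ψh := by
    rw [hψ]; have : μ / βh < 1 := (div_lt_one hβ).2 hμβ; linarith
  have hψh1 : ψh < 1 := by
    rw [hψ]; have : 0 < μ / βh := div_pos hμpos hβ; linarith
  -- positivity of a
  have hμlam : lam * μ < βh * (r + b) := by
    have h1 : μ * lam / (r + b) < βh := by rw [hρdef, ← mul_div_assoc] at hβgt; exact hβgt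
    have := (div_lt_iff₀ hrb).1 h1
    nlinarith
  have hlψ : lam * (1 - ψh) = lam * μ / βh := by rw [hψ]; field_simp; ring
  have ha : 0 < r + b - lam * (1 - ψh) := by
    have h2 : lam * μ / βh < r + b := by rw [div_lt_iff₀ hβ]; nlinarith
    linarith [hlψ ▸ h2]
  set a : ℝ := r + b - lam * (1 - ψh) with ha_def
  clear_value a
  set c : ℝ := ν * (βh - μ) with hc_def
  clear_value c
  have hc : 0 < c := by rw [hc_def]; exact mul_pos hν (by linarith)
  set ϱh : ℝ := varrho lam r b ν d 0 ψh with hϱh_def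
  clear_value ϱh
  have hϱhval : ϱh = b + d + ν * (1 - ψh) := by rw [hϱh_def]; simp [varrho]
  have hϱhlb : b ≤ ϱh := by rw [hϱhval]; nlinarith
  have hϱhub : ϱh ≤ b + d + lam + ν + r := by rw [hϱhval]; nlinarith
  have hϱh0 : 0 < ϱh := lt_of_lt_of_le hb hϱhlb
  have hηh0 : 0 < ηh := lt_trans hδ hη
  set S : ℝ := ηh * ϱh with hS_def
  clear_value S
  have hS : 0 < S := by rw [hS_def]; exact mul_pos hηh0 hϱh0
  set L : ℝ := (b - d) * (lam + 2*ν + r) / b^2 with hL_def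
  clear_value L
  have hL : 0 < L := by
    rw [hL_def]
    exact div_pos (mul_pos (by linarith) (by linarith)) (by positivity)
  set Cc : ℝ := c / (4 * S * L^2) with hCc_def
  clear_value Cc
  have hCc : 0 < Cc := by
    rw [hCc_def]
    exact div_pos hc (by linarith [mul_pos hS (pow_pos hL 2)])
  set D1 : ℝ := 4 * βh * ν / S with hD1_def
  clear_value D1
  have hD1 : 0 < D1 := by
    rw [hD1_def]
    exact div_pos (by linarith [mul_pos hβ hν]) hS
  set A : ℝ := 1 + (4 * S / a) * (D1 + 2 * Cc * L) with hA_def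
  clear_value A
  have hA : 0 < A := by
    rw [hA_def]
    have h1 : 0 < 4 * S / a := div_pos (by linarith) ha
    have h2 : 0 < D1 + 2 * Cc * L := by linarith [mul_pos hCc hL]
    linarith [mul_pos h1 h2]
  set B0 : ℝ := b + d + lam + ν + r with hB0_def
  clear_value B0
  have hB0 : 0 < B0 := by rw [hB0_def]; linarith
  set C2 : ℝ := ηh * (lam + 2*ν + r) + B0 with hC2_def
  clear_value C2
  have hC2 : 0 < C2 := by
    rw [hC2_def]
    linarith [mul_pos hηh0 (by linarith : (0:ℝ) < lam + 2*ν + r)]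
  have h1μβ : 0 < 1 + μ - βh := by linarith
  set r0 : ℝ := min (min 1 ((1 + μ - βh)/βh))
      (min (a/(4*lam)) (min (c/(4*(βh*ν))) (S/(2*C2)))) with hr0_def
  clear_value r0
  have hr0 : 0 < r0 := by
    rw [hr0_def]
    exact lt_min (lt_min one_pos (div_pos h1μβ hβ))
      (lt_min (div_pos ha (by linarith))
        (lt_min (div_pos hc (by linarith [mul_pos hβ hν])) (div_pos hS (by linarith))))
  have hr01 : r0 ≤ 1 := by
    rw [hr0_def]; exact (min_le_left _ _).trans (min_le_left _ _)
  have hr0β : r0 ≤ (1 + μ - βh)/βh := by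
    rw [hr0_def]; exact (min_le_left _ _).trans (min_le_right _ _)
  have hr0a : r0 ≤ a/(4*lam) := by
    rw [hr0_def]; exact (min_le_right _ _).trans (min_le_left _ _)
  have hr0c : r0 ≤ c/(4*(βh*ν)) := by
    rw [hr0_def]; exact (min_le_right _ _).trans ((min_le_right _ _).trans (min_le_left _ _))
  have hr0S : r0 ≤ S/(2*C2) := by
    rw [hr0_def]; exact (min_le_right _ _).trans ((min_le_right _ _).trans (min_le_right _ _))
  have hr0a' : 4*lam*r0 ≤ a := by
    have := (le_div_iff₀ (by linarith : (0:ℝ) < 4*lam)).1 hr0a; linarith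
  have hr0c' : 4*(βh*ν)*r0 ≤ c := by
    have := (le_div_iff₀ (by linarith [mul_pos hβ hν] : (0:ℝ) < 4*(βh*ν))).1 hr0c; linarith
  have hr0S' : 2*C2*r0 ≤ S := by
    have := (le_div_iff₀ (by linarith : (0:ℝ) < 2*C2)).1 hr0S; linarith
  have hr0β' : βh*r0 ≤ 1 + μ - βh := by
    have := (le_div_iff₀ hβ).1 hr0β; linarith
  refine ⟨⟨le_refl 0, hψh0.le, by simpa using hψh1.le, hη⟩, ?_, r0, hr0,
    (fun z : ℝ × ℝ × ℝ => A * z.1 + (z.2.1 - ψh) * (z.2.1 - ψh)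
      + Cc * ((z.2.2 - ηh) * (z.2.2 - ηh))), contDiff_V A Cc ψh ηh, by simp, ?_⟩
  · -- equilibrium
    have hmin : βh * ψh ≤ 1 := by rw [hβψ]; linarith
    have hnum : βh * ψh * (1 - (0:ℝ) - ψh) * ν - b * ψh = 0 := by
      rw [hψ, hμdef]; field_simp; ring
    simp only [epiVF, Prod.mk_eq_zero]
    refine ⟨by simp, ?_, by rw [← hϱh_def, hηdef]; ring⟩
    simp only [min_eq_left hmin]
    rw [hnum, mul_zero]
  · -- main Lyapunov estimate
    rintro ⟨u, ψx, ηx⟩ ⟨⟨hu0, hψx0, hsum, hδx⟩, hxb⟩ hxne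
    rw [Metric.mem_ball, Prod.dist_eq, max_lt_iff, Prod.dist_eq, max_lt_iff,
      Real.dist_eq, Real.dist_eq, Real.dist_eq] at hxb
    obtain ⟨hup, hvp, hwp⟩ := hxb
    rw [sub_zero, abs_lt] at hup
    rw [abs_lt] at hvp hwp
    clear hρdef hμdef hρ hβgt hβlt hψ hlψ hμlam hr0_def hδ hμpos hμβ h1μβ hrb
    clear hr0β hr0a hr0c hr0S hbd
    replace hu0 : (0:ℝ) ≤ u := hu0
    replace hψx0 : (0:ℝ) ≤ ψx := hψx0
    replace hsum : u + ψx ≤ 1 := hsum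
    have hS0 : S ≠ 0 := hS.ne'
    have hL0 : L ≠ 0 := hL.ne'
    have ha0 : a ≠ 0 := ha.ne'
    have hxne' : ¬(u = 0 ∧ ψx = ψh ∧ ηx = ηh) :=
      fun ⟨h1, h2, h3⟩ => hxne (by rw [h1, h2, h3])
    clear hxne hδx
    -- notation
    set ϱx : ℝ := varrho lam r b ν d u ψx with hϱx_def
    have hϱxval : ϱx = b + d + lam * u * (1 - u - ψx) + ν * (1 - u - ψx) + r * u := rfl
    have hφ0 : 0 ≤ 1 - u - ψx := by linarith only [hsum]
    have hφ1 : 1 - u - ψx ≤ 1 := by linarith only [hu0, hψx0]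
    have hu0' : (0:ℝ) ≤ u := hu0
    have huu : u < r0 := hup.2
    have hϱxlb : b ≤ ϱx := by
      rw [hϱxval]
      linarith only [mul_nonneg (mul_nonneg hlam.le hu0') hφ0, mul_nonneg hν.le hφ0,
        mul_nonneg hr.le hu0', hd]
    have hϱxub : ϱx ≤ B0 := by
      rw [hϱxval, hB0_def]
      have hu1 : u ≤ 1 := by linarith only [hsum, hψx0]
      linarith only [mul_le_mul_of_nonneg_left (mul_le_one₀ hu1 hφ0 hφ1) hlam.le,
        mul_le_mul_of_nonneg_left hφ1 hν.le, mul_le_mul_of_nonneg_left hu1 hr.le]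
    have hϱx0 : 0 < ϱx := lt_of_lt_of_le hb hϱxlb
    have hϱx0' : ϱx ≠ 0 := hϱx0.ne'
    have hϱh0' : ϱh ≠ 0 := hϱh0.ne'
    have hϱdiff : ϱx - ϱh = lam * u * (1 - u - ψx) - ν * (u + (ψx - ψh)) + r * u := by
      rw [hϱxval, hϱhval]; ring
    -- bounds on s = ηx * ϱx
    have hdub : ϱx - ϱh ≤ (lam + 2*ν + r) * r0 := by
      rw [hϱdiff]
      linarith only [mul_le_mul_of_nonneg_left (mul_le_mul_of_nonneg_left hφ1 hu0') hlam.le,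
        mul_le_mul_of_nonneg_left huu.le hlam.le, mul_le_mul_of_nonneg_left huu.le hr.le,
        mul_le_mul_of_nonneg_left hvp.1.le hν.le, mul_nonneg hν.le hu0',
        mul_nonneg hν.le hr0.le]
    have hdlb : -((lam + 2*ν + r) * r0) ≤ ϱx - ϱh := by
      rw [hϱdiff]
      linarith only [mul_nonneg hlam.le (mul_nonneg hu0' hφ0), mul_nonneg hr.le hu0',
        mul_le_mul_of_nonneg_left huu.le hν.le, mul_le_mul_of_nonneg_left hvp.2.le hν.le,
        mul_nonneg hlam.le hr0.le, mul_nonneg hr.le hr0.le]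
    have hC2r : C2 * r0 = ηh * ((lam + 2*ν + r) * r0) + r0 * B0 := by
      rw [hC2_def]; ring
    have he : ηx * ϱx - S = ηh * (ϱx - ϱh) + (ηx - ηh) * ϱx := by
      rw [hS_def]; ring
    have hH2 : r0 * ϱx ≤ r0 * B0 := mul_le_mul_of_nonneg_left hϱxub hr0.le
    have hs1 : S / 2 ≤ ηx * ϱx := by
      have h1 : ηh * (-((lam + 2*ν + r) * r0)) ≤ ηh * (ϱx - ϱh) :=
        mul_le_mul_of_nonneg_left hdlb hηh0.le
      have h2 : -(r0 * B0) ≤ (ηx - ηh) * ϱx := by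
        have hwl : 0 ≤ (ηx - ηh) + r0 := by linarith only [hwp.1]
        linarith only [mul_nonneg hwl hϱx0.le, hH2]
      linarith only [he, h1, h2, hr0S', hC2r]
    have hs2 : ηx * ϱx ≤ 2 * S := by
      have h1 : ηh * (ϱx - ϱh) ≤ ηh * ((lam + 2*ν + r) * r0) :=
        mul_le_mul_of_nonneg_left hdub hηh0.le
      have h2 : (ηx - ηh) * ϱx ≤ r0 * B0 := by
        have hwl : 0 ≤ r0 - (ηx - ηh) := by linarith only [hwp.2]
        linarith only [mul_nonneg hwl hϱx0.le, hH2]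
      linarith only [he, h1, h2, hr0S', hC2r, hS]
    have hs0 : 0 < ηx * ϱx := by linarith only [hs1, hS]
    -- resolve min
    have hminx : βh * ψx ≤ 1 := by
      have h1 : βh * (ψx - ψh) ≤ βh * r0 := mul_le_mul_of_nonneg_left hvp.2.le hβ.le
      linarith only [h1, hβψ, hr0β']
    -- numerator identity
    have hN : βh * ψx * (1 - u - ψx) * ν - b * ψx
        = (ψx - ψh) * (βh*ν*(1 - u - ψx - ψh) - b) - βh*ψh*ν*u := by
      linear_combination (-(ψh*ν))*hβψ + ψh*hμν
    -- slope bounds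
    have hM0 : (1 - u - ψx) * lam - r - b ≤ -(a/2) := by
      have e : (1 - u - ψx) * lam - r - b = -a - lam * (u + (ψx - ψh)) := by
        rw [ha_def]; ring
      rw [e]
      linarith only [mul_nonneg hlam.le hu0',
        mul_le_mul_of_nonneg_left hvp.1.le hlam.le, hr0a', mul_nonneg hlam.le hr0.le]
    have hβν : (0:ℝ) ≤ βh * ν := (mul_pos hβ hν).le
    have hM : βh*ν*(1 - u - ψx - ψh) - b ≤ -(c/2) := by
      have e : βh*ν*(1 - u - ψx - ψh) - b = -c - βh*ν*(u + (ψx - ψh)) := by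
        rw [hc_def]; linear_combination (-(2:ℝ)*ν)*hβψ + hμν
      rw [e]
      linarith only [mul_nonneg hβν hu0',
        mul_le_mul_of_nonneg_left hvp.1.le hβν, hr0c', mul_nonneg hβν hr0.le]
    -- bounds on F = (b-d)/ϱx - ηh
    have hav0 : 0 ≤ |ψx - ψh| := abs_nonneg _
    have havr : |ψx - ψh| ≤ r0 := by rw [abs_le]; exact ⟨hvp.1.le, hvp.2.le⟩
    have havl : -(|ψx - ψh|) ≤ ψx - ψh := neg_abs_le _
    have havu : ψx - ψh ≤ |ψx - ψh| := le_abs_self _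
    have hFeq : (b - d)/ϱx - ηh = (b - d) * (ϱh - ϱx) / (ϱx * ϱh) := by
      rw [hηdef]
      field_simp
    have hdu2 : ϱh - ϱx ≤ (lam + ν + r) * u + ν * |ψx - ψh| := by
      rw [show ϱh - ϱx = -(ϱx - ϱh) by ring, hϱdiff]
      linarith only [mul_nonneg hlam.le (mul_nonneg hu0' hφ0), mul_nonneg hr.le hu0',
        mul_le_mul_of_nonneg_left havu hν.le, mul_nonneg hlam.le hu0',
        mul_nonneg hν.le hu0']
    have hdl2 : -((lam + ν + r) * u + ν * |ψx - ψh|) ≤ ϱh - ϱx := by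
      rw [show ϱh - ϱx = -(ϱx - ϱh) by ring, hϱdiff]
      linarith only [mul_le_mul_of_nonneg_left (mul_le_mul_of_nonneg_left hφ1 hu0') hlam.le,
        mul_le_mul_of_nonneg_left havl hν.le, mul_nonneg hν.le hu0',
        mul_le_mul_of_nonneg_left huu.le hr.le, mul_le_mul_of_nonneg_left huu.le hlam.le,
        mul_le_mul_of_nonneg_left havu hν.le, mul_nonneg hr.le hu0']
    have hnumub : (b - d) * (ϱh - ϱx) ≤ (b - d) * ((lam + ν + r) * u + ν * |ψx - ψh|) :=
      mul_le_mul_of_nonneg_left hdu2 hbd'.le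
    have hnumlb : -((b - d) * ((lam + ν + r) * u + ν * |ψx - ψh|)) ≤ (b - d) * (ϱh - ϱx) := by
      have := mul_le_mul_of_nonneg_left hdl2 hbd'.le
      linarith only [this]
    have hNb0 : 0 ≤ (b - d) * ((lam + ν + r) * u + ν * |ψx - ψh|) :=
      mul_nonneg hbd'.le (add_nonneg
        (mul_nonneg (by linarith only [hlam, hν, hr]) hu0') (mul_nonneg hν.le hav0))
    have hden : b * b ≤ ϱx * ϱh :=
      mul_le_mul hϱxlb hϱhlb hb.le (by linarith only [hϱxlb, hb])
    have hbb : (0:ℝ) < b * b := mul_pos hb hb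
    have hNbL : (b - d) * ((lam + ν + r) * u + ν * |ψx - ψh|) / (b*b)
        ≤ L * (u + |ψx - ψh|) := by
      rw [hL_def, div_le_iff₀ hbb]
      have k : (lam + ν + r) * u + ν * |ψx - ψh| ≤ (lam + 2*ν + r) * (u + |ψx - ψh|) := by
        linarith only [mul_nonneg hν.le hu0',
          mul_nonneg (by linarith only [hlam, hν, hr] : (0:ℝ) ≤ lam + ν + r) hav0]
      calc (b - d) * ((lam + ν + r) * u + ν * |ψx - ψh|)
          ≤ (b - d) * ((lam + 2*ν + r) * (u + |ψx - ψh|)) :=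
            mul_le_mul_of_nonneg_left k hbd'.le
        _ = (b - d) * (lam + 2*ν + r) / b^2 * (u + |ψx - ψh|) * (b*b) := by
            field_simp
    have hϱϱ : (0:ℝ) < ϱx * ϱh := mul_pos hϱx0 hϱh0
    have hFub : (b - d)/ϱx - ηh ≤ L * (u + |ψx - ψh|) := by
      rw [hFeq]
      calc (b - d) * (ϱh - ϱx) / (ϱx * ϱh)
          ≤ (b - d) * ((lam + ν + r) * u + ν * |ψx - ψh|) / (ϱx * ϱh) :=
            (div_le_div_iff_of_pos_right hϱϱ).2 hnumub
        _ ≤ (b - d) * ((lam + ν + r) * u + ν * |ψx - ψh|) / (b*b) :=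
            div_le_div_nonneg' hNb0 hbb hden
        _ ≤ L * (u + |ψx - ψh|) := hNbL
    have hFlb : -(L * (u + |ψx - ψh|)) ≤ (b - d)/ϱx - ηh := by
      rw [hFeq]
      have c1 : -((b - d) * ((lam + ν + r) * u + ν * |ψx - ψh|)) / (ϱx * ϱh)
          ≤ (b - d) * (ϱh - ϱx) / (ϱx * ϱh) := (div_le_div_iff_of_pos_right hϱϱ).2 hnumlb
      have c2 : -((b - d) * ((lam + ν + r) * u + ν * |ψx - ψh|)) / (b*b)
          ≤ -((b - d) * ((lam + ν + r) * u + ν * |ψx - ψh|)) / (ϱx * ϱh) :=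
        div_le_div_nonpos (by linarith only [hNb0]) hbb hden
      have c3 : -(L * (u + |ψx - ψh|))
          ≤ -((b - d) * ((lam + ν + r) * u + ν * |ψx - ψh|)) / (b*b) := by
        rw [neg_div]; linarith only [hNbL]
      linarith only [c1, c2, c3]
    have haw0 : 0 ≤ |ηx - ηh| := abs_nonneg _
    have hawr : |ηx - ηh| ≤ r0 := by rw [abs_le]; exact ⟨hwp.1.le, hwp.2.le⟩
    have hawu : ηx - ηh ≤ |ηx - ηh| := le_abs_self _
    have hLuav : 0 ≤ L * (u + |ψx - ψh|) := mul_nonneg hL.le (add_nonneg hu0' hav0)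
    have hwF : (ηx - ηh) * ((b - d)/ϱx - ηh) ≤ |ηx - ηh| * (L * (u + |ψx - ψh|)) := by
      rcases le_or_gt 0 (ηx - ηh) with hw'' | hw''
      · have t1 := mul_le_mul_of_nonneg_left hFub hw''
        have t2 := mul_le_mul_of_nonneg_right hawu hLuav
        linarith only [t1, t2]
      · have t1 := mul_le_mul_of_nonpos_left hFlb hw''.le
        have t2 := mul_le_mul_of_nonneg_right (neg_le_abs (ηx - ηh)) hLuav
        nlinarith only [t1, t2]
    have hKpos : 0 < a/(4*S) := div_pos ha (by linarith only [hS])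
    have hK2pos : 0 < c/(4*S) := div_pos hc (by linarith only [hS])
    constructor
    · -- positivity of V
      show 0 < A * u + (ψx - ψh) * (ψx - ψh) + Cc * ((ηx - ηh) * (ηx - ηh))
      rcases eq_or_ne u 0 with hu' | hu'
      · rcases eq_or_ne ψx ψh with hv' | hv'
        · have hw' : ηx ≠ ηh := fun h => hxne' ⟨hu', hv', h⟩
          have h2 : 0 < (ηx - ηh) * (ηx - ηh) := mul_self_pos.2 (sub_ne_zero.2 hw')
          subst hu'; subst hv'
          have h3 := mul_pos hCc h2
          linarith only [h3]
        · have h2 : 0 < (ψx - ψh) * (ψx - ψh) := mul_self_pos.2 (sub_ne_zero.2 hv')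
          subst hu'
          linarith only [h2, mul_nonneg hCc.le (mul_self_nonneg (ηx - ηh))]
      · have hupos : 0 < u := lt_of_le_of_ne hu0' (Ne.symm hu')
        linarith only [mul_pos hA hupos, mul_self_nonneg (ψx - ψh),
          mul_nonneg hCc.le (mul_self_nonneg (ηx - ηh))]
    · -- derivative negative
      rw [fderiv_V_apply]
      simp only [epiVF]
      rw [show varrho lam r b ν d u ψx = ϱx from rfl]
      rw [min_eq_left hminx, hN]
      have hsplit : A * (u / (ηx * ϱx) * ((1 - u - ψx) * lam - r - b)) +
          2 * (ψx - ψh) *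
            (1 / (ηx * ϱx) * ((ψx - ψh) * (βh * ν * (1 - u - ψx - ψh) - b) - βh * ψh * ν * u)) +
          Cc * (2 * (ηx - ηh) * ((b - d) / ϱx - ηx))
          = A * ((u * ((1 - u - ψx) * lam - r - b)) / (ηx * ϱx))
            + (2 * ((ψx - ψh) * (ψx - ψh)) * (βh * ν * (1 - u - ψx - ψh) - b)) / (ηx * ϱx)
            + (-(2 * βh * ψh * ν * u * (ψx - ψh))) / (ηx * ϱx)
            + Cc * (2 * ((ηx - ηh) * ((b - d) / ϱx - ηh)) - 2 * ((ηx - ηh) * (ηx - ηh))) := by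
        ring
      rw [hsplit]
      -- term 1 bound
      have hb1 : A * ((u * ((1 - u - ψx) * lam - r - b)) / (ηx * ϱx)) ≤ A * (-((a/(4*S)) * u)) := by
        apply mul_le_mul_of_nonneg_left _ hA.le
        have i1 : u * ((1 - u - ψx) * lam - r - b) ≤ -(a/2) * u := by
          linarith only [mul_le_mul_of_nonneg_left hM0 hu0']
        have i2 := (div_le_div_iff_of_pos_right hs0).2 i1
        have i3 : (-(a/2) * u) / (ηx * ϱx) ≤ (-(a/2) * u) / (2*S) :=
          div_le_div_nonpos
            (mul_nonpos_of_nonpos_of_nonneg (by linarith only [ha]) hu0') hs0 hs2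
        have i4 : (-(a/2) * u) / (2*S) = -((a/(4*S)) * u) := by
          rw [show -((a/(4*S)) * u) = (-(a*u))/(4*S) by ring,
            div_eq_div_iff (show (2*S:ℝ) ≠ 0 from ne_of_gt (by linarith only [hS]))
              (show (4*S:ℝ) ≠ 0 from ne_of_gt (by linarith only [hS]))]
          ring
        linarith only [i2, i4 ▸ i3]
      -- term 2a bound
      have hb2a : (2 * ((ψx - ψh) * (ψx - ψh)) * (βh * ν * (1 - u - ψx - ψh) - b)) / (ηx * ϱx)
          ≤ -((c/(2*S)) * ((ψx - ψh) * (ψx - ψh))) := by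
        have i1 : 2 * ((ψx - ψh) * (ψx - ψh)) * (βh * ν * (1 - u - ψx - ψh) - b)
            ≤ -c * ((ψx - ψh) * (ψx - ψh)) := by
          linarith only [mul_le_mul_of_nonneg_left hM (mul_self_nonneg (ψx - ψh))]
        have i2 := (div_le_div_iff_of_pos_right hs0).2 i1
        have i3 : (-c * ((ψx - ψh) * (ψx - ψh))) / (ηx * ϱx)
            ≤ (-c * ((ψx - ψh) * (ψx - ψh))) / (2*S) :=
          div_le_div_nonpos
            (mul_nonpos_of_nonpos_of_nonneg (by linarith only [hc]) (mul_self_nonneg _))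
            hs0 hs2
        have i4 : (-c * ((ψx - ψh) * (ψx - ψh))) / (2*S)
            = -((c/(2*S)) * ((ψx - ψh) * (ψx - ψh))) := by
          rw [show -((c/(2*S)) * ((ψx - ψh) * (ψx - ψh)))
              = (-(c * ((ψx - ψh) * (ψx - ψh))))/(2*S) by ring]
          rw [div_eq_div_iff (show (2*S:ℝ) ≠ 0 from ne_of_gt (by linarith only [hS]))
            (show (2*S:ℝ) ≠ 0 from ne_of_gt (by linarith only [hS]))]
          ring
        linarith only [i2, i4 ▸ i3]
      -- term 2b bound
      have hb2b : (-(2 * βh * ψh * ν * u * (ψx - ψh))) / (ηx * ϱx) ≤ D1 * (r0 * u) := by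
        have hr0v : 0 ≤ r0 + ψh * (ψx - ψh) := by
          rcases le_or_gt 0 (ψx - ψh) with h | h
          · linarith only [mul_nonneg hψh0.le h, hr0]
          · linarith only [mul_nonneg (by linarith only [hψh1] : (0:ℝ) ≤ 1 - ψh)
              (by linarith only [h] : (0:ℝ) ≤ -(ψx - ψh)), hvp.1]
        have i1 : -(2 * βh * ψh * ν * u * (ψx - ψh)) ≤ 2 * βh * ν * (r0 * u) := by
          linarith only [mul_nonneg (mul_nonneg
            (by linarith only [mul_pos hβ hν] : (0:ℝ) ≤ 2*βh*ν) hu0') hr0v]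
        have i2 := (div_le_div_iff_of_pos_right hs0).2 i1
        have hS2 : (0:ℝ) < S/2 := by linarith only [hS]
        have i3 : (2 * βh * ν * (r0 * u)) / (ηx * ϱx) ≤ (2 * βh * ν * (r0 * u)) / (S/2) :=
          div_le_div_nonneg'
            (mul_nonneg (by linarith only [mul_pos hβ hν] : (0:ℝ) ≤ 2*βh*ν)
              (mul_nonneg hr0.le hu0')) hS2 hs1
        have i4 : (2 * βh * ν * (r0 * u)) / (S/2) = D1 * (r0 * u) := by
          rw [hD1_def, show (4 * βh * ν / S) * (r0 * u) = (4 * βh * ν * (r0 * u))/S by ring,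
            div_eq_div_iff (show (S/2:ℝ) ≠ 0 from ne_of_gt (by linarith only [hS])) hS.ne']
          ring
        linarith only [i2, i4 ▸ i3]
      -- term 3 bound
      have hCcL : Cc * (L * L) = c/(4*S) := by
        rw [hCc_def]; field_simp
      have hb3 : Cc * (2 * ((ηx - ηh) * ((b - d) / ϱx - ηh)) - 2 * ((ηx - ηh) * (ηx - ηh)))
          ≤ Cc * (2 * L * (r0 * u)) + (c/(4*S)) * ((ψx - ψh) * (ψx - ψh))
            - Cc * ((ηx - ηh) * (ηx - ηh)) := by
        have j2 : |ηx - ηh| * u ≤ r0 * u := mul_le_mul_of_nonneg_right hawr hu0'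
        have j2' := mul_le_mul_of_nonneg_left j2 (by linarith only [hL] : (0:ℝ) ≤ 2*L)
        have j3 : 2 * (|ηx - ηh| * |ψx - ψh|) * L
            ≤ (ηx - ηh) * (ηx - ηh) + (L * L) * ((ψx - ψh) * (ψx - ψh)) := by
          nlinarith only [sq_nonneg (|ηx - ηh| - L * |ψx - ψh|), abs_mul_abs_self (ηx - ηh),
            abs_mul_abs_self (ψx - ψh)]
        have j4 : 2 * ((ηx - ηh) * ((b - d) / ϱx - ηh)) - 2 * ((ηx - ηh) * (ηx - ηh))
            ≤ 2 * L * (r0 * u) + (L * L) * ((ψx - ψh) * (ψx - ψh)) - (ηx - ηh) * (ηx - ηh) := by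
          nlinarith only [hwF, j2', j3]
        have j5 := mul_le_mul_of_nonneg_left j4 hCc.le
        have e : Cc * (2 * L * (r0 * u) + (L * L) * ((ψx - ψh) * (ψx - ψh))
              - (ηx - ηh) * (ηx - ηh))
            = Cc * (2 * L * (r0 * u)) + (c/(4*S)) * ((ψx - ψh) * (ψx - ψh))
              - Cc * ((ηx - ηh) * (ηx - ηh)) := by
          linear_combination ((ψx - ψh) * (ψx - ψh)) * hCcL
        linarith only [e ▸ j5]
      -- assemble
      have hAK : A * (a/(4*S)) = a/(4*S) + (D1 + 2 * Cc * L) := by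
        rw [hA_def]; field_simp
      have e2 : A * (-((a/(4*S)) * u)) = -((a/(4*S)) * u) - D1 * u - (2 * Cc * L) * u := by
        linear_combination (-u) * hAK
      have k1 : D1 * (r0 * u) ≤ D1 * u := by
        linarith only [mul_nonneg hD1.le
          (mul_nonneg (by linarith only [hr01] : (0:ℝ) ≤ 1 - r0) hu0')]
      have k2 : Cc * (2 * L * (r0 * u)) ≤ (2 * Cc * L) * u := by
        linarith only [mul_nonneg (by linarith only [mul_pos hCc hL] : (0:ℝ) ≤ 2*Cc*L)
          (mul_nonneg (by linarith only [hr01] : (0:ℝ) ≤ 1 - r0) hu0')]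
      have hhalf : (c/(2*S)) * ((ψx - ψh) * (ψx - ψh))
          = 2 * ((c/(4*S)) * ((ψx - ψh) * (ψx - ψh))) := by
        rw [show (c/(2*S)) * ((ψx - ψh) * (ψx - ψh))
            = (c * ((ψx - ψh) * (ψx - ψh)))/(2*S) by ring,
          show 2 * ((c/(4*S)) * ((ψx - ψh) * (ψx - ψh)))
            = (2 * (c * ((ψx - ψh) * (ψx - ψh))))/(4*S) by ring,
          div_eq_div_iff (show (2*S:ℝ) ≠ 0 from ne_of_gt (by linarith only [hS]))
            (show (4*S:ℝ) ≠ 0 from ne_of_gt (by linarith only [hS]))]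
        ring
      have hstrict : -((a/(4*S)) * u) - (c/(4*S)) * ((ψx - ψh) * (ψx - ψh))
          - Cc * ((ηx - ηh) * (ηx - ηh)) < 0 := by
        rcases eq_or_ne u 0 with hu' | hu'
        · rcases eq_or_ne ψx ψh with hv' | hv'
          · have hw' : ηx ≠ ηh := fun h => hxne' ⟨hu', hv', h⟩
            have h2 : 0 < (ηx - ηh) * (ηx - ηh) := mul_self_pos.2 (sub_ne_zero.2 hw')
            subst hu'; subst hv'
            linarith only [mul_pos hCc h2]
          · have h2 : 0 < (ψx - ψh) * (ψx - ψh) := mul_self_pos.2 (sub_ne_zero.2 hv')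
            subst hu'
            linarith only [mul_pos hK2pos h2, mul_nonneg hCc.le (mul_self_nonneg (ηx - ηh))]
        · have hupos : 0 < u := lt_of_le_of_ne hu0' (Ne.symm hu')
          linarith only [mul_pos hKpos hupos, mul_nonneg hK2pos.le (mul_self_nonneg (ψx - ψh)),
            mul_nonneg hCc.le (mul_self_nonneg (ηx - ηh))]
      linarith only [hb1, hb2a, hb2b, hb3, e2, k1, k2, hhalf, hstrict]
end

section
/- Fix reals λ, r, b, ν > 0, d ≥ 0 with b > d, δ > 0, and β̂ > 0, and let q(θ,ψ) := min{β̂ψ, 1} (follow-the-crowd response). Set ρ := λ/(r+b) and μ := b/ν, and assume ρ > 1, β̂ > μ + 1 and μρ < μ + 1. Let θ̂ := 0, ψ̂ := 1/(μ+1), and η̂ := (b−d)/ϱ(θ̂,ψ̂). If η̂ > δ, then the point P := (θ̂, ψ̂, η̂) is a Lyapunov-stable equilibrium of g. -/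
private lemma divle_left (a S T : ℝ) (ha : 0 ≤ a) (hS : 0 < S) (hST : S ≤ T) :
    a / T ≤ a / S := by
  have hT : 0 < T := lt_of_lt_of_le hS hST
  rw [div_le_div_iff₀ hT hS]
  nlinarith

private lemma L_P1 (θ c S K Smax : ℝ) (hθ : 0 ≤ θ) (hS : 0 < S) (hSmax : S ≤ Smax)
    (hc : c ≤ -(K/2)) (hK : 0 < K) : θ / S * c ≤ -(K/(2*Smax))*θ := by
  have hSmax0 : 0 < Smax := lt_of_lt_of_le hS hSmax
  have h1 : θ / S * c ≤ θ / S * (-(K/2)) := mul_le_mul_of_nonneg_left hc (by positivity)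
  have h2 : θ/Smax ≤ θ/S := divle_left θ S Smax hθ hS hSmax
  have h3 := mul_le_mul_of_nonneg_left h2 (show (0:ℝ) ≤ K/2 by positivity)
  calc θ/S*c ≤ θ/S*(-(K/2)) := h1
    _ = -((K/2)*(θ/S)) := by ring
    _ ≤ -((K/2)*(θ/Smax)) := by linarith
    _ = -(K/(2*Smax))*θ := by field_simp
    
private lemma L_c (lam r b K ψh θ u ψ r₀ : ℝ) (hK : K = r+b-lam*(1-ψh))
    (hlam : 0 < lam) (hθ : 0 ≤ θ) (hu : |u| ≤ r₀) (huψ : u = ψ - ψh)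
    (h4 : r₀*(4*lam) ≤ K) : (1-θ-ψ)*lam - r - b ≤ -(K/2) := by
  have h5 : -r₀ ≤ θ + u := by
    have := neg_abs_le u
    linarith
  have h6 := mul_le_mul_of_nonneg_right h5 hlam.le
  have h7 : (1-θ-ψ)*lam - r - b = -K - (θ+u)*lam := by rw [hK, huψ]; ring
  rw [h7]
  linarith [h6, h4, mul_nonneg (le_trans (abs_nonneg u) hu) hlam.le]
  
private lemma L_P2 (u θ S Smin Smax ν μ r₀ : ℝ) (hθ : 0 ≤ θ) (hu : |u| ≤ r₀)
    (hS1 : 0 < Smin) (hS2 : Smin ≤ S) (hS3 : S ≤ Smax) (hν : 0 < ν) (hμ : 0 < μ) :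
    2*u*(1/S * (-ν*θ - ν*(1+μ)*u)) ≤ -(2*ν*(1+μ)/Smax)*u^2 + (2*ν/Smin)*r₀*θ := by
  have hS0 : 0 < S := lt_of_lt_of_le hS1 hS2
  have part1 : (-(2*ν*(1+μ)*u^2))/S ≤ -(2*ν*(1+μ)/Smax)*u^2 := by
    have h1 : (2*ν*(1+μ)*u^2)/Smax ≤ (2*ν*(1+μ)*u^2)/S :=
      divle_left _ S Smax (by positivity) hS0 hS3
    have h2 : -(2*ν*(1+μ)/Smax)*u^2 = -((2*ν*(1+μ)*u^2)/Smax) := by ring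
    rw [h2, neg_div]
    linarith
  have part2 : (-(2*ν*θ*u))/S ≤ (2*ν/Smin)*r₀*θ := by
    have hmu : -u ≤ r₀ := le_trans (abs_neg u ▸ le_abs_self (-u)) hu
    have h1 : -(2*ν*θ*u) ≤ 2*ν*θ*r₀ := by
      have := mul_le_mul_of_nonneg_left hmu (show (0:ℝ) ≤ 2*ν*θ by positivity)
      linarith
    have h2 : (-(2*ν*θ*u))/S ≤ (2*ν*θ*r₀)/S := (div_le_div_iff_of_pos_right hS0).mpr h1
    have h3 : (2*ν*θ*r₀)/S ≤ (2*ν*θ*r₀)/Smin :=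
      divle_left _ Smin S (mul_nonneg (mul_nonneg (by positivity) hθ) (le_trans (abs_nonneg u) hu)) hS1 hS2
    have h4 : (2*ν/Smin)*r₀*θ = (2*ν*θ*r₀)/Smin := by ring
    linarith
  calc 2*u*(1/S * (-ν*θ - ν*(1+μ)*u))
      = (-(2*ν*(1+μ)*u^2))/S + (-(2*ν*θ*u))/S := by ring
    _ ≤ -(2*ν*(1+μ)/Smax)*u^2 + (2*ν/Smin)*r₀*θ := add_le_add part1 part2

private lemma L_vbounds (lam r b ν d θ ψ : ℝ) (hlam : 0 < lam) (hr : 0 < r)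
    (hb : 0 < b) (hν : 0 < ν) (hd : 0 ≤ d) (hθ : 0 ≤ θ) (hψ : 0 ≤ ψ)
    (hsum : θ + ψ ≤ 1) :
    b + d ≤ varrho lam r b ν d θ ψ ∧ varrho lam r b ν d θ ψ ≤ b + d + lam + ν + r := by
  have hφ0 : 0 ≤ 1 - θ - ψ := by linarith
  have hφ1 : 1 - θ - ψ ≤ 1 := by linarith
  have hθ1 : θ ≤ 1 := by linarith
  constructor
  · simp only [varrho]
    nlinarith [mul_nonneg (mul_nonneg hlam.le hθ) hφ0, mul_nonneg hν.le hφ0,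
      mul_nonneg hr.le hθ]
  · simp only [varrho]
    nlinarith [mul_le_mul_of_nonneg_left hφ1 (mul_nonneg hlam.le hθ),
      mul_le_mul_of_nonneg_right hθ1 hlam.le,
      mul_le_mul_of_nonneg_left hφ1 hν.le, mul_le_mul_of_nonneg_left hθ1 hr.le]

private lemma L_vdiff (lam r b ν d θ ψ ψh u L1 : ℝ) (hL1 : L1 = lam + ν + r)
    (hu : u = ψ - ψh) (hθ : 0 ≤ θ) (hφ0 : 0 ≤ 1 - θ - ψ) (hφ1 : 1 - θ - ψ ≤ 1)
    (hlam : 0 ≤ lam) (hν : 0 ≤ ν) (hr : 0 ≤ r) :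
    |(b + d + ν*(1 - ψh)) - varrho lam r b ν d θ ψ| ≤ L1 * (θ + |u|) := by
  have h1 : (b + d + ν*(1 - ψh)) - varrho lam r b ν d θ ψ
      = ν*θ + ν*u - lam*θ*(1-θ-ψ) - r*θ := by
    simp only [varrho, hu]; ring
  have h2 : 0 ≤ lam*θ*(1-θ-ψ) := mul_nonneg (mul_nonneg hlam hθ) hφ0
  have h3 : lam*θ*(1-θ-ψ) ≤ lam*θ := by
    have := mul_le_mul_of_nonneg_left hφ1 (mul_nonneg hlam hθ)
    simpa using this
  have h4 : ν*u ≤ ν*|u| := mul_le_mul_of_nonneg_left (le_abs_self u) hν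
  have h5 : -(ν*|u|) ≤ ν*u := by
    have := mul_le_mul_of_nonneg_left (neg_abs_le u) hν
    linarith
  have h6 : 0 ≤ ν*θ := mul_nonneg hν hθ
  have h7 : 0 ≤ r*θ := mul_nonneg hr hθ
  have h8 : 0 ≤ |u| := abs_nonneg u
  rw [h1, hL1, abs_le]
  constructor <;> nlinarith [mul_nonneg hlam hθ]

private lemma L_hdiff (bd ϱ ϱh m L1 L2 θ au : ℝ) (hbd : 0 ≤ bd) (hm : 0 < m)
    (hϱ : m ≤ ϱ) (hϱh : m ≤ ϱh) (hdiffb : |ϱh - ϱ| ≤ L1*(θ + au))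
    (hL2 : L2 = bd*L1/m^2) (hθ : 0 ≤ θ) (hau : 0 ≤ au) (hL1 : 0 ≤ L1) :
    |bd/ϱ - bd/ϱh| ≤ L2*(θ + au) := by
  have hϱ0 : 0 < ϱ := lt_of_lt_of_le hm hϱ
  have hϱh0 : 0 < ϱh := lt_of_lt_of_le hm hϱh
  have heq : bd/ϱ - bd/ϱh = bd*(ϱh - ϱ)/(ϱ*ϱh) := by field_simp
  rw [heq, abs_div, abs_mul, abs_of_nonneg hbd, abs_of_pos (mul_pos hϱ0 hϱh0)]
  have h1 : bd*|ϱh - ϱ| ≤ bd*(L1*(θ+au)) := mul_le_mul_of_nonneg_left hdiffb hbd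
  have h2 : bd*|ϱh - ϱ|/(ϱ*ϱh) ≤ bd*(L1*(θ+au))/(ϱ*ϱh) :=
    (div_le_div_iff_of_pos_right (mul_pos hϱ0 hϱh0)).mpr h1
  have h3 : bd*(L1*(θ+au))/(ϱ*ϱh) ≤ bd*(L1*(θ+au))/(m*m) := by
    apply divle_left _ _ _ (by positivity) (by positivity)
    nlinarith
  have h4 : L2*(θ+au) = bd*(L1*(θ+au))/(m*m) := by
    rw [hL2]; field_simp
  linarith

private lemma L_P3 (w u θ hdiff L2 Cc r₀ : ℝ) (hC : 0 < Cc) (hL2 : 0 < L2)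
    (hθ : 0 ≤ θ) (hu : |u| ≤ r₀) (hw : |w| ≤ r₀)
    (habs : |hdiff| ≤ L2*(θ + |u|)) :
    2*Cc*w*(hdiff - w) ≤ -Cc*w^2 + 2*Cc*L2*r₀*θ + Cc*(L2+1)^2*u^2 := by
  have hwh : w*hdiff ≤ |w| * (L2*(θ+|u|)) :=
    calc w*hdiff ≤ |w * hdiff| := le_abs_self _
      _ = |w| * |hdiff| := abs_mul _ _
      _ ≤ |w| * (L2*(θ+|u|)) := mul_le_mul_of_nonneg_left habs (abs_nonneg w)
  have h1 := mul_le_mul_of_nonneg_left hwh (show (0:ℝ) ≤ 2*Cc by positivity)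
  have h2 : |w| * θ ≤ r₀*θ := mul_le_mul_of_nonneg_right hw hθ
  have h2' := mul_le_mul_of_nonneg_left h2 (show (0:ℝ) ≤ 2*Cc*L2 by positivity)
  have h3 : 2*L2*(|w| * |u|) ≤ w^2 + (L2+1)^2*u^2 := by
    nlinarith [sq_nonneg (|w| - (L2+1)*|u|), mul_nonneg (abs_nonneg w) (abs_nonneg u),
      sq_abs w, sq_abs u]
  have h3' := mul_le_mul_of_nonneg_left h3 hC.le
  nlinarith [h1, h2', h3', sq_abs w]

private lemma L_q (βh ψh ψ u r₀ : ℝ) (hβ : 0 < βh) (hβψh : 1/βh < ψh)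
    (hr₀ψ : r₀ ≤ (ψh - 1/βh)/2) (huψ : u = ψ - ψh) (hu : |u| ≤ r₀) :
    min (βh * ψ) 1 = 1 := by
  apply min_eq_right
  have h1 : 1/βh ≤ ψ := by
    have := neg_abs_le u
    linarith
  have h2 := mul_le_mul_of_nonneg_left h1 hβ.le
  rw [mul_one_div, div_self hβ.ne'] at h2
  linarith

private lemma L_r0 (r₀ Q a1 : ℝ) (hr₀ : 0 ≤ r₀) (hQ : 0 ≤ Q)
    (h : r₀*(2*(Q+1)) ≤ a1) : Q*r₀ ≤ a1/2 := by nlinarith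

private lemma L_ccl2 (b1 L2 : ℝ) (hb1 : 0 < b1) (hL2 : 0 < L2) :
    b1 / (2*((L2+1)^2+1)) * (L2+1)^2 ≤ b1/2 := by
  rw [div_mul_eq_mul_div, div_le_div_iff₀ (by positivity) (by norm_num)]
  nlinarith [sq_nonneg (L2+1)]

set_option maxHeartbeats 1000000 in
/-- Follow-the-crowd response `q = min{β̂ψ, 1}`, endemic disease `ρ > 1`
with `β̂ > μ + 1` and `μρ < μ + 1`: the disease-free point `(0, 1/(μ+1), η̂)` is a
Lyapunov-stable equilibrium of `g`. -/
theorem stmt_7 (lam r b ν d δ βh ρ μ θh ψh ηh : ℝ)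
    (hlam : 0 < lam) (hr : 0 < r) (hb : 0 < b) (hν : 0 < ν)
    (hd : 0 ≤ d) (hbd : d < b) (hδ : 0 < δ) (hβ : 0 < βh)
    (hρdef : ρ = lam / (r + b)) (hμdef : μ = b / ν)
    (hρ : 1 < ρ) (hβgt : μ + 1 < βh) (hμρ : μ * ρ < μ + 1)
    (hθ : θh = 0) (hψ : ψh = 1 / (μ + 1))
    (hηdef : ηh = (b - d) / varrho lam r b ν d θh ψh) (hη : δ < ηh) :
    IsLyapunovStableEquilibrium
      (epiVF lam r b ν d (fun _ ψ => min (βh * ψ) 1)) (domD δ) (θh, ψh, ηh) := by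
  subst hθ
  have hμpos : 0 < μ := by rw [hμdef]; positivity
  have hμ1 : (0:ℝ) < μ + 1 := by linarith
  have hbμν : b = μ * ν := by rw [hμdef]; field_simp
  have hlamdef : lam = ρ * (r + b) := by rw [hρdef]; field_simp
  have hψhpos : 0 < ψh := by rw [hψ]; positivity
  have hψhlt : ψh < 1 := by rw [hψ, div_lt_one hμ1]; linarith
  have hψμ : ψh * (μ + 1) = 1 := by rw [hψ]; field_simp
  have hψμ' : 1 - ψh = μ * ψh := by linear_combination -hψμ
  obtain ⟨ϱh, hϱhdef⟩ : ∃ z : ℝ, z = varrho lam r b ν d 0 ψh := ⟨_, rfl⟩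
  have hϱh_eq : ϱh = b + d + ν * (1 - ψh) := by rw [hϱhdef]; simp [varrho]
  have hϱhpos : 0 < ϱh := by
    rw [hϱh_eq]
    have := mul_pos hν (sub_pos.mpr hψhlt)
    linarith
  have hηh : ηh = (b - d) / ϱh := by rw [hηdef, hϱhdef]
  have hηhpos : 0 < ηh := by rw [hηh]; exact div_pos (by linarith) hϱhpos
  obtain ⟨m, hm⟩ : ∃ z : ℝ, z = b + d := ⟨_, rfl⟩
  obtain ⟨Mg, hMg⟩ : ∃ z : ℝ, z = b + d + lam + ν + r := ⟨_, rfl⟩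
  have hmpos : 0 < m := by rw [hm]; positivity
  have hMgpos : 0 < Mg := by rw [hMg]; positivity
  have hϱh_le : ϱh ≤ Mg := by
    rw [hϱh_eq, hMg]
    have h9 := mul_le_mul_of_nonneg_left (show 1 - ψh ≤ 1 by linarith) hν.le
    have h9' : ν * (1 - ψh) ≤ ν := by linarith [mul_one ν ▸ h9]
    linarith
  have hϱh_ge : m ≤ ϱh := by
    rw [hϱh_eq, hm]
    have := mul_nonneg hν.le (show (0:ℝ) ≤ 1 - ψh by linarith)
    linarith
  obtain ⟨K, hK⟩ : ∃ z : ℝ, z = r + b - lam * (1 - ψh) := ⟨_, rfl⟩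
  have hKpos : 0 < K := by
    have h4 : (μ+1)*(ψh*(r+b)) = r + b := by
      rw [show (μ+1)*(ψh*(r+b)) = (ψh*(μ+1))*(r+b) from by ring, hψμ, one_mul]
    have h5 := mul_lt_mul_of_pos_right hμρ (mul_pos hψhpos (show (0:ℝ) < r+b by linarith))
    have h1 : lam * (1 - ψh) < r + b := by
      rw [hψμ', hlamdef,
        show ρ*(r+b)*(μ*ψh) = μ*ρ*(ψh*(r+b)) from by ring]
      linarith only [h5, h4]
    rw [hK]; linarith only [h1]
  obtain ⟨L1, hL1⟩ : ∃ z : ℝ, z = lam + ν + r := ⟨_, rfl⟩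
  have hL1pos : 0 < L1 := by rw [hL1]; positivity
  obtain ⟨L2, hL2⟩ : ∃ z : ℝ, z = (b - d) * L1 / m ^ 2 := ⟨_, rfl⟩
  have hL2pos : 0 < L2 := by
    rw [hL2]; exact div_pos (mul_pos (by linarith) hL1pos) (by positivity)
  obtain ⟨Smax, hSmax⟩ : ∃ z : ℝ, z = (ηh + 1) * Mg := ⟨_, rfl⟩
  obtain ⟨Smin, hSmin⟩ : ∃ z : ℝ, z = δ * m := ⟨_, rfl⟩
  have hSmaxpos : 0 < Smax := by rw [hSmax]; positivity
  have hSminpos : 0 < Smin := by rw [hSmin]; positivity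
  obtain ⟨a1, ha1⟩ : ∃ z : ℝ, z = K / (2 * Smax) := ⟨_, rfl⟩
  obtain ⟨b1, hb1⟩ : ∃ z : ℝ, z = 2 * ν * (1 + μ) / Smax := ⟨_, rfl⟩
  have ha1pos : 0 < a1 := by rw [ha1]; positivity
  have hb1pos : 0 < b1 := by rw [hb1]; positivity
  obtain ⟨Cc, hCc⟩ : ∃ z : ℝ, z = b1 / (2 * ((L2 + 1) ^ 2 + 1)) := ⟨_, rfl⟩
  have hCcpos : 0 < Cc := by rw [hCc]; positivity
  have hCcL2 : Cc * (L2 + 1) ^ 2 ≤ b1 / 2 := by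
    rw [hCc]; exact L_ccl2 b1 L2 hb1pos hL2pos
  have hβψh : 1/βh < ψh := by rw [hψ]; exact one_div_lt_one_div_of_lt hμ1 hβgt
  have hψβ : 0 < (ψh - 1/βh) / 2 := by linarith
  obtain ⟨r₀, hr₀⟩ : ∃ z : ℝ, z = min (min 1 ((ψh - 1/βh)/2))
      (min (K/(4*lam)) (a1/(2*(2*ν/Smin + 2*Cc*L2 + 1)))) := ⟨_, rfl⟩
  have hr₀pos : 0 < r₀ := by
    rw [hr₀]
    exact lt_min (lt_min one_pos hψβ) (lt_min (by positivity) (by positivity))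
  have hr₀1 : r₀ ≤ 1 := hr₀ ▸ le_trans (min_le_left _ _) (min_le_left _ _)
  have hr₀ψ : r₀ ≤ (ψh - 1/βh)/2 := hr₀ ▸ le_trans (min_le_left _ _) (min_le_right _ _)
  have hr₀K : r₀ ≤ K/(4*lam) := hr₀ ▸ le_trans (min_le_right _ _) (min_le_left _ _)
  have hr₀a : r₀ ≤ a1/(2*(2*ν/Smin + 2*Cc*L2 + 1)) :=
    hr₀ ▸ le_trans (min_le_right _ _) (min_le_right _ _)
  refine ⟨⟨le_refl 0, hψhpos.le, by simpa using hψhlt.le, hη⟩, ?_, r₀, hr₀pos,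
    fun x => x.1 + ((x.2.1 - ψh) * (x.2.1 - ψh) + Cc * ((x.2.2 - ηh) * (x.2.2 - ηh))),
    by fun_prop, by simp, ?_⟩
  · -- equilibrium
    have hq : min (βh * ψh) 1 = 1 := by
      apply min_eq_right
      rw [hψ, mul_one_div, le_div_iff₀ hμ1]
      linarith
    have hnum : (1:ℝ) * (1 - 0 - ψh) * ν - b * ψh = 0 := by
      rw [hψ, hbμν]; field_simp; ring
    show ((0:ℝ) / ((ψh, ηh).2 * varrho lam r b ν d 0 (ψh, ηh).1) * ((1 - 0 - (ψh, ηh).1) * lam - r - b),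
      1 / ((ψh, ηh).2 * varrho lam r b ν d 0 (ψh, ηh).1) *
        (min (βh * (ψh, ηh).1) 1 * (1 - 0 - (ψh, ηh).1) * ν - b * (ψh, ηh).1),
      (b - d) / varrho lam r b ν d 0 (ψh, ηh).1 - (ψh, ηh).2) = 0
    simp only [Prod.mk_eq_zero]
    refine ⟨by simp, ?_, ?_⟩
    · show 1 / (ηh * varrho lam r b ν d 0 ψh) * (min (βh * ψh) 1 * (1 - 0 - ψh) * ν - b * ψh) = 0
      rw [hq, hnum, mul_zero]
    · show (b - d) / varrho lam r b ν d 0 ψh - ηh = 0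
      rw [← hϱhdef, hηh, sub_self]
  · -- main estimate
    intro x hx hxne
    obtain ⟨⟨hθ0, hψ0, hsum, hηδ⟩, hball⟩ := hx
    rw [Metric.mem_ball, Prod.dist_eq, Prod.dist_eq, max_lt_iff, max_lt_iff,
      Real.dist_eq, Real.dist_eq, Real.dist_eq] at hball
    obtain ⟨hd1, hd2, hd3⟩ := hball
    have hur : |x.2.1 - ψh| ≤ r₀ := hd2.le
    have hwr : |x.2.2 - ηh| ≤ r₀ := hd3.le
    have hθr : x.1 ≤ r₀ := by
      have := le_abs_self (x.1 - 0); simpa using (by linarith [hd1.le, this] : x.1 ≤ r₀)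
    have hφ0 : (0:ℝ) ≤ 1 - x.1 - x.2.1 := by linarith
    have hϱb := L_vbounds lam r b ν d x.1 x.2.1 hlam hr hb hν hd hθ0 hψ0 hsum
    have hϱge : m ≤ varrho lam r b ν d x.1 x.2.1 := by rw [hm]; exact hϱb.1
    have hϱle : varrho lam r b ν d x.1 x.2.1 ≤ Mg := by rw [hMg]; exact hϱb.2
    have hϱpos : 0 < varrho lam r b ν d x.1 x.2.1 := lt_of_lt_of_le hmpos hϱge
    have hηpos : 0 < x.2.2 := lt_trans hδ hηδ
    have hS0 : 0 < x.2.2 * varrho lam r b ν d x.1 x.2.1 := mul_pos hηpos hϱpos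
    have hSle : x.2.2 * varrho lam r b ν d x.1 x.2.1 ≤ Smax := by
      have hη1 : x.2.2 ≤ ηh + 1 := by
        have := le_abs_self (x.2.2 - ηh); linarith
      rw [hSmax]
      exact mul_le_mul hη1 hϱle hϱpos.le (by linarith)
    have hSge : Smin ≤ x.2.2 * varrho lam r b ν d x.1 x.2.1 := by
      rw [hSmin]
      exact mul_le_mul hηδ.le (hm ▸ hϱge) hmpos.le hηpos.le
    have h4r : r₀*(4*lam) ≤ K := (le_div_iff₀ (by positivity)).mp hr₀K
    have hc := L_c lam r b K ψh x.1 (x.2.1 - ψh) x.2.1 r₀ hK hlam hθ0 hur rfl h4r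
    have hP1 := L_P1 x.1 ((1 - x.1 - x.2.1)*lam - r - b)
      (x.2.2 * varrho lam r b ν d x.1 x.2.1) K Smax hθ0 hS0 hSle hc hKpos
    have hq := L_q βh ψh x.2.1 (x.2.1 - ψh) r₀ hβ hβψh hr₀ψ rfl hur
    have e2 : min (βh * x.2.1) 1 * (1 - x.1 - x.2.1) * ν - b * x.2.1
        = -ν*x.1 - ν*(1+μ)*(x.2.1 - ψh) := by
      rw [hq]
      linear_combination (-x.2.1) * hbμν + (-ν) * hψμ
    have hP2 := L_P2 (x.2.1 - ψh) x.1 (x.2.2 * varrho lam r b ν d x.1 x.2.1)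
      Smin Smax ν μ r₀ hθ0 hur hSminpos hSge hSle hν hμpos
    have hvd := L_vdiff lam r b ν d x.1 x.2.1 ψh (x.2.1 - ψh) L1 hL1 rfl hθ0 hφ0
      (by linarith) hlam.le hν.le hr.le
    rw [← hϱh_eq] at hvd
    have habs := L_hdiff (b-d) (varrho lam r b ν d x.1 x.2.1) ϱh m L1 L2 x.1
      |x.2.1 - ψh| (by linarith) hmpos hϱge hϱh_ge hvd hL2 hθ0 (abs_nonneg _) hL1pos.le
    have hgη : (b-d)/varrho lam r b ν d x.1 x.2.1 - x.2.2
        = ((b-d)/varrho lam r b ν d x.1 x.2.1 - (b-d)/ϱh) - (x.2.2 - ηh) := by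
      rw [hηh]; ring
    have hP3 := L_P3 (x.2.2 - ηh) (x.2.1 - ψh) x.1
      ((b-d)/varrho lam r b ν d x.1 x.2.1 - (b-d)/ϱh) L2 Cc r₀
      hCcpos hL2pos hθ0 hur hwr habs
    have hQle := L_r0 r₀ (2*ν/Smin + 2*Cc*L2) a1 hr₀pos.le (by positivity)
      ((le_div_iff₀ (by positivity)).mp hr₀a)
    have hQθ := mul_le_mul_of_nonneg_right hQle hθ0
    have hCu := mul_le_mul_of_nonneg_right hCcL2 (sq_nonneg (x.2.1 - ψh))
    have hcase : 0 < x.1 ∨ x.2.1 - ψh ≠ 0 ∨ x.2.2 - ηh ≠ 0 := by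
      by_contra hcon
      push_neg at hcon
      obtain ⟨hc1, hc2, hc3⟩ := hcon
      exact hxne (Prod.ext_iff.mpr ⟨le_antisymm hc1 hθ0,
        Prod.ext_iff.mpr ⟨by simpa using sub_eq_zero.mp hc2, by simpa using sub_eq_zero.mp hc3⟩⟩)
    constructor
    · -- V x > 0
      show 0 < x.1 + ((x.2.1 - ψh) * (x.2.1 - ψh) + Cc * ((x.2.2 - ηh) * (x.2.2 - ηh)))
      rcases hcase with h | h | h
      · linarith [mul_self_nonneg (x.2.1 - ψh),
          mul_nonneg hCcpos.le (mul_self_nonneg (x.2.2 - ηh))]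
      · linarith [mul_self_pos.mpr h,
          mul_nonneg hCcpos.le (mul_self_nonneg (x.2.2 - ηh))]
      · linarith [mul_self_nonneg (x.2.1 - ψh),
          mul_pos hCcpos (mul_self_pos.mpr h)]
    · -- derivative negative
      have key : x.1 / (x.2.2 * varrho lam r b ν d x.1 x.2.1) * ((1 - x.1 - x.2.1)*lam - r - b)
          + 2*(x.2.1 - ψh) * (1/(x.2.2 * varrho lam r b ν d x.1 x.2.1) *
              (min (βh * x.2.1) 1 * (1 - x.1 - x.2.1) * ν - b * x.2.1))
          + 2*Cc*(x.2.2 - ηh) * ((b-d)/varrho lam r b ν d x.1 x.2.1 - x.2.2) < 0 := by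
        rw [e2, hgη]
        have hP2' : 2*(x.2.1 - ψh) * (1/(x.2.2 * varrho lam r b ν d x.1 x.2.1) *
            (-ν*x.1 - ν*(1+μ)*(x.2.1 - ψh)))
            ≤ -(2*ν*(1+μ)/Smax)*(x.2.1 - ψh)^2 + (2*ν/Smin)*r₀*x.1 := by
          have heq : 2*(x.2.1 - ψh) * (1/(x.2.2 * varrho lam r b ν d x.1 x.2.1) *
              (-ν*x.1 - ν*(1+μ)*(x.2.1 - ψh)))
              = 2*(x.2.1 - ψh)*(1/(x.2.2 * varrho lam r b ν d x.1 x.2.1) *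
              (-ν*x.1 - ν*(1+μ)*(x.2.1 - ψh))) := rfl
          exact hP2
        have hax : -(K/(2*Smax))*x.1 = -2*((a1/2)*x.1) := by rw [ha1]; ring
        have hbx : -(2*ν*(1+μ)/Smax)*(x.2.1 - ψh)^2 = -2*((b1/2)*(x.2.1 - ψh)^2) := by
          rw [hb1]; ring
        have hA0 : 0 ≤ (a1/2)*x.1 := mul_nonneg (by linarith) hθ0
        have hB0 : 0 ≤ (b1/2)*(x.2.1 - ψh)^2 := mul_nonneg (by linarith) (sq_nonneg _)
        have hW0 : 0 ≤ Cc*(x.2.2 - ηh)^2 := mul_nonneg hCcpos.le (sq_nonneg _)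
        rcases hcase with h | h | h
        · have hst : 0 < (a1/2)*x.1 := mul_pos (by linarith) h
          linarith [hP1, hP2', hP3, hQθ, hCu, hax, hbx, hB0, hW0, hst]
        · have hst : 0 < (b1/2)*(x.2.1 - ψh)^2 :=
            mul_pos (by linarith) (sq_abs (x.2.1 - ψh) ▸ pow_pos (abs_pos.mpr h) 2)
          linarith [hP1, hP2', hP3, hQθ, hCu, hax, hbx, hA0, hW0, hst]
        · have hst : 0 < Cc*(x.2.2 - ηh)^2 :=
            mul_pos hCcpos (sq_abs (x.2.2 - ηh) ▸ pow_pos (abs_pos.mpr h) 2)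
          linarith [hP1, hP2', hP3, hQθ, hCu, hax, hbx, hA0, hB0, hst]
      have h2d : HasFDerivAt (fun y : ℝ×ℝ×ℝ => y.2.1 - ψh)
          ((ContinuousLinearMap.fst ℝ ℝ ℝ).comp (ContinuousLinearMap.snd ℝ ℝ (ℝ×ℝ))) x :=
        ((hasFDerivAt_fst.comp x hasFDerivAt_snd).sub_const ψh)
      have h3d : HasFDerivAt (fun y : ℝ×ℝ×ℝ => y.2.2 - ηh)
          ((ContinuousLinearMap.snd ℝ ℝ ℝ).comp (ContinuousLinearMap.snd ℝ ℝ (ℝ×ℝ))) x :=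
        ((hasFDerivAt_snd.comp x hasFDerivAt_snd).sub_const ηh)
      have hV := (hasFDerivAt_fst (p := x)).add
        ((h2d.mul h2d).add ((h3d.mul h3d).const_mul Cc))
      have hV' : HasFDerivAt (fun x : ℝ×ℝ×ℝ => x.1 + ((x.2.1 - ψh) * (x.2.1 - ψh) + Cc * ((x.2.2 - ηh) * (x.2.2 - ηh)))) _ x := hV
      rw [hV'.fderiv]
      simp only [ContinuousLinearMap.add_apply, ContinuousLinearMap.smul_apply,
        ContinuousLinearMap.comp_apply, ContinuousLinearMap.coe_fst',
        ContinuousLinearMap.coe_snd', smul_eq_mul, epiVF]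
      linarith [key]
end

section
/- Fix reals λ, r, b, ν > 0, d ≥ 0 with b > d, δ > 0, and β̂ ≥ 0. Let q̃ be any of the three functions q̃(θ,ψ) = β̂ψ, q̃(θ,ψ) = β̂ψ(1−ψ), or q̃(θ,ψ) = β̂θψ, and let q(θ,ψ) := min{q̃(θ,ψ), 1}. Set ρ := λ/(r+b) and μ := b/ν, and assume ρ < 1 and β̂ < μ. Let θ̂ := 0, ψ̂ := 0, and η̂ := (b−d)/(b+d+ν). If η̂ > δ, then the point P := (0, 0, η̂) is a Lyapunov-stable equilibrium of g. -/
/- auxiliary linear maps for the derivative of the Lyapunov function -/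
noncomputable def auxL3 : (ℝ × ℝ × ℝ) →L[ℝ] ℝ :=
  (ContinuousLinearMap.snd ℝ ℝ ℝ).comp (ContinuousLinearMap.snd ℝ ℝ (ℝ × ℝ))
noncomputable def auxL2 : (ℝ × ℝ × ℝ) →L[ℝ] ℝ :=
  (ContinuousLinearMap.fst ℝ ℝ ℝ).comp (ContinuousLinearMap.snd ℝ ℝ (ℝ × ℝ))
noncomputable def auxL1 : (ℝ × ℝ × ℝ) →L[ℝ] ℝ := ContinuousLinearMap.fst ℝ ℝ (ℝ × ℝ)

lemma auxV_hasFDerivAt (ηh : ℝ) (y : ℝ × ℝ × ℝ) :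
    HasFDerivAt (fun z : ℝ × ℝ × ℝ => z.1 + z.2.1 + (z.2.2 - ηh)^2)
      ((auxL1 + auxL2) + (2*(y.2.2 - ηh)) • auxL3) y := by
  have h1 : HasFDerivAt (fun z : ℝ × ℝ × ℝ => z.1) auxL1 y := hasFDerivAt_fst
  have h2 : HasFDerivAt (fun z : ℝ × ℝ × ℝ => z.2.1) auxL2 y :=
    hasFDerivAt_fst.comp y hasFDerivAt_snd
  have h3 : HasFDerivAt (fun z : ℝ × ℝ × ℝ => z.2.2) auxL3 y :=
    hasFDerivAt_snd.comp y hasFDerivAt_snd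
  have h4 := (h3.sub_const ηh).mul (h3.sub_const ηh)
  have h4' : HasFDerivAt (fun z : ℝ × ℝ × ℝ => (z.2.2 - ηh)^2) ((2*(y.2.2 - ηh)) • auxL3) y := by
    simp only [pow_two]
    rw [two_mul, add_smul]
    exact h4
  exact (h1.add h2).add h4'

set_option maxHeartbeats 1000000 in
/-- Self-eradicating disease `ρ < 1` with `β̂ < μ`: for each of the three
responses `q̃ = β̂ψ` (FC), `q̃ = β̂ψ(1−ψ)` (FR), `q̃ = β̂θψ` (VFC1), the disease-free
unvaccinated point `(0, 0, (b−d)/(b+d+ν))` is a Lyapunov-stable equilibrium of `g` for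
`q = min{q̃, 1}`. -/
theorem stmt_8 (lam r b ν d δ βh ρ μ ηh : ℝ)
    (hlam : 0 < lam) (hr : 0 < r) (hb : 0 < b) (hν : 0 < ν)
    (hd : 0 ≤ d) (hbd : d < b) (hδ : 0 < δ) (hβ : 0 ≤ βh)
    (hρdef : ρ = lam / (r + b)) (hμdef : μ = b / ν)
    (hρ : ρ < 1) (hβlt : βh < μ)
    (qt : ℝ → ℝ → ℝ)
    (hqt : (∀ θ ψ, qt θ ψ = βh * ψ) ∨ (∀ θ ψ, qt θ ψ = βh * ψ * (1 - ψ)) ∨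
      (∀ θ ψ, qt θ ψ = βh * θ * ψ))
    (hηdef : ηh = (b - d) / (b + d + ν)) (hη : δ < ηh) :
    IsLyapunovStableEquilibrium
      (epiVF lam r b ν d (fun θ ψ => min (qt θ ψ) 1)) (domD δ) (0, 0, ηh) := by
  have hrb : 0 < r + b := by linarith
  have hbd' : 0 < b - d := by linarith
  have hϱ₀ : 0 < b + d + ν := by linarith
  have hηh0 : 0 < ηh := by rw [hηdef]; positivity
  have hlamlt : lam < r + b := by
    have h := hρ; rw [hρdef, div_lt_one hrb] at h; exact h
  have hβν : βh * ν < b := by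
    have h := hβlt; rw [hμdef, lt_div_iff₀ hν] at h; exact h
  -- constants
  obtain ⟨c₁, hc₁def⟩ : ∃ x : ℝ, x = r + b - lam := ⟨_, rfl⟩
  obtain ⟨c₂, hc₂def⟩ : ∃ x : ℝ, x = b - βh * ν := ⟨_, rfl⟩
  have hc₁0 : 0 < c₁ := by rw [hc₁def]; linarith
  have hc₂0 : 0 < c₂ := by rw [hc₂def]; linarith
  obtain ⟨Mv, hMdef⟩ : ∃ x : ℝ, x = (ηh + 1) * (b + d + lam + ν + r) := ⟨_, rfl⟩
  have hM0 : 0 < Mv := by rw [hMdef]; positivity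
  obtain ⟨K, hKdef⟩ : ∃ x : ℝ, x = (lam + ν + r) * (b - d) / (b * (b + d + ν)) := ⟨_, rfl⟩
  have hK0 : 0 ≤ K := by rw [hKdef]; positivity
  have hKid : K * (b * (b + d + ν)) = (lam + ν + r) * (b - d) := by
    rw [hKdef]; field_simp
  obtain ⟨cm, hcmdef⟩ : ∃ x : ℝ, x = min c₁ c₂ := ⟨_, rfl⟩
  have hcm0 : 0 < cm := by rw [hcmdef]; exact lt_min hc₁0 hc₂0
  obtain ⟨r₀, hr₀def⟩ : ∃ x : ℝ, x = min 1 (cm / (2 * Mv * K ^ 2 + 1)) := ⟨_, rfl⟩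
  have hden : (0:ℝ) < 2 * Mv * K ^ 2 + 1 := by positivity
  have hr₀0 : 0 < r₀ := by rw [hr₀def]; exact lt_min one_pos (by positivity)
  have hr₀1 : r₀ ≤ 1 := by rw [hr₀def]; exact min_le_left _ _
  have hrK : 2 * r₀ * K ^ 2 * Mv < cm := by
    have h1 : r₀ ≤ cm / (2 * Mv * K ^ 2 + 1) := by rw [hr₀def]; exact min_le_right _ _
    rw [le_div_iff₀ hden] at h1
    linarith only [h1, hr₀0]
  have hc1M : 2 * r₀ * K ^ 2 * Mv < c₁ := lt_of_lt_of_le hrK (le_of_eq_of_le hcmdef (min_le_left _ _))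
  have hc2M : 2 * r₀ * K ^ 2 * Mv < c₂ := lt_of_lt_of_le hrK (le_of_eq_of_le hcmdef (min_le_right _ _))
  -- equilibrium
  have hq00 : min (qt 0 0) 1 = (0:ℝ) := by
    rcases hqt with h | h | h <;> simp [h]
  have hvar00 : varrho lam r b ν d 0 0 = b + d + ν := by
    simp [varrho]
  have hgP : epiVF lam r b ν d (fun θ ψ => min (qt θ ψ) 1) (0, 0, ηh) = 0 := by
    simp only [epiVF, hvar00, hq00, Prod.mk_eq_zero]
    refine ⟨by simp, by simp, by rw [hηdef]; ring⟩
  have hPD : ((0:ℝ), (0:ℝ), ηh) ∈ domD δ := by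
    refine ⟨le_refl 0, le_refl 0, by norm_num, hη⟩
  refine ⟨hPD, hgP, r₀, hr₀0, fun z => z.1 + z.2.1 + (z.2.2 - ηh)^2, ?_, by simp, ?_⟩
  · exact (contDiff_fst.add (contDiff_fst.comp contDiff_snd)).add
      (((contDiff_snd.comp contDiff_snd).sub contDiff_const).pow 2)
  intro x hx hne
  obtain ⟨θ, ψ, η⟩ := x
  obtain ⟨⟨hθ0, hψ0, hsum, hηδ⟩, hball⟩ := hx
  dsimp only at hθ0 hψ0 hsum hηδ
  have hball' : |θ| < r₀ ∧ |ψ| < r₀ ∧ |η - ηh| < r₀ := by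
    have h := hball
    simp only [Metric.mem_ball, Prod.dist_eq, Real.dist_eq, max_lt_iff, sub_zero] at h
    exact ⟨h.1, h.2.1, h.2.2⟩
  obtain ⟨hbθ, hbψ, hbη⟩ := hball'
  have hθr : θ < r₀ := lt_of_le_of_lt (le_abs_self θ) hbθ
  have hψr : ψ < r₀ := lt_of_le_of_lt (le_abs_self ψ) hbψ
  have hη0 : 0 < η := lt_trans hδ hηδ
  have hηup : η < ηh + 1 := by
    have h := lt_of_le_of_lt (le_abs_self (η - ηh)) hbη
    have h2 := lt_of_lt_of_le h hr₀1
    linarith only [h2]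
  have hθ1 : θ ≤ 1 := by linarith only [hsum, hψ0]
  have hψ1 : ψ ≤ 1 := by linarith only [hsum, hθ0]
  have hφ0 : 0 ≤ 1 - θ - ψ := by linarith only [hsum]
  have hφ1 : 1 - θ - ψ ≤ 1 := by linarith only [hθ0, hψ0]
  have hθψ0 : 0 ≤ θ + ψ := by linarith only [hθ0, hψ0]
  obtain ⟨ϱ, hϱdef⟩ : ∃ x : ℝ, x = varrho lam r b ν d θ ψ := ⟨_, rfl⟩
  have hϱb : b ≤ ϱ := by
    simp only [hϱdef, varrho]
    linarith only [hd, mul_nonneg (mul_nonneg hlam.le hθ0) hφ0, mul_nonneg hν.le hφ0,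
      mul_nonneg hr.le hθ0]
  have hϱ0 : 0 < ϱ := lt_of_lt_of_le hb hϱb
  have hϱup : ϱ ≤ b + d + lam + ν + r := by
    have h1 : lam * θ * (1 - θ - ψ) ≤ lam :=
      le_trans (mul_le_of_le_one_right (mul_nonneg hlam.le hθ0) hφ1)
        (mul_le_of_le_one_right hlam.le hθ1)
    have h2 : ν * (1 - θ - ψ) ≤ ν := mul_le_of_le_one_right hν.le hφ1
    have h3 : r * θ ≤ r := mul_le_of_le_one_right hr.le hθ1
    simp only [hϱdef, varrho]
    linarith only [h1, h2, h3]
  have hQ0 : 0 < η * ϱ := mul_pos hη0 hϱ0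
  have hQM : η * ϱ ≤ Mv := by
    rw [hMdef]
    have h1 : η * ϱ ≤ η * (b + d + lam + ν + r) :=
      mul_le_mul_of_nonneg_left hϱup hη0.le
    have h2 : η * (b + d + lam + ν + r) ≤ (ηh + 1) * (b + d + lam + ν + r) :=
      mul_le_mul_of_nonneg_right hηup.le (by linarith only [hb, hd, hlam, hν, hr])
    linarith only [h1, h2]
  -- the value q and its bounds
  obtain ⟨q, hqdef⟩ : ∃ x : ℝ, x = min (qt θ ψ) 1 := ⟨_, rfl⟩
  have hq_le : q ≤ βh * ψ := by
    have h0 : q ≤ qt θ ψ := by rw [hqdef]; exact min_le_left _ _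
    refine le_trans h0 ?_
    rcases hqt with h | h | h
    · exact le_of_eq (h θ ψ)
    · rw [h]; exact mul_le_of_le_one_right (mul_nonneg hβ hψ0) (by linarith only [hψ0])
    · rw [h]; exact mul_le_mul_of_nonneg_right (mul_le_of_le_one_right hβ hθ1) hψ0
  have hq0 : 0 ≤ q := by
    rw [hqdef]
    refine le_min ?_ zero_le_one
    rcases hqt with h | h | h
    · rw [h]; exact mul_nonneg hβ hψ0
    · rw [h]; exact mul_nonneg (mul_nonneg hβ hψ0) (by linarith only [hψ1])
    · rw [h]; exact mul_nonneg (mul_nonneg hβ hθ0) hψ0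
  -- the three components of g at x
  obtain ⟨Gθ, hGθ⟩ : ∃ x : ℝ, x = θ / (η * ϱ) * ((1 - θ - ψ) * lam - r - b) := ⟨_, rfl⟩
  obtain ⟨Gψ, hGψ⟩ : ∃ x : ℝ, x = 1 / (η * ϱ) * (q * (1 - θ - ψ) * ν - b * ψ) := ⟨_, rfl⟩
  obtain ⟨Gη, hGη⟩ : ∃ x : ℝ, x = (b - d) / ϱ - η := ⟨_, rfl⟩
  -- bound on Gθ
  have hGθle : Gθ ≤ -c₁ * θ / Mv := by
    have h1 : θ * ((1 - θ - ψ) * lam - r - b) ≤ -c₁ * θ := by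
      rw [hc₁def]
      linarith only [mul_nonneg hlam.le (mul_nonneg hθ0 hθψ0)]
    have h2 : Gθ = θ * ((1 - θ - ψ) * lam - r - b) / (η * ϱ) := by
      rw [hGθ]; ring
    have h3 : θ * ((1 - θ - ψ) * lam - r - b) / (η * ϱ) ≤ (-c₁ * θ) / (η * ϱ) :=
      (div_le_div_iff_of_pos_right hQ0).mpr h1
    have h4 : (-c₁ * θ) / (η * ϱ) ≤ (-c₁ * θ) / Mv := by
      rw [div_le_div_iff₀ hQ0 hM0]
      have hneg : -c₁ * θ ≤ 0 := by linarith only [mul_nonneg hc₁0.le hθ0]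
      exact mul_le_mul_of_nonpos_left hQM hneg
    calc Gθ = θ * ((1 - θ - ψ) * lam - r - b) / (η * ϱ) := h2
      _ ≤ (-c₁ * θ) / (η * ϱ) := h3
      _ ≤ -c₁ * θ / Mv := h4
  -- bound on Gψ
  have hGψle : Gψ ≤ -c₂ * ψ / Mv := by
    have hA : q * (1 - θ - ψ) * ν ≤ q * ν :=
      mul_le_mul_of_nonneg_right (mul_le_of_le_one_right hq0 hφ1) hν.le
    have hB : q * ν ≤ βh * ψ * ν := mul_le_mul_of_nonneg_right hq_le hν.le
    have h1 : q * (1 - θ - ψ) * ν - b * ψ ≤ -c₂ * ψ := by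
      rw [hc₂def]
      linarith only [hA, hB]
    have h3 : (q * (1 - θ - ψ) * ν - b * ψ) / (η * ϱ) ≤ (-c₂ * ψ) / (η * ϱ) :=
      (div_le_div_iff_of_pos_right hQ0).mpr h1
    have h4 : (-c₂ * ψ) / (η * ϱ) ≤ (-c₂ * ψ) / Mv := by
      rw [div_le_div_iff₀ hQ0 hM0]
      have hneg : -c₂ * ψ ≤ 0 := by linarith only [mul_nonneg hc₂0.le hψ0]
      exact mul_le_mul_of_nonpos_left hQM hneg
    calc Gψ = (q * (1 - θ - ψ) * ν - b * ψ) / (η * ϱ) := by rw [hGψ]; ring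
      _ ≤ (-c₂ * ψ) / (η * ϱ) := h3
      _ ≤ -c₂ * ψ / Mv := h4
  -- bound on the η-term
  obtain ⟨E, hEdef⟩ : ∃ x : ℝ, x = (b - d) / ϱ - ηh := ⟨_, rfl⟩
  have hEid : E * (ϱ * (b + d + ν)) = (b - d) * ((b + d + ν) - ϱ) := by
    rw [hEdef, hηdef]; field_simp
  have hϱdiff1 : (b + d + ν) - ϱ ≤ ν * (θ + ψ) := by
    simp only [hϱdef, varrho]
    linarith only [mul_nonneg (mul_nonneg hlam.le hθ0) hφ0, mul_nonneg hr.le hθ0]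
  have hϱdiff2 : ϱ - (b + d + ν) ≤ (lam + r) * θ := by
    have h1 : lam * θ * (1 - θ - ψ) ≤ lam * θ :=
      mul_le_of_le_one_right (mul_nonneg hlam.le hθ0) hφ1
    have h2 : 0 ≤ ν * (θ + ψ) := mul_nonneg hν.le hθψ0
    simp only [hϱdef, varrho]
    linarith only [h1, h2]
  have hbν0 : (0:ℝ) < b * (b + d + ν) := by positivity
  have hEup : E ≤ K * (θ + ψ) := by
    rcases le_or_gt E 0 with h | h
    · exact le_trans h (mul_nonneg hK0 hθψ0)
    · have h1 : E * (b * (b + d + ν)) ≤ E * (ϱ * (b + d + ν)) :=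
        mul_le_mul_of_nonneg_left (mul_le_mul_of_nonneg_right hϱb hϱ₀.le) h.le
      have h2 : E * (ϱ * (b + d + ν)) ≤ (b - d) * (ν * (θ + ψ)) := by
        rw [hEid]; exact mul_le_mul_of_nonneg_left hϱdiff1 hbd'.le
      have h3 : E * (b * (b + d + ν)) ≤ K * (θ + ψ) * (b * (b + d + ν)) := by
        have hk : K * (θ + ψ) * (b * (b + d + ν)) = (θ + ψ) * ((lam + ν + r) * (b - d)) := by
          rw [← hKid]; ring
        rw [hk]
        have p1 : 0 ≤ (θ + ψ) * ((lam + r) * (b - d)) :=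
          mul_nonneg hθψ0 (mul_nonneg (by linarith only [hlam, hr]) hbd'.le)
        linarith only [h1, h2, p1]
      exact le_of_mul_le_mul_right h3 hbν0
  have hElo : -(K * (θ + ψ)) ≤ E := by
    rcases le_or_gt 0 E with h | h
    · exact le_trans (neg_nonpos.mpr (mul_nonneg hK0 hθψ0)) h
    · have h1 : E * (ϱ * (b + d + ν)) ≤ E * (b * (b + d + ν)) :=
        mul_le_mul_of_nonpos_left (mul_le_mul_of_nonneg_right hϱb hϱ₀.le) h.le
      have h2 : (b - d) * (-((lam + r) * θ)) ≤ E * (ϱ * (b + d + ν)) := by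
        rw [hEid]
        apply mul_le_mul_of_nonneg_left _ hbd'.le
        linarith only [hϱdiff2]
      have h3 : -(K * (θ + ψ)) * (b * (b + d + ν)) ≤ E * (b * (b + d + ν)) := by
        have hk : -(K * (θ + ψ)) * (b * (b + d + ν)) =
            -((θ + ψ) * ((lam + ν + r) * (b - d))) := by
          rw [← hKid]; ring
        rw [hk]
        have p1 : 0 ≤ (b - d) * ((lam + r) * ψ) :=
          mul_nonneg hbd'.le (mul_nonneg (by linarith only [hlam, hr]) hψ0)
        have p2 : 0 ≤ (b - d) * (ν * (θ + ψ)) :=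
          mul_nonneg hbd'.le (mul_nonneg hν.le hθψ0)
        linarith only [h1, h2, p1, p2]
      exact le_of_mul_le_mul_right h3 hbν0
  have hEsq : E ^ 2 ≤ K ^ 2 * (θ + ψ) ^ 2 := by
    have h := sq_le_sq' hElo hEup
    linarith only [h]
  have hGηle : 2 * (η - ηh) * Gη ≤ -(η - ηh)^2 + K^2 * (θ + ψ)^2 := by
    have hGη' : Gη = E - (η - ηh) := by rw [hGη, hEdef]; ring
    rw [hGη']
    linarith only [hEsq, sq_nonneg (E - (η - ηh))]
  -- combine
  have hsq2r : (θ + ψ)^2 ≤ 2 * r₀ * (θ + ψ) := by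
    have hs2 : θ + ψ ≤ 2 * r₀ := by linarith only [hθr, hψr]
    have h := mul_le_mul_of_nonneg_left hs2 hθψ0
    linarith only [h]
  have hKsq : K^2 * (θ + ψ)^2 ≤ 2 * r₀ * K^2 * (θ + ψ) := by
    have h := mul_le_mul_of_nonneg_left hsq2r (sq_nonneg K)
    linarith only [h]
  have hne' : θ ≠ 0 ∨ ψ ≠ 0 ∨ η ≠ ηh := by
    by_contra h
    push_neg at h
    apply hne
    simp only [Prod.mk.injEq]
    exact ⟨h.1, h.2.1, h.2.2⟩
  have hVpos : 0 < θ + ψ + (η - ηh)^2 := by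
    rcases hne' with h | h | h
    · have h' : 0 < θ := lt_of_le_of_ne hθ0 (Ne.symm h)
      linarith only [h', hψ0, sq_nonneg (η - ηh)]
    · have h' : 0 < ψ := lt_of_le_of_ne hψ0 (Ne.symm h)
      linarith only [h', hθ0, sq_nonneg (η - ηh)]
    · have h' : 0 < (η - ηh)^2 := by
        have : η - ηh ≠ 0 := sub_ne_zero.mpr h
        positivity
      linarith only [h', hθ0, hψ0]
  -- total derivative value is negative
  have hmain : Gθ + Gψ + 2 * (η - ηh) * Gη < 0 := by
    have hsum' : Gθ + Gψ + 2 * (η - ηh) * Gη ≤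
        -c₁ * θ / Mv - c₂ * ψ / Mv - (η - ηh)^2 + 2 * r₀ * K^2 * (θ + ψ) := by
      have h := add_le_add (add_le_add hGθle hGψle) hGηle
      have hX : -c₁ * θ / Mv + -c₂ * ψ / Mv + (-(η - ηh)^2 + K^2*(θ+ψ)^2) =
          -c₁ * θ / Mv - c₂ * ψ / Mv - (η - ηh)^2 + K^2*(θ+ψ)^2 := by ring
      rw [hX] at h
      linarith only [hKsq, h]
    have ha1 : 2 * r₀ * K^2 < c₁ / Mv := by
      rw [lt_div_iff₀ hM0]; linarith only [hc1M]
    have ha2 : 2 * r₀ * K^2 < c₂ / Mv := by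
      rw [lt_div_iff₀ hM0]; linarith only [hc2M]
    have hsum'' : Gθ + Gψ + 2 * (η - ηh) * Gη ≤
        -((c₁/Mv - 2*r₀*K^2) * θ) - (c₂/Mv - 2*r₀*K^2) * ψ - (η - ηh)^2 :=
      le_of_le_of_eq hsum' (by ring)
    rcases hne' with h | h | h
    · have hθpos : 0 < θ := lt_of_le_of_ne hθ0 (Ne.symm h)
      have h1 : 0 < (c₁/Mv - 2*r₀*K^2) * θ := mul_pos (by linarith only [ha1]) hθpos
      have h2 : 0 ≤ (c₂/Mv - 2*r₀*K^2) * ψ := mul_nonneg (by linarith only [ha2]) hψ0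
      linarith only [hsum'', h1, h2, sq_nonneg (η - ηh)]
    · have hψpos : 0 < ψ := lt_of_le_of_ne hψ0 (Ne.symm h)
      have h1 : 0 ≤ (c₁/Mv - 2*r₀*K^2) * θ := mul_nonneg (by linarith only [ha1]) hθ0
      have h2 : 0 < (c₂/Mv - 2*r₀*K^2) * ψ := mul_pos (by linarith only [ha2]) hψpos
      linarith only [hsum'', h1, h2, sq_nonneg (η - ηh)]
    · have ht : 0 < (η - ηh)^2 := by
        have : η - ηh ≠ 0 := sub_ne_zero.mpr h
        positivity
      have h1 : 0 ≤ (c₁/Mv - 2*r₀*K^2) * θ := mul_nonneg (by linarith only [ha1]) hθ0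
      have h2 : 0 ≤ (c₂/Mv - 2*r₀*K^2) * ψ := mul_nonneg (by linarith only [ha2]) hψ0
      linarith only [hsum'', h1, h2, ht]
  constructor
  · exact hVpos
  · have hfd := (auxV_hasFDerivAt ηh (θ, ψ, η)).fderiv
    rw [hfd]
    have happ : ((auxL1 + auxL2) + (2*(((θ,ψ,η) : ℝ × ℝ × ℝ).2.2 - ηh)) • auxL3)
        (epiVF lam r b ν d (fun θ ψ => min (qt θ ψ) 1) (θ, ψ, η)) =
        Gθ + Gψ + 2 * (η - ηh) * Gη := by
      simp only [epiVF, auxL1, auxL2, auxL3, ContinuousLinearMap.add_apply,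
        ContinuousLinearMap.coe_comp', Function.comp_apply, ContinuousLinearMap.coe_fst',
        ContinuousLinearMap.coe_snd', ContinuousLinearMap.smul_apply, smul_eq_mul]
      rw [hGθ, hGψ, hGη, hqdef, hϱdef]
    rw [happ]
    exact hmain
end

section
/- Fix reals λ, r, b, ν > 0, d ≥ 0 with b > d, δ > 0, and β̂ > 0, and let q(θ,ψ) := min{β̂ψ(1−ψ), 1} (free-riding response). Set ρ := λ/(r+b) and μ := b/ν, and assume ρ > 1, β̂ > ρ²μ, and √(μβ̂) − μ < 1. Let θ̂ := 0, ψ̂ := 1 − √(μ/β̂), and η̂ := (b−d)/ϱ(θ̂,ψ̂). If η̂ > δ, then the point P := (θ̂, ψ̂, η̂) is a Lyapunov-stable equilibrium of g. -/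
lemma quadV_hasFDerivAt (K1 K2 a c e : ℝ) (x : ℝ × ℝ × ℝ) :
    HasFDerivAt (fun x : ℝ × ℝ × ℝ => K1*(x.1 - a)^2 + K2*(x.2.1 - c)^2 + (x.2.2 - e)^2)
      ((K1*(2*(x.1 - a))) • (ContinuousLinearMap.fst ℝ ℝ (ℝ × ℝ)) +
       (K2*(2*(x.2.1 - c))) • ((ContinuousLinearMap.fst ℝ ℝ ℝ).comp (ContinuousLinearMap.snd ℝ ℝ (ℝ × ℝ))) +
       (2*(x.2.2 - e)) • ((ContinuousLinearMap.snd ℝ ℝ ℝ).comp (ContinuousLinearMap.snd ℝ ℝ (ℝ × ℝ)))) x := by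
  have h1 : HasDerivAt (fun t : ℝ => K1*(t - a)^2) (K1*(2*(x.1 - a))) x.1 := by
    simpa using (((hasDerivAt_id x.1).sub_const a).pow 2).const_mul K1
  have h2 : HasDerivAt (fun t : ℝ => K2*(t - c)^2) (K2*(2*(x.2.1 - c))) x.2.1 := by
    simpa using (((hasDerivAt_id x.2.1).sub_const c).pow 2).const_mul K2
  have h3 : HasDerivAt (fun t : ℝ => (t - e)^2) (2*(x.2.2 - e)) x.2.2 := by
    simpa using (((hasDerivAt_id x.2.2).sub_const e).pow 2).const_mul 1
  have p1 : HasFDerivAt (fun y : ℝ × ℝ × ℝ => y.1) (ContinuousLinearMap.fst ℝ ℝ (ℝ × ℝ)) x :=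
    hasFDerivAt_fst
  have p2 : HasFDerivAt (fun y : ℝ × ℝ × ℝ => y.2.1)
      ((ContinuousLinearMap.fst ℝ ℝ ℝ).comp (ContinuousLinearMap.snd ℝ ℝ (ℝ × ℝ))) x :=
    (hasFDerivAt_fst (p := x.2)).comp x hasFDerivAt_snd
  have p3 : HasFDerivAt (fun y : ℝ × ℝ × ℝ => y.2.2)
      ((ContinuousLinearMap.snd ℝ ℝ ℝ).comp (ContinuousLinearMap.snd ℝ ℝ (ℝ × ℝ))) x :=
    (hasFDerivAt_snd (p := x.2)).comp x hasFDerivAt_snd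
  exact ((h1.comp_hasFDerivAt x p1).add (h2.comp_hasFDerivAt x p2)).add (h3.comp_hasFDerivAt x p3)

set_option maxHeartbeats 1000000 in
/-- Free-riding response `q = min{β̂ψ(1−ψ), 1}`, endemic disease `ρ > 1`
with `β̂ > ρ²μ` and `√(μβ̂) − μ < 1`: the disease-free vaccinated point
`(0, 1 − √(μ/β̂), η̂)` is a Lyapunov-stable equilibrium of `g`. -/
theorem stmt_9 (lam r b ν d δ βh ρ μ θh ψh ηh : ℝ)
    (hlam : 0 < lam) (hr : 0 < r) (hb : 0 < b) (hν : 0 < ν)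
    (hd : 0 ≤ d) (hbd : d < b) (hδ : 0 < δ) (hβ : 0 < βh)
    (hρdef : ρ = lam / (r + b)) (hμdef : μ = b / ν)
    (hρ : 1 < ρ) (hβgt : ρ ^ 2 * μ < βh) (hq1 : Real.sqrt (μ * βh) - μ < 1)
    (hθ : θh = 0) (hψ : ψh = 1 - Real.sqrt (μ / βh))
    (hηdef : ηh = (b - d) / varrho lam r b ν d θh ψh) (hη : δ < ηh) :
    IsLyapunovStableEquilibrium
      (epiVF lam r b ν d (fun _ ψ => min (βh * ψ * (1 - ψ)) 1)) (domD δ) (θh, ψh, ηh) := by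
  have hrb : 0 < r + b := by linarith
  have hρpos : 0 < ρ := lt_trans one_pos hρ
  have hμ : 0 < μ := by rw [hμdef]; positivity
  have hμβ : 0 < μ / βh := div_pos hμ hβ
  set φh := Real.sqrt (μ / βh) with hφhdef
  have hφpos : 0 < φh := Real.sqrt_pos.2 hμβ
  have hφsq : φh ^ 2 = μ / βh := Real.sq_sqrt hμβ.le
  have hμφ : μ = βh * φh ^ 2 := by rw [hφsq]; field_simp
  have hbνβ : ν * βh * φh ^ 2 = b := by rw [hφsq, hμdef]; field_simp
  have hφρ : φh < 1 / ρ := by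
    have h1 : (1:ℝ)/ρ = Real.sqrt ((1/ρ)^2) := (Real.sqrt_sq (by positivity)).symm
    rw [hφhdef, h1]
    apply Real.sqrt_lt_sqrt hμβ.le
    rw [div_pow, one_pow, div_lt_div_iff₀ hβ (by positivity)]
    nlinarith only [hβgt, hρpos, hμ, hβ]
  have hφ1 : φh < 1 := by
    have h2 : (1:ℝ)/ρ < 1 := by rw [div_lt_one hρpos]; exact hρ
    linarith
  have hψpos : 0 < ψh := by rw [hψ]; linarith
  have hψ1 : ψh < 1 := by rw [hψ]; linarith
  have hlamphi : lam * φh < r + b := by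
    have h1 : lam = ρ * (r + b) := by rw [hρdef]; field_simp
    have h2 : lam * φh < lam * (1/ρ) := by exact mul_lt_mul_of_pos_left hφρ hlam
    have h3 : lam * (1/ρ) = r + b := by rw [h1]; field_simp
    linarith
  obtain ⟨κ, hκdef⟩ : ∃ x : ℝ, x = r + b - lam * φh := ⟨_, rfl⟩
  have hκ : 0 < κ := by rw [hκdef]; linarith
  have hsqrtμβ : Real.sqrt (μ * βh) = βh * φh := by
    have h1 : μ * βh = (μ/βh) * βh^2 := by field_simp
    rw [h1, Real.sqrt_mul hμβ.le, Real.sqrt_sq hβ.le, hφhdef]; ring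
  obtain ⟨ε₀, hεdef⟩ : ∃ x : ℝ, x = 1 - (βh*φh - μ) := ⟨_, rfl⟩
  have hε : 0 < ε₀ := by rw [hεdef, ← hsqrtμβ]; linarith
  obtain ⟨ϱP, hϱPdef⟩ : ∃ x : ℝ, x = varrho lam r b ν d θh ψh := ⟨_, rfl⟩
  rw [← hϱPdef] at hηdef
  have hϱPval : ϱP = b + d + ν * φh := by
    rw [hϱPdef, varrho, hθ, hψ]; ring
  have hbne : b ≠ 0 := ne_of_gt hb
  have hlamne : lam ≠ 0 := ne_of_gt hlam
  have hβne : βh ≠ 0 := ne_of_gt hβ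
  have hϱPpos : 0 < ϱP := by
    rw [hϱPval]
    have := mul_pos hν hφpos
    linarith
  have hϱPne : ϱP ≠ 0 := ne_of_gt hϱPpos
  have hηhpos : 0 < ηh := lt_trans hδ hη
  obtain ⟨R, hRdef⟩ : ∃ x : ℝ, x = b + d + lam + ν + r := ⟨_, rfl⟩
  have hRpos : 0 < R := by rw [hRdef]; linarith
  obtain ⟨η1, hη1def⟩ : ∃ x : ℝ, x = ηh + 1 := ⟨_, rfl⟩
  have hη1pos : 0 < η1 := by rw [hη1def]; linarith
  obtain ⟨m1, hm1def⟩ : ∃ x : ℝ, x = ν * βh * (ψh/2) / (η1 * R) := ⟨_, rfl⟩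
  have hm1pos : 0 < m1 := by
    rw [hm1def]
    exact div_pos (mul_pos (mul_pos hν hβ) (by linarith)) (mul_pos hη1pos hRpos)
  obtain ⟨m2, hm2def⟩ : ∃ x : ℝ, x = ν * βh / (δ * b) := ⟨_, rfl⟩
  have hm2pos : 0 < m2 := by rw [hm2def]; exact div_pos (mul_pos hν hβ) (mul_pos hδ hb)
  obtain ⟨L, hLdef⟩ : ∃ x : ℝ, x = ν + lam + r := ⟨_, rfl⟩
  have hLpos : 0 < L := by rw [hLdef]; linarith
  obtain ⟨M, hMdef⟩ : ∃ x : ℝ, x = (b - d) * L / (b * ϱP) := ⟨_, rfl⟩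
  have hMpos : 0 < M := by
    rw [hMdef]; exact div_pos (mul_pos (by linarith) hLpos) (mul_pos hb hϱPpos)
  obtain ⟨Q, hQdef⟩ : ∃ x : ℝ, x = 2 * m2^2 / m1 := ⟨_, rfl⟩
  have hQpos : 0 < Q := by
    rw [hQdef]; exact div_pos (by nlinarith only [hm2pos]) hm1pos
  have hQ : m1 * Q = 2 * m2^2 := by
    rw [hQdef, mul_div_cancel₀ _ (ne_of_gt hm1pos)]
  obtain ⟨K2, hK2def⟩ : ∃ x : ℝ, x = (2*M^2 + 1) / (m1 * φh) + 1 := ⟨_, rfl⟩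
  have hK2aux : 0 < (2*M^2 + 1) / (m1 * φh) :=
    div_pos (by nlinarith only [sq_nonneg M]) (mul_pos hm1pos hφpos)
  have hK2pos : 0 < K2 := by rw [hK2def]; linarith
  have hK2one : 1 ≤ K2 := by rw [hK2def]; linarith
  have hK2key : 2*M^2 + 1 ≤ K2 * (m1 * φh) := by
    have h1 : K2 * (m1 * φh) = (2*M^2 + 1) + m1 * φh := by
      rw [hK2def, add_mul, one_mul, div_mul_cancel₀ _ (ne_of_gt (mul_pos hm1pos hφpos))]
    linarith only [h1, mul_pos hm1pos hφpos]
  obtain ⟨A1, hA1def⟩ : ∃ x : ℝ, x = 2*K2*Q*φh + 2*M^2 + 1 := ⟨_, rfl⟩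
  have hA1pos : 0 < A1 := by
    rw [hA1def]
    nlinarith only [mul_pos (mul_pos hK2pos hQpos) hφpos, sq_nonneg M]
  obtain ⟨K1, hK1def⟩ : ∃ x : ℝ, x = A1 * (η1*R) / κ + 1 := ⟨_, rfl⟩
  have hK1aux : 0 < A1 * (η1*R) / κ :=
    div_pos (mul_pos hA1pos (mul_pos hη1pos hRpos)) hκ
  have hK1pos : 0 < K1 := by rw [hK1def]; linarith
  have hK1one : 1 ≤ K1 := by rw [hK1def]; linarith
  have hK1key : A1 * (η1*R) ≤ K1 * κ := by
    have h1 : K1 * κ = A1 * (η1*R) + κ := by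
      rw [hK1def, add_mul, one_mul, div_mul_cancel₀ _ (ne_of_gt hκ)]
    linarith
  obtain ⟨r₀, hr₀def⟩ : ∃ x : ℝ, x = min 1 (min (ψh/2) (min φh (min (κ/(4*lam)) (ε₀/βh)))) := ⟨_, rfl⟩
  have hr₀pos : 0 < r₀ := by
    rw [hr₀def]
    refine lt_min one_pos (lt_min (by linarith) (lt_min hφpos (lt_min ?_ ?_)))
    · exact div_pos hκ (by linarith)
    · exact div_pos hε hβ
  have hr₀1 : r₀ ≤ 1 := by rw [hr₀def]; exact min_le_left _ _
  have hr₀ψ : r₀ ≤ ψh/2 := by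
    rw [hr₀def]; exact le_trans (min_le_right _ _) (min_le_left _ _)
  have hr₀φ : r₀ ≤ φh := by
    rw [hr₀def]; exact le_trans (min_le_right _ _) (le_trans (min_le_right _ _) (min_le_left _ _))
  have hr₀κ : r₀ ≤ κ/(4*lam) := by
    rw [hr₀def]
    exact le_trans (min_le_right _ _) (le_trans (min_le_right _ _) (le_trans (min_le_right _ _) (min_le_left _ _)))
  have hr₀ε : r₀ ≤ ε₀/βh := by
    rw [hr₀def]
    exact le_trans (min_le_right _ _) (le_trans (min_le_right _ _) (le_trans (min_le_right _ _) (min_le_right _ _)))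
  -- the key pointwise estimate
  have key : ∀ θf ψf ηf : ℝ, 0 ≤ θf → 0 ≤ ψf → θf + ψf ≤ 1 → δ < ηf →
      |θf - θh| < r₀ → |ψf - ψh| < r₀ → |ηf - ηh| < r₀ →
      (θf, ψf, ηf) ≠ ((θh, ψh, ηh) : ℝ × ℝ × ℝ) →
      0 < K1*(θf - θh)^2 + K2*(ψf - ψh)^2 + (ηf - ηh)^2 ∧
      K1*(2*(θf - θh)) * (θf/(ηf*varrho lam r b ν d θf ψf)*((1-θf-ψf)*lam - r - b))
      + K2*(2*(ψf - ψh)) * (1/(ηf*varrho lam r b ν d θf ψf)*(min (βh*ψf*(1-ψf)) 1 * (1-θf-ψf)*ν - b*ψf))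
      + 2*(ηf - ηh) * ((b-d)/varrho lam r b ν d θf ψf - ηf) < 0 := by
    intro θf ψf ηf hx1 hx2 hx3 hx4 hb1 hb2 hb3 hnef
    rw [hθ, sub_zero] at hb1 ⊢
    have hθr : θf < r₀ := by rw [abs_of_nonneg hx1] at hb1; exact hb1
    obtain ⟨v, hvdef⟩ : ∃ x : ℝ, x = ψf - ψh := ⟨_, rfl⟩
    obtain ⟨w, hwdef⟩ : ∃ x : ℝ, x = ηf - ηh := ⟨_, rfl⟩
    obtain ⟨a, hadef⟩ : ∃ x : ℝ, x = |v| := ⟨_, rfl⟩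
    rw [← hvdef] at hb2
    rw [← hwdef] at hb3
    rw [← hadef] at hb2
    have ha0 : 0 ≤ a := by rw [hadef]; exact abs_nonneg v
    have hva : v ≤ a := by rw [hadef]; exact le_abs_self v
    have hva' : -a ≤ v := by rw [hadef]; exact neg_abs_le v
    have hsub : ψf = 1 - φh + v := by rw [hvdef, hψ]; ring
    have ha2 : a^2 = v^2 := by rw [hadef]; exact sq_abs v
    have hηfpos : 0 < ηf := lt_trans hδ hx4
    have hηfub : ηf ≤ η1 := by
      rw [hη1def]
      linarith only [le_abs_self w, hb3, hr₀1, hwdef.le, hwdef.ge]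
    obtain ⟨ϱ, hϱdef2⟩ : ∃ x : ℝ, x = varrho lam r b ν d θf ψf := ⟨_, rfl⟩
    rw [← hϱdef2]
    have hϱex : ϱ = b + d + lam*θf*(1-θf-ψf) + ν*(1-θf-ψf) + r*θf := by
      rw [hϱdef2, varrho]
    have hφ0 : 0 ≤ 1 - θf - ψf := by linarith only [hx3]
    have hθle1 : θf ≤ 1 := by linarith only [hx2, hx3]
    have hψle1 : ψf ≤ 1 := by linarith only [hx1, hx3]
    have hϱlb : b ≤ ϱ := by
      rw [hϱex]
      linarith only [hd, mul_nonneg (mul_nonneg hlam.le hx1) hφ0, mul_nonneg hν.le hφ0,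
        mul_nonneg hr.le hx1]
    have hϱpos : 0 < ϱ := lt_of_lt_of_le hb hϱlb
    have hϱne : ϱ ≠ 0 := ne_of_gt hϱpos
    have hϱub : ϱ ≤ R := by
      rw [hϱex, hRdef]
      linarith only [mul_nonneg (mul_nonneg hlam.le hx1) (by linarith only [hx1, hx2] : (0:ℝ) ≤ 1 - (1-θf-ψf)),
        mul_nonneg hlam.le (by linarith only [hθle1] : (0:ℝ) ≤ 1 - θf),
        mul_nonneg hν.le (by linarith only [hx1, hx2] : (0:ℝ) ≤ 1 - (1-θf-ψf)),
        mul_nonneg hr.le (by linarith only [hθle1] : (0:ℝ) ≤ 1 - θf)]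
    obtain ⟨p, hpdef⟩ : ∃ x : ℝ, x = ηf * ϱ := ⟨_, rfl⟩
    rw [← hpdef]
    have hplb : δ * b ≤ p := by
      rw [hpdef]; exact mul_le_mul hx4.le hϱlb hb.le hηfpos.le
    have hppos : 0 < p := lt_of_lt_of_le (mul_pos hδ hb) hplb
    have hpne : p ≠ 0 := ne_of_gt hppos
    have hpub : p ≤ η1 * R := by
      rw [hpdef]
      exact mul_le_mul hηfub hϱub (le_trans hb.le hϱlb) hη1pos.le
    have hψlb : ψh/2 ≤ ψf := by
      rw [hsub]
      linarith only [hva', hb2, hr₀ψ, hψ.le, hψ.ge]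
    -- positivity of the Lyapunov function
    have hss : 0 < θf^2 + v^2 + w^2 := by
      rcases lt_trichotomy (θf^2 + v^2 + w^2) 0 with h | h | h
      · exfalso
        linarith only [h, sq_nonneg θf, sq_nonneg v, sq_nonneg w]
      · exfalso
        apply hnef
        have e1 : θf = 0 := by
          have : θf^2 = 0 := by linarith only [h, sq_nonneg v, sq_nonneg w, sq_nonneg θf]
          exact (pow_eq_zero_iff two_ne_zero).mp this
        have e2 : ψf = ψh := by
          have hv2 : v^2 = 0 := by linarith only [h, sq_nonneg θf, sq_nonneg w, sq_nonneg v]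
          have hv0 : v = 0 := (pow_eq_zero_iff two_ne_zero).mp hv2
          rw [hv0] at hvdef; linarith only [hvdef.le, hvdef.ge]
        have e3 : ηf = ηh := by
          have hw2 : w^2 = 0 := by linarith only [h, sq_nonneg θf, sq_nonneg v, sq_nonneg w]
          have hw0 : w = 0 := (pow_eq_zero_iff two_ne_zero).mp hw2
          rw [hw0] at hwdef; linarith only [hwdef.le, hwdef.ge]
        simp [e1, e2, e3, hθ]
      · exact h
    have hv2e : v^2 = (ψf - ψh)^2 := by rw [hvdef]
    have hw2e : w^2 = (ηf - ηh)^2 := by rw [hwdef]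
    have h0 : 0 < K1*θf^2 + K2*(ψf - ψh)^2 + (ηf - ηh)^2 := by
      linarith only [hss, hv2e.le, hv2e.ge, hw2e.le, hw2e.ge,
        mul_nonneg (by linarith only [hK1one] : (0:ℝ) ≤ K1 - 1) (sq_nonneg θf),
        mul_nonneg (by linarith only [hK2one] : (0:ℝ) ≤ K2 - 1) (sq_nonneg (ψf - ψh))]
    refine ⟨h0, ?_⟩
    rw [← hvdef, ← hwdef]
    -- Term A : the θ-direction
    have hlr : lam * r₀ ≤ κ / 4 := by
      have h1 := mul_le_mul_of_nonneg_left hr₀κ hlam.le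
      have h2 : lam * (κ/(4*lam)) = κ/4 := by field_simp
      linarith only [h1, h2.le, h2.ge]
    have hcle : (1 - θf - ψf) * lam - r - b ≤ -(κ/2) := by
      have e1 : 1 - θf - ψf = φh - v - θf := by rw [hsub]; ring
      rw [e1]
      have h1 : lam * (-a) ≤ lam * v := mul_le_mul_of_nonneg_left hva' hlam.le
      have h2 : lam * a ≤ lam * r₀ := mul_le_mul_of_nonneg_left hb2.le hlam.le
      have h4 : 0 ≤ lam * θf := mul_nonneg hlam.le hx1
      linarith only [h1, h2, h4, hlr, hκdef.le, hκdef.ge, hκ.le]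
    have hA : K1*(2*θf) * (θf/p*((1-θf-ψf)*lam - r - b)) ≤ -A1*θf^2 := by
      have hinv1 : (η1*R)⁻¹ ≤ p⁻¹ := inv_anti₀ hppos hpub
      have hη1R : 0 < η1*R := mul_pos hη1pos hRpos
      have hη1Rne : η1*R ≠ 0 := ne_of_gt hη1R
      have hs1 : ((1-θf-ψf)*lam - r - b) * p⁻¹ ≤ (-(κ/2)) * (η1*R)⁻¹ := by
        have e1 : ((1-θf-ψf)*lam - r - b) * p⁻¹ ≤ (-(κ/2)) * p⁻¹ :=
          mul_le_mul_of_nonneg_right hcle (inv_nonneg.2 hppos.le)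
        have e2 : (-(κ/2)) * p⁻¹ ≤ (-(κ/2)) * (η1*R)⁻¹ :=
          mul_le_mul_of_nonpos_left hinv1 (by linarith only [hκ])
        linarith only [e1, e2]
      have e3 : K1*(2*θf) * (θf/p*((1-θf-ψf)*lam - r - b))
          = (2*K1*θf^2) * (((1-θf-ψf)*lam - r - b) * p⁻¹) := by
        field_simp
      have e4 : (2*K1*θf^2) * (((1-θf-ψf)*lam - r - b) * p⁻¹)
          ≤ (2*K1*θf^2) * ((-(κ/2)) * (η1*R)⁻¹) :=
        mul_le_mul_of_nonneg_left hs1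
          (mul_nonneg (by linarith only [hK1pos] : (0:ℝ) ≤ 2*K1) (sq_nonneg θf))
      have e5 : (2*K1*θf^2) * ((-(κ/2)) * (η1*R)⁻¹) ≤ -A1*θf^2 := by
        have e6 : (2*K1*θf^2) * ((-(κ/2)) * (η1*R)⁻¹) = -((K1*κ) * θf^2 * (η1*R)⁻¹) := by
          ring
        have e7 : A1 * θf^2 ≤ (K1*κ) * θf^2 * (η1*R)⁻¹ := by
          have e8 : A1*(η1*R) * θf^2 ≤ (K1*κ) * θf^2 := by
            linarith only [mul_le_mul_of_nonneg_right hK1key (sq_nonneg θf)]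
          have e9 := mul_le_mul_of_nonneg_right e8 (inv_nonneg.2 hη1R.le)
          have e10 : A1*(η1*R) * θf^2 * (η1*R)⁻¹ = A1 * θf^2 := by
            field_simp
          linarith only [e9, e10.le, e10.ge]
        linarith only [e6.le, e6.ge, e7]
      linarith only [e3.le, e3.ge, e4, e5]
    -- Term B : the ψ-direction
    have hεa : βh * a ≤ ε₀ := by
      have h1 : βh * a ≤ βh * r₀ := mul_le_mul_of_nonneg_left hb2.le hβ.le
      have h2 : βh * r₀ ≤ βh * (ε₀/βh) := mul_le_mul_of_nonneg_left hr₀ε hβ.le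
      have h3 : βh * (ε₀/βh) = ε₀ := by field_simp
      linarith only [h1, h2, h3.le, h3.ge]
    have hqmin : min (βh*ψf*(1-ψf)) 1 = βh*ψf*(1-ψf) := by
      apply min_eq_left
      rw [hsub]
      linarith only [mul_nonneg (mul_nonneg hβ.le (by linarith only [hφ1] : (0:ℝ) ≤ 1 - φh))
          (by linarith only [hva'] : (0:ℝ) ≤ a + v),
        mul_nonneg (mul_nonneg hβ.le hφpos.le) (by linarith only [hva] : (0:ℝ) ≤ a - v),
        mul_nonneg hβ.le (sq_nonneg v), hεa, hεdef.le, hεdef.ge, hμφ.le, hμφ.ge]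
    have hnum : min (βh*ψf*(1-ψf)) 1 * (1-θf-ψf)*ν - b*ψf
        = ν*βh*ψf*((1-ψf)*(1-θf-ψf) - φh^2) := by
      rw [hqmin, ← hbνβ]; ring
    have harφ : a ≤ φh := le_trans hb2.le hr₀φ
    have hvE : v * ((1-ψf)*(1-θf-ψf) - φh^2) ≤ -(φh*v^2) + 2*φh*θf*a := by
      have hfa : (0:ℝ) ≤ φh*a - v^2 := by
        have := mul_nonneg ha0 (by linarith only [harφ] : (0:ℝ) ≤ φh - a)
        linarith only [this, ha2.le, ha2.ge]
      rw [hsub]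
      linarith only [mul_nonneg (sq_nonneg v) (by linarith only [hva, harφ] : (0:ℝ) ≤ φh - v),
        mul_nonneg hx1 hfa,
        mul_nonneg hx1 (mul_nonneg hφpos.le (by linarith only [hva'] : (0:ℝ) ≤ a + v))]
    have hC0low : m1 ≤ ν*βh*ψf/p := by
      rw [hm1def]
      apply div_le_div₀ (mul_nonneg (mul_pos hν hβ).le hx2) ?_ hppos hpub
      linarith only [mul_le_mul_of_nonneg_left hψlb (mul_pos hν hβ).le]
    have hC0high : ν*βh*ψf/p ≤ m2 := by
      rw [hm2def]
      apply div_le_div₀ (mul_pos hν hβ).le ?_ (mul_pos hδ hb) hplb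
      linarith only [mul_le_mul_of_nonneg_left hψle1 (mul_pos hν hβ).le]
    obtain ⟨c0, hc0⟩ : ∃ x : ℝ, x = ν*βh*ψf/p := ⟨_, rfl⟩
    have hc0low : m1 ≤ c0 := by rw [hc0]; exact hC0low
    have hc0high : c0 ≤ m2 := by rw [hc0]; exact hC0high
    have hc0pos : 0 < c0 := lt_of_lt_of_le hm1pos hc0low
    obtain ⟨e, hedef⟩ : ∃ x : ℝ, x = v * ((1-ψf)*(1-θf-ψf) - φh^2) := ⟨_, rfl⟩
    have hvE' : e ≤ -(φh*v^2) + 2*φh*θf*a := by rw [hedef]; exact hvE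
    have hvgψ : v * (1/p * (min (βh*ψf*(1-ψf)) 1 * (1-θf-ψf)*ν - b*ψf))
        ≤ -(m1*φh/2)*v^2 + Q*φh*θf^2 := by
      have e1 : v * (1/p * (min (βh*ψf*(1-ψf)) 1 * (1-θf-ψf)*ν - b*ψf)) = c0 * e := by
        rw [hnum, hc0, hedef]; field_simp
      rw [e1]
      have h2 : c0 * e ≤ m1*(-(φh*v^2)) + m2*(2*φh*θf*a) := by
        linarith only [mul_le_mul_of_nonneg_left hvE' hc0pos.le,
          mul_nonneg (sub_nonneg.2 hc0low) (mul_nonneg hφpos.le (sq_nonneg v)),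
          mul_nonneg (sub_nonneg.2 hc0high)
            (mul_nonneg (mul_nonneg (by linarith only [hφpos] : (0:ℝ) ≤ 2*φh) hx1) ha0)]
      have h3 : m2*(2*φh*θf*a) ≤ Q*φh*θf^2 + (m1*φh/2)*v^2 := by
        have hqa : m1^2*φh*a^2 = m1^2*φh*v^2 := by rw [ha2]
        have hh : m1 * (m2*(2*φh*θf*a)) ≤ m1 * (Q*φh*θf^2 + (m1*φh/2)*v^2) := by
          linarith only [mul_nonneg hφpos.le (sq_nonneg (2*m2*θf - m1*a)),
            mul_le_mul_of_nonneg_right hQ.ge (mul_nonneg hφpos.le (sq_nonneg θf)),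
            hqa.le, hqa.ge]
        exact le_of_mul_le_mul_left hh hm1pos
      linarith only [h2, h3]
    have hB : K2*(2*v) * (1/p * (min (βh*ψf*(1-ψf)) 1 * (1-θf-ψf)*ν - b*ψf))
        ≤ 2*K2*(-(m1*φh/2)*v^2 + Q*φh*θf^2) := by
      linarith only [mul_le_mul_of_nonneg_left hvgψ (by linarith only [hK2pos] : (0:ℝ) ≤ 2*K2)]
    -- Term C : the η-direction
    have hdiff : (b-d)/ϱ - (b-d)/ϱP = (b-d)*(ϱP-ϱ)/(ϱ*ϱP) := by
      field_simp
    have hgηeq : (b-d)/ϱ - ηf = (b-d)*(ϱP-ϱ)/(ϱ*ϱP) - w := by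
      rw [← hdiff, hwdef]
      linarith only [hηdef.le, hηdef.ge]
    have hϱdiffabs : |ϱP - ϱ| ≤ L*(θf + a) := by
      have hX0 : 0 ≤ lam*θf*(1-θf-ψf) := mul_nonneg (mul_nonneg hlam.le hx1) hφ0
      have hX1 : lam*θf*(1-θf-ψf) ≤ lam*θf := by
        linarith only [mul_nonneg (mul_nonneg hlam.le hx1)
          (by linarith only [hx1, hx2] : (0:ℝ) ≤ 1-(1-θf-ψf))]
      have hdiffeq : ϱP - ϱ = ν*(v + θf) - lam*θf*(1-θf-ψf) - r*θf := by
        rw [hϱPval, hϱex, hsub]; ring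
      rw [hdiffeq, abs_le, hLdef]
      constructor
      · linarith only [mul_nonneg hν.le (by linarith only [hva'] : (0:ℝ) ≤ a + v),
          mul_nonneg hν.le hx1, mul_nonneg hlam.le ha0,
          mul_nonneg hr.le ha0, hX1]
      · linarith only [mul_nonneg hν.le (by linarith only [hva] : (0:ℝ) ≤ a - v),
          mul_nonneg hlam.le hx1, mul_nonneg hlam.le ha0,
          mul_nonneg hr.le hx1, mul_nonneg hr.le ha0, hX0]
    have hwZ : w * ((b-d)*(ϱP-ϱ)/(ϱ*ϱP)) ≤ M * (|w| * (θf + a)) := by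
      have h1 : w * ((b-d)*(ϱP-ϱ)/(ϱ*ϱP)) ≤ |w * ((b-d)*(ϱP-ϱ)/(ϱ*ϱP))| := le_abs_self _
      have h2 : |w * ((b-d)*(ϱP-ϱ)/(ϱ*ϱP))| = |w| * ((b-d) * |ϱP - ϱ| /(ϱ*ϱP)) := by
        rw [abs_mul, abs_div, abs_mul, abs_of_nonneg (by linarith only [hbd] : (0:ℝ) ≤ b - d),
          abs_of_pos (mul_pos hϱpos hϱPpos)]
      have h3 : (b-d) * |ϱP - ϱ| /(ϱ*ϱP) ≤ (b-d)*(L*(θf+a))/(b*ϱP) := by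
        apply div_le_div₀ (mul_nonneg (by linarith only [hbd] : (0:ℝ) ≤ b-d)
          (mul_nonneg hLpos.le (by linarith only [hx1, ha0]))) ?_ (mul_pos hb hϱPpos) ?_
        · exact mul_le_mul_of_nonneg_left hϱdiffabs (by linarith only [hbd])
        · exact mul_le_mul_of_nonneg_right hϱlb hϱPpos.le
      have h4 : (b-d)*(L*(θf+a))/(b*ϱP) = M*(θf+a) := by
        rw [hMdef]; field_simp
      have h5 : |w| * ((b-d) * |ϱP - ϱ| /(ϱ*ϱP)) ≤ |w| * (M * (θf + a)) := by
        apply mul_le_mul_of_nonneg_left ?_ (abs_nonneg w)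
        rw [← h4]; exact h3
      calc w * ((b-d)*(ϱP-ϱ)/(ϱ*ϱP)) ≤ |w| * ((b-d) * |ϱP - ϱ| /(ϱ*ϱP)) := by rw [← h2]; exact h1
        _ ≤ |w| * (M * (θf + a)) := h5
        _ = M * (|w| * (θf + a)) := by ring
    have hC : 2*w * ((b-d)/ϱ - ηf) ≤ -w^2 + 2*M^2*θf^2 + 2*M^2*v^2 := by
      rw [hgηeq]
      have hMa : M^2*a^2 = M^2*v^2 := by rw [ha2]
      linarith only [hwZ, sq_nonneg (|w| - 2*M*θf), sq_nonneg (|w| - 2*M*a), sq_abs w,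
        hMa.le, hMa.ge]
    -- assembly
    linarith only [hA, hB, hC, hss,
      mul_le_mul_of_nonneg_right hK2key (sq_nonneg v),
      mul_le_mul_of_nonneg_right hA1def.le (sq_nonneg θf),
      mul_le_mul_of_nonneg_right hA1def.ge (sq_nonneg θf)]
  -- now the three main components
  refine ⟨?_, ?_, r₀, hr₀pos,
    (fun x : ℝ × ℝ × ℝ => K1*(x.1 - θh)^2 + K2*(x.2.1 - ψh)^2 + (x.2.2 - ηh)^2),
    by fun_prop, by simp, ?_⟩
  · -- P ∈ D
    refine ⟨hθ.ge, hψpos.le, ?_, hη⟩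
    show θh + ψh ≤ 1
    rw [hθ]; linarith
  · -- equilibrium
    have h1ψh : 1 - θh - ψh = φh := by rw [hθ, hψ]; ring
    have h2ψh : (1:ℝ) - ψh = φh := by rw [hψ]; ring
    have hmin : min (βh*ψh*(1-ψh)) 1 = βh*ψh*(1-ψh) := by
      apply min_eq_left
      rw [h2ψh, hψ]
      linarith only [hε, hεdef.le, hεdef.ge, hμφ.le, hμφ.ge]
    have hzero2 : min (βh*ψh*(1-ψh)) 1 * (1-θh-ψh) * ν - b*ψh = 0 := by
      rw [hmin, h1ψh, h2ψh, ← hbνβ]; ring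
    have hzero3 : (b-d)/ϱP - ηh = 0 := by rw [hηdef]; ring
    have hgoal : epiVF lam r b ν d (fun _ ψ => min (βh * ψ * (1 - ψ)) 1) (θh, ψh, ηh)
        = (θh / (ηh * varrho lam r b ν d θh ψh) * ((1 - θh - ψh) * lam - r - b),
           1 / (ηh * varrho lam r b ν d θh ψh) *
             (min (βh * ψh * (1 - ψh)) 1 * (1 - θh - ψh) * ν - b * ψh),
           (b - d) / varrho lam r b ν d θh ψh - ηh) := rfl
    rw [hgoal, ← hϱPdef]
    have c1 : θh / (ηh * ϱP) * ((1 - θh - ψh) * lam - r - b) = 0 := by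
      rw [hθ]; simp
    have c2 : 1 / (ηh * ϱP) * (min (βh * ψh * (1 - ψh)) 1 * (1 - θh - ψh) * ν - b * ψh) = 0 := by
      rw [hzero2, mul_zero]
    rw [c1, c2, hzero3]
    rfl
  · -- the Lyapunov decrease
    rintro x ⟨hxD, hball⟩ hne
    obtain ⟨hx1, hx2, hx3, hx4⟩ := hxD
    rw [Metric.mem_ball, Prod.dist_eq, Prod.dist_eq, Real.dist_eq, Real.dist_eq, Real.dist_eq,
      max_lt_iff, max_lt_iff] at hball
    obtain ⟨hb1, hb2, hb3⟩ := hball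
    have hk := key x.1 x.2.1 x.2.2 hx1 hx2 hx3 hx4 hb1 hb2 hb3 (fun hcon => hne hcon)
    constructor
    · exact hk.1
    · rw [(quadV_hasFDerivAt K1 K2 θh ψh ηh x).fderiv]
      have hk2 := hk.2
      simp only [ContinuousLinearMap.add_apply, ContinuousLinearMap.coe_smul',
        Pi.smul_apply, ContinuousLinearMap.coe_fst', ContinuousLinearMap.coe_comp',
        Function.comp_apply, ContinuousLinearMap.coe_snd', smul_eq_mul, epiVF]
      linarith only [hk2]
end

section
/- Fix reals λ, r, b, ν > 0, d ≥ 0 with b > d, δ > 0, and β̂ > 0, and let q(θ,ψ) := min{β̂ψ(1−ψ), 1} (free-riding response). Set ρ := λ/(r+b) and μ := b/ν, and assume ρ > 1, μρ < β̂ < ρ²μ, and μρ(1 − μρ/β̂) < 1. Let θ̂ := μρ/β̂ − 1/ρ, ψ̂ := 1 − μρ/β̂, and η̂ := (b−d)/ϱ(θ̂,ψ̂). If η̂ > δ, then the point P := (θ̂, ψ̂, η̂) is a Lyapunov-stable equilibrium of g. -/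
open ContinuousLinearMap in
lemma fderiv_quad (a c p q s : ℝ) (x y : ℝ × ℝ × ℝ) :
    fderiv ℝ (fun w : ℝ×ℝ×ℝ => a*((w.1-p)*(w.1-p)) + (w.2.1-q)*(w.2.1-q) + c*((w.2.2-s)*(w.2.2-s))) x y
      = 2*a*(x.1-p)*y.1 + 2*(x.2.1-q)*y.2.1 + 2*c*(x.2.2-s)*y.2.2 := by
  have h1 : HasFDerivAt (fun z : ℝ×ℝ×ℝ => z.1) (fst ℝ ℝ (ℝ×ℝ)) x := hasFDerivAt_fst
  have h2 : HasFDerivAt (fun z : ℝ×ℝ×ℝ => z.2.1) ((fst ℝ ℝ ℝ).comp (snd ℝ ℝ (ℝ×ℝ))) x :=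
    hasFDerivAt_fst.comp x hasFDerivAt_snd
  have h3 : HasFDerivAt (fun z : ℝ×ℝ×ℝ => z.2.2) ((snd ℝ ℝ ℝ).comp (snd ℝ ℝ (ℝ×ℝ))) x :=
    hasFDerivAt_snd.comp x hasFDerivAt_snd
  have g1 := (((h1.sub_const p).mul (h1.sub_const p)).const_mul a)
  have g2 := ((h2.sub_const q).mul (h2.sub_const q))
  have g3 := (((h3.sub_const s).mul (h3.sub_const s)).const_mul c)
  have H := (g1.add g2).add g3
  rw [show fderiv ℝ (fun w : ℝ×ℝ×ℝ => a*((w.1-p)*(w.1-p)) + (w.2.1-q)*(w.2.1-q) + c*((w.2.2-s)*(w.2.2-s))) x = _ from H.fderiv]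
  simp
  ring


set_option maxHeartbeats 1000000

/-- Free-riding response `q = min{β̂ψ(1−ψ), 1}`, endemic disease `ρ > 1`
with `μρ < β̂ < ρ²μ` and `μρ(1 − μρ/β̂) < 1`: the interior co-existence point
`(μρ/β̂ − 1/ρ, 1 − μρ/β̂, η̂)` is a Lyapunov-stable equilibrium of `g`. -/
theorem stmt_10 (lam r b ν d δ βh ρ μ θh ψh ηh : ℝ)
    (hlam : 0 < lam) (hr : 0 < r) (hb : 0 < b) (hν : 0 < ν)
    (hd : 0 ≤ d) (hbd : d < b) (hδ : 0 < δ) (hβ : 0 < βh)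
    (hρdef : ρ = lam / (r + b)) (hμdef : μ = b / ν)
    (hρ : 1 < ρ) (hβgt : μ * ρ < βh) (hβlt : βh < ρ ^ 2 * μ)
    (hq1 : μ * ρ * (1 - μ * ρ / βh) < 1)
    (hθ : θh = μ * ρ / βh - 1 / ρ) (hψ : ψh = 1 - μ * ρ / βh)
    (hηdef : ηh = (b - d) / varrho lam r b ν d θh ψh) (hη : δ < ηh) :
    IsLyapunovStableEquilibrium
      (epiVF lam r b ν d (fun _ ψ => min (βh * ψ * (1 - ψ)) 1)) (domD δ) (θh, ψh, ηh) := by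
  have hrb : (0:ℝ) < r + b := by linarith
  have hρ0 : (0:ℝ) < ρ := by linarith
  have hμ0 : 0 < μ := by rw [hμdef]; positivity
  have hFval : 1 - θh - ψh = 1/ρ := by rw [hθ, hψ]; ring
  have hF0 : 0 < 1 - θh - ψh := by rw [hFval]; positivity
  have hlamF : lam * (1 - θh - ψh) = r + b := by
    rw [hFval, hρdef]; field_simp
  have hψh0 : 0 < ψh := by
    rw [hψ]; have : μ * ρ / βh < 1 := (div_lt_one hβ).mpr hβgt; linarith
  have h1ψh : 0 < 1 - ψh := by
    rw [hψ]; have : 0 < μ * ρ / βh := by positivity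
    linarith
  have hθh0 : 0 < θh := by
    rw [hθ]
    have : 1/ρ < μ * ρ / βh := by
      rw [div_lt_div_iff₀ hρ0 hβ]; nlinarith
    linarith
  have hψh1 : ψh < 1 := by nlinarith
  have hθh1 : θh < 1 := by nlinarith
  have hqlt : βh * ψh * (1 - ψh) < 1 := by
    have heq : βh * ψh * (1 - ψh) = μ * ρ * (1 - μ * ρ / βh) := by
      rw [hψ]; field_simp; ring
    rw [heq]; exact hq1
  have hb_id : ν * βh * (1 - ψh) * (1 - θh - ψh) = b := by
    rw [hFval, hψ, hμdef]
    field_simp; ring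
  have hηh0 : 0 < ηh := hδ.trans hη
  -- named constants
  obtain ⟨ϱh, hϱh⟩ : ∃ x:ℝ, x = varrho lam r b ν d θh ψh := ⟨_, rfl⟩
  rw [← hϱh] at hηdef
  have hϱhb : b ≤ ϱh := by
    rw [hϱh]; unfold varrho
    nlinarith [mul_nonneg (mul_nonneg hlam.le hθh0.le) hF0.le, mul_nonneg hν.le hF0.le,
      mul_nonneg hr.le hθh0.le]
  have hϱh0 : 0 < ϱh := lt_of_lt_of_le hb hϱhb
  obtain ⟨A, hA⟩ : ∃ x:ℝ, x = ν * βh * ψh * (1 - ψh) := ⟨_, rfl⟩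
  have hA0 : 0 < A := by rw [hA]; positivity
  obtain ⟨C, hC⟩ : ∃ x:ℝ, x = ν * βh * ψh * (1 - θh - ψh) := ⟨_, rfl⟩
  have hC0 : 0 < C := by rw [hC]; positivity
  obtain ⟨α, hα⟩ : ∃ x:ℝ, x = A / (lam * θh) := ⟨_, rfl⟩
  have hα0 : 0 < α := by rw [hα]; exact div_pos hA0 (by positivity)
  have hαθ : α * (lam * θh) = A := by
    rw [hα]; field_simp
  obtain ⟨ϱM, hϱM⟩ : ∃ x:ℝ, x = b + d + lam + ν + r := ⟨_, rfl⟩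
  have hϱM0 : 0 < ϱM := by rw [hϱM]; positivity
  obtain ⟨EM, hEM⟩ : ∃ x:ℝ, x = 2 * ηh * ϱM := ⟨_, rfl⟩
  have hEM0 : 0 < EM := by rw [hEM]; exact mul_pos (by linarith) hϱM0
  obtain ⟨cG, hcG⟩ : ∃ x:ℝ, x = (b-d)^2 * (4*(lam+ν)^2 + 2*(lam+r)^2) / (b*ϱh)^2 := ⟨_, rfl⟩
  have hcG0 : 0 < cG := by
    rw [hcG]
    exact div_pos (mul_pos (pow_pos (by linarith) 2) (by positivity))
      (pow_pos (mul_pos hb hϱh0) 2)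
  obtain ⟨K, hK⟩ : ∃ x:ℝ, x = min (A/(4*cG*EM)) (C/(6*cG*EM)) := ⟨_, rfl⟩
  have h4cE : 0 < 4*cG*EM := by positivity
  have h6cE : 0 < 6*cG*EM := by positivity
  have hK0 : 0 < K := by
    rw [hK]; exact lt_min (div_pos hA0 h4cE) (div_pos hC0 h6cE)
  have hKA : K * (4*cG*EM) ≤ A := by
    have h1 : K ≤ A/(4*cG*EM) := by rw [hK]; exact min_le_left _ _
    rw [← le_div_iff₀ h4cE]
    exact h1
  have hKC : K * (6*cG*EM) ≤ C := by
    have h1 : K ≤ C/(6*cG*EM) := by rw [hK]; exact min_le_right _ _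
    rw [← le_div_iff₀ h6cE]
    exact h1
  obtain ⟨T, hT⟩ : ∃ x:ℝ, x = 4*(α*lam) + 2*(ν*βh) + ν*βh*(1-θh-ψh) := ⟨_, rfl⟩
  have hT0 : 0 < T := by
    rw [hT]
    have p1 : 0 < α*lam := mul_pos hα0 hlam
    have p2 : 0 < ν*βh := mul_pos hν hβ
    have p3 : 0 < ν*βh*(1-θh-ψh) := mul_pos p2 hF0
    linarith
  obtain ⟨r₀, hr₀⟩ : ∃ x:ℝ, x = min (min 1 (θh/8)) (min (min (C/(2*T)) ηh) ((1 - βh*ψh*(1-ψh))/βh)) := ⟨_, rfl⟩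
  have h2T : 0 < 2*T := by linarith
  have hr₀0 : 0 < r₀ := by
    rw [hr₀]
    refine lt_min (lt_min one_pos (by linarith)) (lt_min (lt_min (div_pos hC0 h2T) hηh0) ?_)
    have h1 : 0 < 1 - βh*ψh*(1-ψh) := by linarith
    positivity
  have hr1 : r₀ ≤ 1 := by
    rw [hr₀]; exact le_trans (min_le_left _ _) (min_le_left _ _)
  have hrθ8 : 8 * r₀ ≤ θh := by
    have h1 : r₀ ≤ θh/8 := by
      rw [hr₀]; exact le_trans (min_le_left _ _) (min_le_right (1:ℝ) (θh/8))
    linarith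
  have hrT : 2*T*r₀ ≤ C := by
    have h1 : r₀ ≤ C/(2*T) := by
      rw [hr₀]
      exact le_trans (min_le_right _ _) (le_trans (min_le_left _ _) (min_le_left _ _))
    rw [le_div_iff₀ h2T] at h1
    linarith
  have hrη : r₀ ≤ ηh := by
    rw [hr₀]
    exact le_trans (min_le_right _ _) (le_trans (min_le_left _ _) (min_le_right _ _))
  have hrq : βh * r₀ ≤ 1 - βh*ψh*(1-ψh) := by
    have h1 : r₀ ≤ (1 - βh*ψh*(1-ψh))/βh := by
      rw [hr₀]
      exact le_trans (min_le_right _ _) (min_le_right _ _)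
    rw [le_div_iff₀ hβ] at h1
    linarith
  have hPmem : ((θh,ψh,ηh) : ℝ×ℝ×ℝ) ∈ domD δ := by
    refine ⟨hθh0.le, hψh0.le, ?_, hη⟩
    show θh + ψh ≤ 1
    linarith
  refine ⟨hPmem, ?_, r₀, hr₀0,
    (fun p : ℝ×ℝ×ℝ => α*((p.1-θh)*(p.1-θh)) + (p.2.1-ψh)*(p.2.1-ψh) + K*((p.2.2-ηh)*(p.2.2-ηh))),
    by fun_prop, by simp, ?_⟩
  · -- g P = 0
    show epiVF _ _ _ _ _ _ (θh, ψh, ηh) = 0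
    have e1 : (1-θh-ψh)*lam - r - b = 0 := by linarith [hlamF]
    have e2 : βh*ψh*(1-ψh)*(1-θh-ψh)*ν - b*ψh = 0 := by linear_combination ψh * hb_id
    have h0 : (0 : ℝ×ℝ×ℝ) = ((0:ℝ), (0:ℝ), (0:ℝ)) := rfl
    rw [h0]
    simp only [epiVF, Prod.mk.injEq]
    refine ⟨?_, ?_, ?_⟩
    · rw [e1, mul_zero]
    · rw [min_eq_left hqlt.le]
      rw [show βh*ψh*(1-ψh)*(1-θh-ψh)*ν - b*ψh = 0 from e2, mul_zero]
    · rw [← hϱh, hηdef, sub_self]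
  · -- main Lyapunov estimate
    rintro ⟨θ1, ψ1, η1⟩ ⟨hmem, hball⟩ hne
    have hx1 : 0 ≤ θ1 := hmem.1
    have hx2 : 0 ≤ ψ1 := hmem.2.1
    have hx3 : θ1 + ψ1 ≤ 1 := hmem.2.2.1
    have hx4 : δ < η1 := hmem.2.2.2
    have hη10 : 0 < η1 := hδ.trans hx4
    have hθ1le : θ1 ≤ 1 := by linarith only [hx2, hx3]
    have hψ1le : ψ1 ≤ 1 := by linarith only [hx1, hx3]
    have hφ0 : 0 ≤ 1 - θ1 - ψ1 := by linarith only [hx3]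
    have hdist := Metric.mem_ball.mp hball
    rw [Prod.dist_eq, Prod.dist_eq, Real.dist_eq, Real.dist_eq, Real.dist_eq,
      max_lt_iff, max_lt_iff] at hdist
    obtain ⟨huabs, hvabs, hzabs⟩ := hdist
    obtain ⟨hu1, hu2⟩ := abs_lt.mp huabs
    obtain ⟨hv1, hv2⟩ := abs_lt.mp hvabs
    obtain ⟨hz1, hz2⟩ := abs_lt.mp hzabs
    constructor
    · -- positivity of V
      show 0 < α*((θ1-θh)*(θ1-θh)) + (ψ1-ψh)*(ψ1-ψh) + K*((η1-ηh)*(η1-ηh))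
      by_cases hveq : ψ1 = ψh
      · by_cases hzeq : η1 = ηh
        · have hueq : θ1 ≠ θh := by
            intro h; exact hne (by rw [h, hveq, hzeq])
          have h1 : 0 < (θ1-θh)*(θ1-θh) := mul_self_pos.mpr (sub_ne_zero.mpr hueq)
          linarith only [mul_pos hα0 h1, mul_self_nonneg (ψ1-ψh),
            mul_nonneg hK0.le (mul_self_nonneg (η1-ηh))]
        · have h1 : 0 < (η1-ηh)*(η1-ηh) := mul_self_pos.mpr (sub_ne_zero.mpr hzeq)
          linarith only [mul_pos hK0 h1, mul_self_nonneg (ψ1-ψh),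
            mul_nonneg hα0.le (mul_self_nonneg (θ1-θh))]
      · have h1 : 0 < (ψ1-ψh)*(ψ1-ψh) := mul_self_pos.mpr (sub_ne_zero.mpr hveq)
        linarith only [h1, mul_nonneg hK0.le (mul_self_nonneg (η1-ηh)),
          mul_nonneg hα0.le (mul_self_nonneg (θ1-θh))]
    · -- derivative negative
      rw [fderiv_quad]
      simp only [epiVF]
      set ϱx := varrho lam r b ν d θ1 ψ1 with hϱx
      have hϱxb : b ≤ ϱx := by
        rw [hϱx]; unfold varrho
        linarith only [mul_nonneg (mul_nonneg hlam.le hx1) hφ0, mul_nonneg hν.le hφ0,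
          mul_nonneg hr.le hx1, hd]
      have hϱx0 : 0 < ϱx := lt_of_lt_of_le hb hϱxb
      have hϱxM : ϱx ≤ ϱM := by
        rw [hϱx, hϱM]; unfold varrho
        have k1 : θ1*(1-θ1-ψ1) ≤ 1 := mul_le_one₀ hθ1le hφ0 (by linarith only [hx1, hx2])
        have k2 : lam*(θ1*(1-θ1-ψ1)) ≤ lam*1 := mul_le_mul_of_nonneg_left k1 hlam.le
        have k3 : ν*(1-θ1-ψ1) ≤ ν*1 := mul_le_mul_of_nonneg_left (by linarith only [hx1, hx2]) hν.le
        have k4 : r*θ1 ≤ r*1 := mul_le_mul_of_nonneg_left hθ1le hr.le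
        linarith only [k2, k3, k4]
      have hE0 : 0 < η1 * ϱx := mul_pos hη10 hϱx0
      have hEle : η1 * ϱx ≤ EM := by
        rw [hEM]
        have k1 : η1 ≤ 2*ηh := by linarith only [hz2, hrη]
        exact mul_le_mul k1 hϱxM hϱx0.le (by linarith only [hηh0])
      -- min selects the smooth branch
      have hminq : βh*ψ1*(1-ψ1) ≤ 1 := by
        have hvc1 : 0 ≤ (r₀ - (ψ1-ψh))*(1 + (1-ψ1-ψh)) :=
          mul_nonneg (by linarith only [hv2]) (by linarith only [hψ1le, hψh1])
        have hvc2 : 0 ≤ (r₀ + (ψ1-ψh))*(1 - (1-ψ1-ψh)) :=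
          mul_nonneg (by linarith only [hv1]) (by linarith only [hx2, hψh0])
        have hvc : (ψ1-ψh)*(1-ψ1-ψh) ≤ r₀ := by nlinarith only [hvc1, hvc2]
        nlinarith only [mul_le_mul_of_nonneg_left hvc hβ.le, hrq]
      have hmin : min (βh*ψ1*(1-ψ1)) 1 = βh*ψ1*(1-ψ1) := min_eq_left hminq
      have hcomp1 : (1-θ1-ψ1)*lam - r - b = -(lam*((θ1-θh)+(ψ1-ψh))) := by
        linear_combination hlamF
      have hcomp2 : βh*ψ1*(1-ψ1)*(1-θ1-ψ1)*ν - b*ψ1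
          = ν*βh*ψ1*(-((1-ψ1)*((θ1-θh)+(ψ1-ψh))) - (1-θh-ψh)*(ψ1-ψh)) := by
        linear_combination ψ1 * hb_id
      have hcomp3 : (b-d)/ϱx - η1 = (b-d)*(ϱh-ϱx)/(ϱx*ϱh) - (η1-ηh) := by
        rw [hηdef]
        field_simp
        ring
      rw [hmin, hcomp1, hcomp2, hcomp3]
      -- planar part
      have hS1eq : 2*α*(θ1-θh)*(θ1/(η1*ϱx)*(-(lam*((θ1-θh)+(ψ1-ψh)))))
            + 2*(ψ1-ψh)*(1/(η1*ϱx)*(ν*βh*ψ1*(-((1-ψ1)*((θ1-θh)+(ψ1-ψh))) - (1-θh-ψh)*(ψ1-ψh))))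
          = -(2*(A*((θ1-θh)+(ψ1-ψh))^2 + C*(ψ1-ψh)^2
              + (α*lam*(θ1-θh)^2*((θ1-θh)+(ψ1-ψh))
                + ν*βh*(1-ψ1-ψh)*(ψ1-ψh)^2*((θ1-θh)+(ψ1-ψh))
                + ν*βh*(1-θh-ψh)*(ψ1-ψh)^3))) / (η1*ϱx) := by
        rw [hα, hA, hC]
        field_simp
        ring
      have hu2b : (θ1-θh)^2 ≤ 2*((θ1-θh)+(ψ1-ψh))^2 + 2*(ψ1-ψh)^2 := by
        nlinarith only [sq_nonneg ((θ1-θh)+2*(ψ1-ψh))]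
      have hX2 : (A*((θ1-θh)+(ψ1-ψh))^2 + C*(ψ1-ψh)^2)/2
          ≤ A*((θ1-θh)+(ψ1-ψh))^2 + C*(ψ1-ψh)^2
              + (α*lam*(θ1-θh)^2*((θ1-θh)+(ψ1-ψh))
                + ν*βh*(1-ψ1-ψh)*(ψ1-ψh)^2*((θ1-θh)+(ψ1-ψh))
                + ν*βh*(1-θh-ψh)*(ψ1-ψh)^3) := by
        have ht1 : 0 ≤ α*lam*(θ1-θh)^2*((θ1-θh)+(ψ1-ψh)) + 2*r₀*(α*lam)*(θ1-θh)^2 := by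
          nlinarith only [mul_nonneg (mul_nonneg (mul_pos hα0 hlam).le (sq_nonneg (θ1-θh)))
            (by linarith only [hu1, hv1] : (0:ℝ) ≤ ((θ1-θh)+(ψ1-ψh)) + 2*r₀)]
        have ht2 : 0 ≤ ν*βh*(1-ψ1-ψh)*(ψ1-ψh)^2*((θ1-θh)+(ψ1-ψh)) + 2*r₀*(ν*βh)*(ψ1-ψh)^2 := by
          have hc1 : 0 ≤ (1-(1-ψ1-ψh))*(2*r₀-((θ1-θh)+(ψ1-ψh))) :=
            mul_nonneg (by linarith only [hx2, hψh0]) (by linarith only [hu2, hv2])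
          have hc2 : 0 ≤ (1+(1-ψ1-ψh))*(2*r₀+((θ1-θh)+(ψ1-ψh))) :=
            mul_nonneg (by linarith only [hψ1le, hψh1]) (by linarith only [hu1, hv1])
          have hcw : 0 ≤ (1-ψ1-ψh)*((θ1-θh)+(ψ1-ψh)) + 2*r₀ := by nlinarith only [hc1, hc2]
          nlinarith only [mul_nonneg (mul_nonneg (mul_pos hν hβ).le (sq_nonneg (ψ1-ψh))) hcw]
        have ht3 : 0 ≤ ν*βh*(1-θh-ψh)*(ψ1-ψh)^3 + r₀*(ν*βh*(1-θh-ψh))*(ψ1-ψh)^2 := by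
          nlinarith only [mul_nonneg (mul_nonneg (mul_pos (mul_pos hν hβ) hF0).le
            (sq_nonneg (ψ1-ψh))) (by linarith only [hv1] : (0:ℝ) ≤ (ψ1-ψh)+r₀)]
        have hq1' : 2*r₀*(α*lam)*(θ1-θh)^2
            ≤ 2*r₀*(α*lam)*(2*((θ1-θh)+(ψ1-ψh))^2 + 2*(ψ1-ψh)^2) :=
          mul_le_mul_of_nonneg_left hu2b (by positivity)
        have hw1 : 0 ≤ (θh - 8*r₀)*((α*lam)*((θ1-θh)+(ψ1-ψh))^2) :=
          mul_nonneg (by linarith only [hrθ8]) (mul_nonneg (mul_pos hα0 hlam).le (sq_nonneg _))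
        have heqW := congrArg (fun t => t * ((θ1-θh)+(ψ1-ψh))^2) hαθ
        have heqv := congrArg (fun t => t * (ψ1-ψh)^2) hαθ
        have hTv : 0 ≤ (C - 2*T*r₀)*(ψ1-ψh)^2 := mul_nonneg (by linarith only [hrT]) (sq_nonneg _)
        have hTexp := congrArg (fun t => t * (r₀*(ψ1-ψh)^2)) hT
        nlinarith only [ht1, ht2, ht3, hq1', hw1, heqW, heqv, hTv, hTexp]
      have hYnn : 0 ≤ A*((θ1-θh)+(ψ1-ψh))^2 + C*(ψ1-ψh)^2 :=
        add_nonneg (mul_nonneg hA0.le (sq_nonneg _)) (mul_nonneg hC0.le (sq_nonneg _))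
      have hS1 : 2*α*(θ1-θh)*(θ1/(η1*ϱx)*(-(lam*((θ1-θh)+(ψ1-ψh)))))
            + 2*(ψ1-ψh)*(1/(η1*ϱx)*(ν*βh*ψ1*(-((1-ψ1)*((θ1-θh)+(ψ1-ψh))) - (1-θh-ψh)*(ψ1-ψh))))
          ≤ -((A*((θ1-θh)+(ψ1-ψh))^2 + C*(ψ1-ψh)^2)/EM) := by
        rw [hS1eq, neg_div]
        have hY2X : A*((θ1-θh)+(ψ1-ψh))^2 + C*(ψ1-ψh)^2
            ≤ 2*(A*((θ1-θh)+(ψ1-ψh))^2 + C*(ψ1-ψh)^2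
              + (α*lam*(θ1-θh)^2*((θ1-θh)+(ψ1-ψh))
                + ν*βh*(1-ψ1-ψh)*(ψ1-ψh)^2*((θ1-θh)+(ψ1-ψh))
                + ν*βh*(1-θh-ψh)*(ψ1-ψh)^3)) := by linarith only [hX2]
        have l1 : (A*((θ1-θh)+(ψ1-ψh))^2 + C*(ψ1-ψh)^2)/(η1*ϱx)
            ≤ 2*(A*((θ1-θh)+(ψ1-ψh))^2 + C*(ψ1-ψh)^2
              + (α*lam*(θ1-θh)^2*((θ1-θh)+(ψ1-ψh))
                + ν*βh*(1-ψ1-ψh)*(ψ1-ψh)^2*((θ1-θh)+(ψ1-ψh))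
                + ν*βh*(1-θh-ψh)*(ψ1-ψh)^3))/(η1*ϱx) := by
          gcongr
        have l2 : (A*((θ1-θh)+(ψ1-ψh))^2 + C*(ψ1-ψh)^2)/EM
            ≤ (A*((θ1-θh)+(ψ1-ψh))^2 + C*(ψ1-ψh)^2)/(η1*ϱx) := by
          gcongr
        exact neg_le_neg (l2.trans l1)
      -- eta part
      have hdiffeq : ϱx - ϱh = -((lam*θ1+ν)*((θ1-θh)+(ψ1-ψh))) + (lam*(1-θh-ψh)+r)*(θ1-θh) := by
        rw [hϱx, hϱh]; unfold varrho; ring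
      have hexp : (ϱx-ϱh)^2 ≤ 2*((lam*θ1+ν)^2*((θ1-θh)+(ψ1-ψh))^2)
          + 2*((lam*(1-θh-ψh)+r)^2*(θ1-θh)^2) := by
        rw [hdiffeq]
        nlinarith only [sq_nonneg ((lam*θ1+ν)*((θ1-θh)+(ψ1-ψh)) + (lam*(1-θh-ψh)+r)*(θ1-θh))]
      have hs1b : (lam*θ1+ν)^2*((θ1-θh)+(ψ1-ψh))^2 ≤ (lam+ν)^2*((θ1-θh)+(ψ1-ψh))^2 := by
        refine mul_le_mul_of_nonneg_right ?_ (sq_nonneg _)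
        have k0 : 0 ≤ lam*θ1+ν := by positivity
        have k1 : lam*θ1 ≤ lam*1 := mul_le_mul_of_nonneg_left hθ1le hlam.le
        exact pow_le_pow_left₀ k0 (by linarith only [k1]) 2
      have hs2b : (lam*(1-θh-ψh)+r)^2*(θ1-θh)^2 ≤ (lam+r)^2*(θ1-θh)^2 := by
        refine mul_le_mul_of_nonneg_right ?_ (sq_nonneg _)
        have k0 : 0 ≤ lam*(1-θh-ψh)+r := add_nonneg (mul_nonneg hlam.le hF0.le) hr.le
        have k1 : lam*(1-θh-ψh) ≤ lam*1 :=
          mul_le_mul_of_nonneg_left (by linarith only [hθh0, hψh0]) hlam.le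
        exact pow_le_pow_left₀ k0 (by linarith only [k1]) 2
      have hWuv : ((θ1-θh)+(ψ1-ψh))^2 ≤ 2*(θ1-θh)^2+2*(ψ1-ψh)^2 := by
        nlinarith only [sq_nonneg ((θ1-θh)-(ψ1-ψh))]
      have hpoly : (ϱh-ϱx)^2 ≤ (4*(lam+ν)^2+2*(lam+r)^2)*((θ1-θh)^2+(ψ1-ψh)^2) := by
        nlinarith only [hexp, hs1b, hs2b,
          mul_le_mul_of_nonneg_left hWuv (by positivity : (0:ℝ) ≤ 2*(lam+ν)^2),
          mul_nonneg (by positivity : (0:ℝ) ≤ 2*(lam+r)^2) (sq_nonneg (ψ1-ψh))]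
      have hG2 : ((b-d)*(ϱh-ϱx)/(ϱx*ϱh))^2 ≤ cG*((θ1-θh)^2+(ψ1-ψh)^2) := by
        have e1 : ((b-d)*(ϱh-ϱx)/(ϱx*ϱh))^2 = (b-d)^2*(ϱh-ϱx)^2/(ϱx*ϱh)^2 := by ring
        have hden : (b*ϱh)^2 ≤ (ϱx*ϱh)^2 :=
          pow_le_pow_left₀ (by positivity) (mul_le_mul_of_nonneg_right hϱxb hϱh0.le) 2
        have s1 : (b-d)^2*(ϱh-ϱx)^2/(ϱx*ϱh)^2 ≤ (b-d)^2*(ϱh-ϱx)^2/(b*ϱh)^2 := by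
          gcongr
        have s2 : (b-d)^2*(ϱh-ϱx)^2/(b*ϱh)^2
            ≤ (b-d)^2*((4*(lam+ν)^2+2*(lam+r)^2)*((θ1-θh)^2+(ψ1-ψh)^2))/(b*ϱh)^2 := by
          gcongr
        rw [e1]
        refine le_trans (le_trans s1 s2) (le_of_eq ?_)
        rw [hcG]; ring
      have hzG : 2*K*(η1-ηh)*((b-d)*(ϱh-ϱx)/(ϱx*ϱh))
          ≤ K*((η1-ηh)^2 + ((b-d)*(ϱh-ϱx)/(ϱx*ϱh))^2) := by
        nlinarith only [mul_nonneg hK0.le (sq_nonneg ((η1-ηh) - (b-d)*(ϱh-ϱx)/(ϱx*ϱh)))]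
      have huv23 : (θ1-θh)^2+(ψ1-ψh)^2 ≤ 2*((θ1-θh)+(ψ1-ψh))^2 + 3*(ψ1-ψh)^2 := by
        nlinarith only [sq_nonneg ((θ1-θh)+2*(ψ1-ψh))]
      have hS2 : 2*K*(η1-ηh)*((b-d)*(ϱh-ϱx)/(ϱx*ϱh) - (η1-ηh))
          ≤ K*cG*(2*((θ1-θh)+(ψ1-ψh))^2 + 3*(ψ1-ψh)^2) - K*(η1-ηh)^2 := by
        have hKG2 := mul_le_mul_of_nonneg_left hG2 hK0.le
        have hKuv := mul_le_mul_of_nonneg_left huv23 (mul_nonneg hK0.le hcG0.le)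
        nlinarith only [hzG, hKG2, hKuv]
      -- final combination
      have hmain : -((A*((θ1-θh)+(ψ1-ψh))^2 + C*(ψ1-ψh)^2)/EM)
          + (K*cG*(2*((θ1-θh)+(ψ1-ψh))^2 + 3*(ψ1-ψh)^2) - K*(η1-ηh)^2) < 0 := by
        have heq : -((A*((θ1-θh)+(ψ1-ψh))^2 + C*(ψ1-ψh)^2)/EM)
            + (K*cG*(2*((θ1-θh)+(ψ1-ψh))^2 + 3*(ψ1-ψh)^2) - K*(η1-ηh)^2)
            = (-(A*((θ1-θh)+(ψ1-ψh))^2 + C*(ψ1-ψh)^2)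
              + EM*(K*cG*(2*((θ1-θh)+(ψ1-ψh))^2 + 3*(ψ1-ψh)^2) - K*(η1-ηh)^2))/EM := by
          field_simp
        rw [heq]
        apply div_neg_of_neg_of_pos _ hEM0
        by_cases hveq : ψ1 = ψh
        · by_cases hzeq : η1 = ηh
          · have hueq : θ1 ≠ θh := by
              intro h; exact hne (by rw [h, hveq, hzeq])
            rw [hveq, hzeq]
            have hWne : (θ1-θh)+(ψh-ψh) ≠ 0 := by
              simpa using sub_ne_zero.mpr hueq
            have hW2 : 0 < ((θ1-θh)+(ψh-ψh))^2 := by positivity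
            have hw0 : 0 ≤ (A - K*(4*cG*EM))*((θ1-θh)+(ψh-ψh))^2 :=
              mul_nonneg (by linarith only [hKA]) (sq_nonneg _)
            have hnn1 : 0 ≤ K*cG*EM*((θ1-θh)+(ψh-ψh))^2 :=
              mul_nonneg (mul_nonneg (mul_nonneg hK0.le hcG0.le) hEM0.le) (sq_nonneg _)
            nlinarith only [mul_pos hA0 hW2, hw0, hnn1]
          · rw [hveq]
            have hz2' : 0 < (η1-ηh)^2 := by
              have h' := sub_ne_zero.mpr hzeq; positivity
            have hw0 : 0 ≤ (A - K*(4*cG*EM))*((θ1-θh)+(ψh-ψh))^2 :=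
              mul_nonneg (by linarith only [hKA]) (sq_nonneg _)
            have hnn1 : 0 ≤ K*cG*EM*((θ1-θh)+(ψh-ψh))^2 :=
              mul_nonneg (mul_nonneg (mul_nonneg hK0.le hcG0.le) hEM0.le) (sq_nonneg _)
            nlinarith only [mul_pos (mul_pos hEM0 hK0) hz2', hw0, hnn1]
        · have hv2' : 0 < (ψ1-ψh)^2 := by
            have h' := sub_ne_zero.mpr hveq; positivity
          have hw0 : 0 ≤ (A - K*(4*cG*EM))*((θ1-θh)+(ψ1-ψh))^2 :=
            mul_nonneg (by linarith only [hKA]) (sq_nonneg _)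
          have hv0 : 0 ≤ (C - K*(6*cG*EM))*(ψ1-ψh)^2 :=
            mul_nonneg (by linarith only [hKC]) (sq_nonneg _)
          have hnn1 : 0 ≤ K*cG*EM*((θ1-θh)+(ψ1-ψh))^2 :=
            mul_nonneg (mul_nonneg (mul_nonneg hK0.le hcG0.le) hEM0.le) (sq_nonneg _)
          have hnn2 : 0 ≤ K*cG*EM*(ψ1-ψh)^2 :=
            mul_nonneg (mul_nonneg (mul_nonneg hK0.le hcG0.le) hEM0.le) (sq_nonneg _)
          nlinarith only [mul_pos hC0 hv2', hw0, hv0, hnn1, hnn2,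
            mul_nonneg (mul_pos hEM0 hK0).le (sq_nonneg (η1-ηh))]
      linarith only [hS1, hS2, hmain]
end
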